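/- arXiv:1005.3871 — 6 statements merged into one kernel-verified Lean document; each statement's English description precedes it below -/
import Mathlib

section
/- Let ℓ be a prime, k ≥ 1 an integer, and r an integer with r ≡ 0 (mod ℓ). Then (1/φ(ℓ^k))·(ℓ−2)/(ℓ−1) ≤ |C_r(ℓ^k)| / |GL₂(ℤ/ℓ^kℤ)| ≤ (1/φ(ℓ^k))·(1 + 1/((ℓ³−1)(ℓ²−1))). -/
open Matrix

open Finset Matrix

section fib

variable {α β γ δ : Type*} [Fintype α] [Fintype β] [Fintype γ] [Fintype δ]
  [DecidableEq β] [DecidableEq δ]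

lemma genfib (f : α → β) (c : ℕ) (hf : ∀ b, (univ.filter fun a => f a = b).card = c)
    (p : β → Prop) [DecidablePred p] :
    (univ.filter fun a => p (f a)).card = c * (univ.filter p).card := by
  rw [Finset.card_eq_sum_card_fiberwise
    (f := f) (t := univ.filter p) (fun x hx => by simpa using (mem_filter.mp hx).2)]
  have h2 : ∀ b ∈ univ.filter p,
      ((univ.filter fun a => p (f a)).filter fun a => f a = b).card = c := by
    intro b hb
    have hpb : p b := (mem_filter.mp hb).2
    rw [← hf b]
    congr 1
    ext a
    simp only [mem_filter, mem_univ, true_and, and_iff_right_iff_imp]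
    rintro rfl; exact hpb
  rw [Finset.sum_congr rfl h2, Finset.sum_const, smul_eq_mul, mul_comm]

lemma prodfib (f : α → β) (g : γ → δ) (c₁ c₂ : ℕ)
    (hf : ∀ b, (univ.filter fun a => f a = b).card = c₁)
    (hg : ∀ d, (univ.filter fun a => g a = d).card = c₂) (y : β × δ) :
    (univ.filter fun z : α × γ => Prod.map f g z = y).card = c₁ * c₂ := by
  have : (univ.filter fun z : α × γ => Prod.map f g z = y)
      = (univ.filter fun a => f a = y.1) ×ˢ (univ.filter fun a => g a = y.2) := by
    ext z
    simp only [mem_filter, mem_univ, true_and, mem_product, Prod.map, Prod.ext_iff]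
  rw [this, Finset.card_product, hf, hg]

lemma fub [DecidableEq α] (P : α × γ → Prop) [DecidablePred P] :
    (univ.filter P).card = ∑ a : α, (univ.filter fun b : γ => P (a, b)).card := by
  rw [Finset.card_eq_sum_card_fiberwise (f := Prod.fst) (t := univ) (fun x _ => mem_univ _)]
  refine Finset.sum_congr rfl fun a _ => ?_
  refine Finset.card_nbij' Prod.snd (fun b => (a, b)) ?_ ?_ ?_ ?_
  · rintro ⟨a', b⟩ hz
    simp only [Finset.mem_coe, mem_filter, mem_univ, true_and] at hz ⊢
    obtain ⟨h1, rfl⟩ := hz; exact h1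
  · intro b hb
    exact mem_filter.mpr ⟨mem_filter.mpr ⟨mem_univ _, (mem_filter.mp hb).2⟩, rfl⟩
  · rintro ⟨a', b⟩ hz
    simp only [Finset.mem_coe, mem_filter] at hz
    simp [hz.2]
  · intro b _; rfl

end fib

section zmodfib

lemma fiber_card {n m : ℕ} [NeZero n] [NeZero m] (h : m ∣ n) (y : ZMod m) :
    (univ.filter fun x : ZMod n => ZMod.castHom h (ZMod m) x = y).card = n / m := by
  have hm0 : 0 < m := Nat.pos_of_ne_zero (NeZero.ne m)
  have key : ∀ x : ZMod n, ZMod.castHom h (ZMod m) x = y ↔ x.val % m = y.val := by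
    intro x
    constructor
    · intro hx
      have : (ZMod.castHom h (ZMod m) x).val = y.val := by rw [hx]
      rwa [ZMod.castHom_apply, ← ZMod.natCast_val, ZMod.val_natCast] at this
    · intro hx
      have : ((x.val : ℕ) : ZMod m) = ((y.val : ℕ) : ZMod m) := by
        rw [ZMod.natCast_eq_natCast_iff']
        rw [hx, Nat.mod_eq_of_lt (ZMod.val_lt y)]
      rw [ZMod.castHom_apply, ← ZMod.natCast_val, this, ZMod.natCast_zmod_val]
  rw [← Finset.card_range (n / m)]
  refine Finset.card_nbij' (fun x : ZMod n => x.val / m)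
    (fun s : ℕ => ((y.val + m * s : ℕ) : ZMod n)) ?_ ?_ ?_ ?_
  · intro x hx
    simp only [Finset.mem_coe, Finset.mem_filter, Finset.mem_univ, true_and, key] at hx
    simp only [Finset.mem_coe, Finset.mem_range]
    exact Nat.div_lt_div_of_lt_of_dvd h (ZMod.val_lt x)
  · intro s hs
    simp only [Finset.mem_coe, Finset.mem_range] at hs
    simp only [Finset.mem_coe, Finset.mem_filter, Finset.mem_univ, true_and, key]
    have hlt : y.val + m * s < n := by
      have h1 : y.val + 1 ≤ m := ZMod.val_lt y
      have h2 : m * s + m ≤ m * (n / m) := by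
        rw [← Nat.mul_succ]
        exact Nat.mul_le_mul_left m hs
      have := Nat.mul_div_cancel' h
      omega
    rw [ZMod.val_natCast_of_lt hlt, Nat.add_mul_mod_self_left,
      Nat.mod_eq_of_lt (ZMod.val_lt y)]
  · intro x hx
    simp only [Finset.mem_coe, Finset.mem_filter, Finset.mem_univ, true_and, key] at hx
    show ((y.val + m * (x.val / m) : ℕ) : ZMod n) = x
    rw [← hx, Nat.mod_add_div (ZMod.val x) m, ZMod.natCast_zmod_val]
  · intro s hs
    simp only [Finset.mem_coe, Finset.mem_range] at hs
    have hlt : y.val + m * s < n := by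
      have h1 : y.val + 1 ≤ m := ZMod.val_lt y
      have h2 : m * s + m ≤ m * (n / m) := by
        rw [← Nat.mul_succ]
        exact Nat.mul_le_mul_left m hs
      have := Nat.mul_div_cancel' h
      omega
    show (((y.val + m * s : ℕ) : ZMod n)).val / m = s
    rw [ZMod.val_natCast_of_lt hlt, Nat.add_mul_div_left _ _ hm0,
      Nat.div_eq_of_lt (ZMod.val_lt y), zero_add]

end zmodfib

section cnt

lemma cast_eq_zero_iff_dvd {n m : ℕ} [NeZero n] [NeZero m] (h : m ∣ n) (x : ZMod n) :
    ZMod.castHom h (ZMod m) x = 0 ↔ m ∣ x.val := by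
  rw [ZMod.castHom_apply, ← ZMod.natCast_val, ZMod.natCast_eq_zero_iff]

lemma cnt_unit {R : Type*} [CommRing R] [Fintype R] [DecidableEq R] (b m : R) (u : Rˣ) :
    (univ.filter fun c => b * ↑u * c = m).card = (univ.filter fun c => b * c = m).card := by
  refine Finset.card_nbij' (fun c => ↑u * c) (fun c => ↑u⁻¹ * c) ?_ ?_ ?_ ?_
  · intro c hc
    simp only [Finset.mem_coe, mem_filter, mem_univ, true_and] at hc ⊢
    rw [← mul_assoc, hc]
  · intro c hc
    simp only [Finset.mem_coe, mem_filter, mem_univ, true_and] at hc ⊢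
    rw [mul_assoc, Units.mul_inv_cancel_left, hc]
  · intro c _; simp
  · intro c _; simp

lemma cnt_pow {ℓ : ℕ} (hℓ : ℓ.Prime) {t j : ℕ} (hj : j ≤ t) [NeZero (ℓ^t)] (m : ZMod (ℓ^t)) :
    (univ.filter fun c : ZMod (ℓ^t) => (ℓ : ZMod (ℓ^t))^j * c = m).card
      = if ℓ^j ∣ m.val then ℓ^j else 0 := by
  haveI : NeZero (ℓ^(t-j)) := ⟨pow_ne_zero _ hℓ.pos.ne'⟩
  have hℓj : (ℓ : ℕ)^j ≠ 0 := pow_ne_zero _ hℓ.pos.ne'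
  have key : ∀ c : ZMod (ℓ^t), (ℓ : ZMod (ℓ^t))^j * c = m
      ↔ ℓ^j * c.val ≡ m.val [MOD ℓ^t] := by
    intro c
    rw [← ZMod.natCast_eq_natCast_iff]
    have h1 : ((ℓ^j * c.val : ℕ) : ZMod (ℓ^t)) = (ℓ : ZMod (ℓ^t))^j * c := by
      push_cast
      rw [ZMod.natCast_zmod_val]
    constructor
    · intro hc
      rw [h1, hc, ZMod.natCast_zmod_val]
    · intro hc
      rw [← ZMod.natCast_zmod_val m, ← hc, ← h1]
  by_cases hdvd : ℓ^j ∣ m.val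
  · rw [if_pos hdvd]
    set q := m.val / ℓ^j with hq
    have hmq : ℓ^j * q = m.val := Nat.mul_div_cancel' hdvd
    have hsplit : ℓ^t = ℓ^j * ℓ^(t-j) := by
      rw [← pow_add]; congr 1; omega
    have hd2 : ℓ^(t-j) ∣ ℓ^t := pow_dvd_pow _ (by omega)
    have key2 : ∀ c : ZMod (ℓ^t), (ℓ : ZMod (ℓ^t))^j * c = m
        ↔ ZMod.castHom hd2 (ZMod (ℓ^(t-j))) c = ((q : ℕ) : ZMod (ℓ^(t-j))) := by
      intro c
      have e0 : (ℓ^j * c.val ≡ m.val [MOD ℓ^t]) = (ℓ^j * c.val ≡ ℓ^j * q [MOD ℓ^j * ℓ^(t-j)]) := by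
        rw [hmq, ← hsplit]
      rw [key, e0, Nat.ModEq.mul_left_cancel_iff' hℓj,
        ← ZMod.natCast_eq_natCast_iff, ZMod.natCast_val, ← ZMod.castHom_apply (h := hd2)]
    rw [Finset.filter_congr (fun c _ => by rw [key2 c]), fiber_card hd2,
      Nat.pow_div (by omega) hℓ.pos]
    congr 1; omega
  · rw [if_neg hdvd]
    rw [Finset.filter_eq_empty_iff.mpr, Finset.card_empty]
    intro c _
    rw [key]
    intro hc
    exact hdvd (Nat.modEq_zero_iff_dvd.mp
      (((Nat.ModEq.of_dvd (pow_dvd_pow ℓ hj) hc).symm).trans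
        (Nat.modEq_zero_iff_dvd.mpr ⟨c.val, rfl⟩)))

lemma unit_decomp {ℓ : ℕ} (hℓ : ℓ.Prime) {t : ℕ} [NeZero (ℓ^t)] (b : ZMod (ℓ^t)) (hb : b ≠ 0) :
    b.val.factorization ℓ < t ∧
    ∃ u : (ZMod (ℓ^t))ˣ, b = (ℓ : ZMod (ℓ^t))^(b.val.factorization ℓ) * ↑u := by
  have hval : b.val ≠ 0 := fun h => hb (by rw [← ZMod.natCast_zmod_val b, h, Nat.cast_zero])
  set j := b.val.factorization ℓ with hj
  have hdvd : ℓ^j ∣ b.val := Nat.ordProj_dvd _ _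
  have hjt : j < t := by
    have h1 : ℓ^j ≤ b.val := Nat.le_of_dvd (Nat.pos_of_ne_zero hval) hdvd
    have h2 : b.val < ℓ^t := ZMod.val_lt b
    exact (Nat.pow_lt_pow_iff_right hℓ.one_lt).mp (lt_of_le_of_lt h1 h2)
  refine ⟨hjt, ?_⟩
  set w := b.val / ℓ^j with hw
  have hmul : ℓ^j * w = b.val := Nat.mul_div_cancel' hdvd
  have hndvd : ¬ℓ ∣ w := Nat.not_dvd_ordCompl hℓ hval
  have hcop : w.Coprime (ℓ^t) :=
    Nat.Coprime.pow_right t ((hℓ.coprime_iff_not_dvd.mpr hndvd).symm)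
  have hu : IsUnit ((w : ℕ) : ZMod (ℓ^t)) := (ZMod.isUnit_iff_coprime w (ℓ^t)).mpr hcop
  refine ⟨hu.unit, ?_⟩
  rw [IsUnit.unit_spec, ← ZMod.natCast_zmod_val b, ← hmul]
  push_cast
  ring

lemma card_dvd_val {ℓ : ℕ} (hℓ : ℓ.Prime) {t i : ℕ} (hi : i ≤ t) [NeZero (ℓ^t)] :
    (univ.filter fun b : ZMod (ℓ^t) => ℓ^i ∣ b.val).card = ℓ^(t-i) := by
  haveI : NeZero (ℓ^i) := ⟨pow_ne_zero _ hℓ.pos.ne'⟩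
  have hd : ℓ^i ∣ ℓ^t := pow_dvd_pow _ hi
  rw [Finset.filter_congr (fun b _ => by rw [← cast_eq_zero_iff_dvd hd b]),
    fiber_card hd, Nat.pow_div hi hℓ.pos]

lemma card_valclass {ℓ : ℕ} (hℓ : ℓ.Prime) {t j : ℕ} [NeZero (ℓ^t)] (hjt : j < t) :
    (univ.filter fun b : ZMod (ℓ^t) => b ≠ 0 ∧ b.val.factorization ℓ = j).card
      = (ℓ-1) * ℓ^(t-1-j) := by
  have hiff : ∀ b : ZMod (ℓ^t), (b ≠ 0 ∧ b.val.factorization ℓ = j)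
      ↔ (ℓ^j ∣ b.val ∧ ¬ℓ^(j+1) ∣ b.val) := by
    intro b
    constructor
    · rintro ⟨hb, rfl⟩
      have hval : b.val ≠ 0 := fun h => hb (by rw [← ZMod.natCast_zmod_val b, h, Nat.cast_zero])
      refine ⟨Nat.ordProj_dvd _ _, fun hcon => ?_⟩
      have := (Nat.Prime.pow_dvd_iff_le_factorization hℓ hval).mp hcon
      omega
    · rintro ⟨h1, h2⟩
      have hval : b.val ≠ 0 := by
        rintro h
        exact h2 (h ▸ dvd_zero _)
      have hb : b ≠ 0 := by
        rintro rfl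
        exact hval ZMod.val_zero
      have l1 := (Nat.Prime.pow_dvd_iff_le_factorization hℓ hval).mp h1
      have l2 : ¬(j+1 ≤ b.val.factorization ℓ) :=
        fun hcon => h2 ((Nat.Prime.pow_dvd_iff_le_factorization hℓ hval).mpr hcon)
      exact ⟨hb, by omega⟩
  rw [Finset.filter_congr (fun b _ => by rw [hiff b])]
  have hsdiff : (univ.filter fun b : ZMod (ℓ^t) => ℓ^j ∣ b.val ∧ ¬ℓ^(j+1) ∣ b.val)
      = (univ.filter fun b : ZMod (ℓ^t) => ℓ^j ∣ b.val)
        \ (univ.filter fun b : ZMod (ℓ^t) => ℓ^(j+1) ∣ b.val) := by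
    ext b
    simp only [mem_filter, mem_univ, true_and, mem_sdiff]
  rw [hsdiff, Finset.card_sdiff_of_subset]
  · rw [card_dvd_val hℓ (by omega), card_dvd_val hℓ (by omega)]
    have h1 : t - j = (t-1-j)+1 := by omega
    have h2 : t - (j+1) = t-1-j := by omega
    rw [h1, h2, pow_succ, Nat.sub_one_mul, mul_comm]
  · intro b hb
    simp only [mem_filter, mem_univ, true_and] at hb ⊢
    exact dvd_trans (pow_dvd_pow _ (by omega)) hb

end cnt

lemma Fformula {ℓ : ℕ} (hℓ : ℓ.Prime) {t : ℕ} (ht : 1 ≤ t) [NeZero (ℓ^t)]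
    (m : ZMod (ℓ^t)) :
    (univ.filter fun w : ZMod (ℓ^t) × ZMod (ℓ^t) => w.1 * w.2 = m).card
      = (∑ i ∈ Finset.range t, if ℓ^i ∣ m.val then (ℓ-1)*ℓ^(t-1) else 0)
        + (if m = 0 then ℓ^t else 0) := by
  rw [fub]
  have hcnt : ∀ b : ZMod (ℓ^t), (univ.filter fun c => b * c = m).card
      = if b = 0 then (if m = 0 then ℓ^t else 0)
        else (if ℓ^(b.val.factorization ℓ) ∣ m.val then ℓ^(b.val.factorization ℓ) else 0) := by
    intro b
    by_cases hb : b = 0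
    · subst hb
      rw [if_pos rfl]
      by_cases hm : m = 0
      · subst hm
        rw [if_pos rfl]
        have : (univ.filter fun c : ZMod (ℓ^t) => (0 : ZMod (ℓ^t)) * c = 0) = univ := by
          ext c; simp
        rw [this, Finset.card_univ, ZMod.card]
      · rw [if_neg hm]
        rw [Finset.filter_eq_empty_iff.mpr, Finset.card_empty]
        intro c _
        rw [zero_mul]
        exact fun h => hm h.symm
    · rw [if_neg hb]
      obtain ⟨hjt, u, hdecomp⟩ := unit_decomp hℓ b hb
      calc (univ.filter fun c => b * c = m).card
          = (univ.filter fun c => (ℓ : ZMod (ℓ^t))^(b.val.factorization ℓ) * ↑u * c = m).card := by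
            rw [← hdecomp]
        _ = (univ.filter fun c => (ℓ : ZMod (ℓ^t))^(b.val.factorization ℓ) * c = m).card :=
            cnt_unit _ m u
        _ = _ := cnt_pow hℓ hjt.le m
  rw [Finset.sum_congr rfl (fun b _ => hcnt b)]
  rw [← Finset.add_sum_erase _ _ (mem_univ (0 : ZMod (ℓ^t))), if_pos rfl]
  rw [add_comm]
  congr 1
  rw [← Finset.sum_fiberwise_of_maps_to (g := fun b : ZMod (ℓ^t) => b.val.factorization ℓ)
    (t := Finset.range t) ?_]
  · refine Finset.sum_congr rfl fun j hj => ?_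
    have hjt : j < t := Finset.mem_range.mp hj
    have hconst : ∀ b ∈ (univ.erase (0 : ZMod (ℓ^t))).filter
        (fun b => b.val.factorization ℓ = j),
        (if b = (0 : ZMod (ℓ^t)) then (if m = 0 then ℓ^t else 0)
          else (if ℓ^(b.val.factorization ℓ) ∣ m.val then ℓ^(b.val.factorization ℓ) else 0))
        = (if ℓ^j ∣ m.val then ℓ^j else 0) := by
      intro b hb
      simp only [mem_filter, mem_erase, mem_univ, true_and] at hb
      rw [if_neg hb.1.1, hb.2]
    rw [Finset.sum_congr rfl hconst, Finset.sum_const, smul_eq_mul]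
    have hcard : ((univ.erase (0 : ZMod (ℓ^t))).filter
        (fun b => b.val.factorization ℓ = j)).card = (ℓ-1) * ℓ^(t-1-j) := by
      rw [← card_valclass hℓ hjt]
      congr 1
      ext b
      simp only [mem_filter, mem_erase, mem_univ, true_and, and_assoc]
    rw [hcard]
    by_cases hd : ℓ^j ∣ m.val
    · rw [if_pos hd, if_pos hd, mul_assoc, ← pow_add]
      congr 2
      omega
    · simp [hd]
  · intro b hb
    simp only [mem_erase, mem_univ, and_true] at hb
    exact Finset.mem_range.mpr (unit_decomp hℓ b hb).1

section bridge

variable {R : Type*} [CommRing R]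

def quadMx (q : (R×R)×(R×R)) : Matrix (Fin 2) (Fin 2) R :=
  !![q.1.1+1, q.2.1; q.2.2, q.1.2+1]

def quadEquiv : ((R×R)×(R×R)) ≃ Matrix (Fin 2) (Fin 2) R where
  toFun := quadMx
  invFun A := ((A 0 0 - 1, A 1 1 - 1), (A 0 1, A 1 0))
  left_inv q := by
    simp only [quadMx, Matrix.cons_val', Matrix.cons_val_zero, Matrix.cons_val_one,
      Matrix.head_cons, Matrix.head_fin_const, Matrix.of_apply, Matrix.empty_val',
      Matrix.cons_val_fin_one, add_sub_cancel_right]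
  right_inv A := by
    ext i j
    fin_cases i <;> fin_cases j <;>
      simp [quadMx, Matrix.cons_val', Matrix.cons_val_zero, Matrix.cons_val_one,
        Matrix.head_cons, sub_add_cancel]

lemma quadMx_det (q : (R×R)×(R×R)) :
    (quadMx q).det = (q.1.1+1) * (q.1.2+1) - q.2.1 * q.2.2 := by
  rw [quadMx, Matrix.det_fin_two_of]

lemma quadMx_trace (q : (R×R)×(R×R)) :
    (quadMx q).trace = (q.1.1+1) + (q.1.2+1) := by
  rw [quadMx, Matrix.trace_fin_two_of]

lemma card_GL_pred [Fintype R] [DecidableEq R]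
    (P : Matrix (Fin 2) (Fin 2) R → Prop) [DecidablePred P] :
    Nat.card {g : GL (Fin 2) R // P ↑g}
      = (univ.filter fun q : (R×R)×(R×R) => IsUnit (quadMx q).det ∧ P (quadMx q)).card := by
  have e1 : {g : GL (Fin 2) R // P ↑g}
      ≃ {A : Matrix (Fin 2) (Fin 2) R // IsUnit A.det ∧ P A} :=
    { toFun := fun g => ⟨↑g.1, (Matrix.isUnit_iff_isUnit_det _).mp g.1.isUnit, g.2⟩
      invFun := fun A => ⟨((Matrix.isUnit_iff_isUnit_det _).mpr A.2.1).unit, by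
        show P ↑(((Matrix.isUnit_iff_isUnit_det _).mpr A.2.1).unit)
        rw [IsUnit.unit_spec]
        exact A.2.2⟩
      left_inv := fun g => by
        apply Subtype.ext
        apply Units.ext
        simp only [IsUnit.unit_spec]
      right_inv := fun A => by
        apply Subtype.ext
        simp only [IsUnit.unit_spec] }
  have e2 : {A : Matrix (Fin 2) (Fin 2) R // IsUnit A.det ∧ P A}
      ≃ {q : (R×R)×(R×R) // IsUnit (quadMx q).det ∧ P (quadMx q)} :=
    ((quadEquiv (R := R)).subtypeEquiv (fun q => by rfl)).symm
  rw [Nat.card_congr (e1.trans e2), Nat.card_eq_fintype_card, Fintype.card_subtype]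

end bridge

section zmodspec

variable {ℓ : ℕ}

lemma dvd_val_self_iff {n : ℕ} [NeZero n] (x : ZMod n) : n ∣ x.val ↔ x = 0 := by
  constructor
  · intro h
    have := ZMod.val_lt x
    have h0 : x.val = 0 := Nat.eq_zero_of_dvd_of_lt h this
    exact (ZMod.val_eq_zero x).mp h0
  · rintro rfl
    simp [ZMod.val_zero]

lemma isUnit_iff_not_dvd (hℓ : ℓ.Prime) {t : ℕ} (ht : 1 ≤ t) [NeZero (ℓ^t)] (x : ZMod (ℓ^t)) :
    IsUnit x ↔ ¬ℓ ∣ x.val := by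
  have h := ZMod.isUnit_iff_coprime x.val (ℓ^t)
  rw [ZMod.natCast_zmod_val] at h
  rw [h, Nat.coprime_pow_right_iff (by omega), Nat.coprime_comm]
  exact hℓ.coprime_iff_not_dvd

/-- divisibility by ℓ of the val descends along castHom. -/
lemma dvd_val_cast {k j : ℕ} (hj1 : 1 ≤ j) (hjk : j ≤ k) [NeZero (ℓ^k)] [NeZero (ℓ^j)]
    [NeZero ℓ] (x : ZMod (ℓ^k)) :
    ℓ ∣ x.val ↔ ℓ ∣ (ZMod.castHom (pow_dvd_pow ℓ hjk) (ZMod (ℓ^j)) x).val := by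
  have hd1 : ℓ ∣ ℓ^j := dvd_pow_self ℓ (by omega)
  have hd2 : ℓ ∣ ℓ^k := dvd_pow_self ℓ (by omega)
  rw [← cast_eq_zero_iff_dvd hd2 x,
    ← cast_eq_zero_iff_dvd hd1 (ZMod.castHom (pow_dvd_pow ℓ hjk) (ZMod (ℓ^j)) x)]
  have := RingHom.congr_fun (ZMod.castHom_comp hd1 (pow_dvd_pow ℓ hjk)) x
  rw [RingHom.comp_apply] at this
  rw [this]

end zmodspec

section glcard

variable (ℓ : ℕ) [NeZero (ℓ^1)]

/-- number of invertible (shifted) 2×2 matrices over `ZMod (ℓ^1)`. -/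
def GL1cnt : ℕ :=
  (univ.filter fun q : ((ZMod (ℓ^1) × ZMod (ℓ^1)) × (ZMod (ℓ^1) × ZMod (ℓ^1))) =>
    ¬ℓ ∣ ((q.1.1+1)*(q.1.2+1) - q.2.1*q.2.2).val).card

variable {ℓ}

lemma GL1cnt_add (hℓ : ℓ.Prime) :
    GL1cnt ℓ + (ℓ^2*(ℓ-1) + ℓ*(2*ℓ-1)) = ℓ^4 := by
  haveI : NeZero ℓ := ⟨hℓ.pos.ne'⟩
  have hcard : Fintype.card ((ZMod (ℓ^1) × ZMod (ℓ^1)) × (ZMod (ℓ^1) × ZMod (ℓ^1))) = ℓ^4 := by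
    simp only [Fintype.card_prod, ZMod.card]
    ring
  have hsplit := Finset.card_filter_add_card_filter_not
    (s := (univ : Finset ((ZMod (ℓ^1) × ZMod (ℓ^1)) × (ZMod (ℓ^1) × ZMod (ℓ^1)))))
    (p := fun q => ¬ℓ ∣ ((q.1.1+1)*(q.1.2+1) - q.2.1*q.2.2).val)
  rw [Finset.card_univ, hcard] at hsplit
  have hz : (univ.filter fun q : ((ZMod (ℓ^1) × ZMod (ℓ^1)) × (ZMod (ℓ^1) × ZMod (ℓ^1))) =>
      ¬¬ℓ ∣ ((q.1.1+1)*(q.1.2+1) - q.2.1*q.2.2).val).card = ℓ^2*(ℓ-1) + ℓ*(2*ℓ-1) := by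
    have hdvd_iff : ∀ y : ZMod (ℓ^1), ℓ ∣ y.val ↔ y = 0 := by
      intro y
      have hlt : y.val < ℓ := lt_of_lt_of_le (ZMod.val_lt y) (le_of_eq (pow_one ℓ))
      constructor
      · intro h
        exact (ZMod.val_eq_zero y).mp (Nat.eq_zero_of_dvd_of_lt h hlt)
      · rintro rfl
        simp [ZMod.val_zero]
    have hstep1 : (univ.filter fun q : ((ZMod (ℓ^1) × ZMod (ℓ^1)) × (ZMod (ℓ^1) × ZMod (ℓ^1))) =>
        ¬¬ℓ ∣ ((q.1.1+1)*(q.1.2+1) - q.2.1*q.2.2).val).card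
        = ∑ x : ZMod (ℓ^1) × ZMod (ℓ^1),
            (univ.filter fun w : ZMod (ℓ^1) × ZMod (ℓ^1) =>
              w.1*w.2 = (x.1+1)*(x.2+1)).card := by
      rw [fub]
      refine Finset.sum_congr rfl fun x _ => ?_
      refine congrArg _ (Finset.filter_congr fun w _ => ?_)
      rw [not_not, hdvd_iff, sub_eq_zero]
      constructor
      · intro h; exact h.symm
      · intro h; exact h.symm
    rw [hstep1]
    have hff : ∀ x : ZMod (ℓ^1) × ZMod (ℓ^1),
        (univ.filter fun w : ZMod (ℓ^1) × ZMod (ℓ^1) => w.1*w.2 = (x.1+1)*(x.2+1)).card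
        = (ℓ-1) + (if (x.1+1)*(x.2+1) = 0 then ℓ^1 else 0) := by
      intro x
      rw [Fformula hℓ le_rfl ((x.1+1)*(x.2+1))]
      congr 1
      rw [Finset.sum_range_one, if_pos (show ℓ^0 ∣ ((x.1+1)*(x.2+1)).val by simp)]
      norm_num
    rw [Finset.sum_congr rfl (fun x _ => hff x), Finset.sum_add_distrib,
      Finset.sum_const, Finset.card_univ, Fintype.card_prod, ZMod.card, smul_eq_mul]
    have hlast : ∑ x : ZMod (ℓ^1) × ZMod (ℓ^1), (if (x.1+1)*(x.2+1) = 0 then ℓ^1 else 0)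
        = (2*ℓ - 1) * ℓ := by
      rw [← Finset.sum_filter]
      rw [Finset.sum_const, smul_eq_mul]
      have hb : (univ.filter fun x : ZMod (ℓ^1) × ZMod (ℓ^1) => (x.1+1)*(x.2+1) = 0).card
          = (univ.filter fun y : ZMod (ℓ^1) × ZMod (ℓ^1) => y.1*y.2 = 0).card := by
        refine Finset.card_nbij' (fun x => (x.1+1, x.2+1)) (fun y => (y.1-1, y.2-1)) ?_ ?_ ?_ ?_
        · intro x hx
          simp only [Finset.mem_coe, mem_filter, mem_univ, true_and] at hx ⊢
          exact hx
        · intro y hy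
          simp only [Finset.mem_coe, mem_filter, mem_univ, true_and] at hy ⊢
          rw [sub_add_cancel, sub_add_cancel]
          exact hy
        · intro x _; simp
        · intro y _; simp
      rw [hb]
      have : (univ.filter fun y : ZMod (ℓ^1) × ZMod (ℓ^1) => y.1*y.2 = 0).card
          = (ℓ-1) + ℓ^1 := by
        have h0 : ((0 : ZMod (ℓ^1))) = ((0 : ZMod (ℓ^1))) := rfl
        have := hff (-1, -1)
        simpa using this
      rw [this, pow_one]
      have h2 : 2*ℓ - 1 = (ℓ - 1) + ℓ := by omega
      rw [h2]
    rw [hlast, pow_one]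
    have h2 : ℓ*ℓ*(ℓ-1) = ℓ^2*(ℓ-1) := by ring
    rw [h2]
    rw [Nat.mul_comm (2*ℓ-1) ℓ]
  rw [hz] at hsplit
  exact hsplit

end glcard

/-- `C_r(n)` is the set of matrices `g ∈ GL₂(ℤ/nℤ)` with `det g + 1 - tr g ≡ r (mod n)`. -/
def Cset (n : ℕ) (r : ℤ) : Set (GL (Fin 2) (ZMod n)) :=
  {g | Matrix.det (g : Matrix (Fin 2) (Fin 2) (ZMod n)) + 1
        - Matrix.trace (g : Matrix (Fin 2) (Fin 2) (ZMod n)) = (r : ZMod n)}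

section defs

def Qcard (ℓ k : ℕ) [NeZero (ℓ^k)] (r : ℤ) : ℕ :=
  (univ.filter fun q : ((ZMod (ℓ^k) × ZMod (ℓ^k)) × (ZMod (ℓ^k) × ZMod (ℓ^k))) =>
    q.1.1*q.1.2 - q.2.1*q.2.2 = (r : ZMod (ℓ^k)) ∧ ¬ℓ ∣ (q.1.1+q.1.2+1).val).card

def Tcnt (ℓ k : ℕ) [NeZero (ℓ^k)] (r : ℤ) (j : ℕ) : ℕ :=
  (univ.filter fun x : ZMod (ℓ^k) × ZMod (ℓ^k) =>
    ℓ^j ∣ (x.1*x.2 - (r : ZMod (ℓ^k))).val ∧ ¬ℓ ∣ (x.1+x.2+1).val).card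

def Ucnt (ℓ j : ℕ) [NeZero (ℓ^j)] (r : ℤ) : ℕ :=
  (univ.filter fun y : ZMod (ℓ^j) × ZMod (ℓ^j) =>
    y.1*y.2 = (r : ZMod (ℓ^j)) ∧ ¬ℓ ∣ (y.1+y.2+1).val).card

def Scnt (ℓ : ℕ) [NeZero (ℓ^1)] : ℕ :=
  (univ.filter fun y : ZMod (ℓ^1) × ZMod (ℓ^1) => ¬ℓ ∣ (y.1+y.2+1).val).card

end defs

section main

variable {ℓ k : ℕ}

lemma GLcard_eq (hℓ : ℓ.Prime) (hk : 1 ≤ k) [NeZero (ℓ^k)] [NeZero (ℓ^1)] [NeZero ℓ] :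
    Nat.card (GL (Fin 2) (ZMod (ℓ^k)))
      = (ℓ^(k-1) * ℓ^(k-1) * (ℓ^(k-1) * ℓ^(k-1))) * GL1cnt ℓ := by
  have h1 : Nat.card (GL (Fin 2) (ZMod (ℓ^k)))
      = Nat.card {g : GL (Fin 2) (ZMod (ℓ^k)) //
          (fun _ : Matrix (Fin 2) (Fin 2) (ZMod (ℓ^k)) => True) ↑g} :=
    (Nat.card_congr (Equiv.subtypeUnivEquiv (fun _ => trivial))).symm
  rw [h1, card_GL_pred (fun _ => True)]
  set c1 := ZMod.castHom (pow_dvd_pow ℓ hk) (ZMod (ℓ^1)) with hc1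
  have hpt : ∀ q : ((ZMod (ℓ^k) × ZMod (ℓ^k)) × (ZMod (ℓ^k) × ZMod (ℓ^k))),
      (IsUnit (quadMx q).det ∧ True)
      ↔ (fun q' : ((ZMod (ℓ^1) × ZMod (ℓ^1)) × (ZMod (ℓ^1) × ZMod (ℓ^1))) =>
          ¬ℓ ∣ ((q'.1.1+1)*(q'.1.2+1) - q'.2.1*q'.2.2).val)
          (Prod.map (Prod.map c1 c1) (Prod.map c1 c1) q) := by
    rintro ⟨⟨a, e⟩, ⟨b, c⟩⟩
    simp only [and_true, quadMx_det, Prod.map_apply]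
    rw [isUnit_iff_not_dvd hℓ hk, dvd_val_cast (le_refl 1) hk]
    have : c1 ((a+1)*(e+1) - b*c) = (c1 a + 1)*(c1 e + 1) - c1 b * c1 c := by
      simp only [map_sub, _root_.map_mul, map_add, _root_.map_one]
    rw [this]
  rw [Finset.filter_congr (fun q _ => hpt q)]
  have hsingle : ∀ y : ZMod (ℓ^1),
      (univ.filter fun x : ZMod (ℓ^k) => c1 x = y).card = ℓ^(k-1) := by
    intro y
    rw [hc1, fiber_card (pow_dvd_pow ℓ hk), Nat.pow_div hk hℓ.pos]
  have hpair : ∀ y : ZMod (ℓ^1) × ZMod (ℓ^1),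
      (univ.filter fun x : ZMod (ℓ^k) × ZMod (ℓ^k) => Prod.map c1 c1 x = y).card
        = ℓ^(k-1) * ℓ^(k-1) :=
    prodfib c1 c1 _ _ hsingle hsingle
  unfold GL1cnt
  exact genfib _ _ (prodfib _ _ _ _ hpair hpair)
    (fun q' : ((ZMod (ℓ^1) × ZMod (ℓ^1)) × (ZMod (ℓ^1) × ZMod (ℓ^1))) =>
      ¬ℓ ∣ ((q'.1.1+1)*(q'.1.2+1) - q'.2.1*q'.2.2).val)

lemma Cset_eq_Q (hℓ : ℓ.Prime) (hk : 1 ≤ k) [NeZero (ℓ^k)] (r : ℤ)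
    (hr : (r : ZMod ℓ) = 0) [NeZero ℓ] :
    Nat.card (Cset (ℓ^k) r) = Qcard ℓ k r := by
  have h1 : Nat.card (Cset (ℓ^k) r)
      = Nat.card {g : GL (Fin 2) (ZMod (ℓ^k)) //
          (fun A : Matrix (Fin 2) (Fin 2) (ZMod (ℓ^k)) =>
            A.det + 1 - A.trace = (r : ZMod (ℓ^k))) ↑g} := rfl
  rw [h1, card_GL_pred (fun A : Matrix (Fin 2) (Fin 2) (ZMod (ℓ^k)) =>
    A.det + 1 - A.trace = (r : ZMod (ℓ^k)))]
  apply congrArg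
  apply Finset.filter_congr
  rintro ⟨⟨a, e⟩, ⟨b, c⟩⟩ -
  simp only [quadMx_det, quadMx_trace]
  have hd : ℓ ∣ ℓ^k := dvd_pow_self ℓ (by omega)
  have heq : ∀ u v : ZMod (ℓ^k), ((a+1)*(e+1) - b*c + 1 - ((a+1)+(e+1)) = (r : ZMod (ℓ^k)))
      ↔ (a*e - b*c = (r : ZMod (ℓ^k))) := by
    intro u v
    constructor
    · intro h
      rw [← h]; ring
    · intro h
      rw [← h]; ring
  have hkey : (a*e - b*c = (r : ZMod (ℓ^k))) →
      (ℓ ∣ ((a+1)*(e+1) - b*c).val ↔ ℓ ∣ (a+e+1).val) := by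
    intro h
    rw [← cast_eq_zero_iff_dvd hd, ← cast_eq_zero_iff_dvd hd]
    have h2 : (a+1)*(e+1) - b*c = (r : ZMod (ℓ^k)) + (a+e+1) := by
      rw [← h]; ring
    rw [h2, map_add, map_intCast, hr, zero_add]
  constructor
  · rintro ⟨hu, he⟩
    have he' : a*e - b*c = (r : ZMod (ℓ^k)) := (heq 0 0).mp he
    refine ⟨he', ?_⟩
    rw [isUnit_iff_not_dvd hℓ hk, hkey he'] at hu
    exact hu
  · rintro ⟨he, hs⟩
    refine ⟨?_, (heq 0 0).mpr he⟩
    rw [isUnit_iff_not_dvd hℓ hk, hkey he]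
    exact hs

lemma master (hℓ : ℓ.Prime) (hk : 1 ≤ k) [NeZero (ℓ^k)] (r : ℤ) :
    Qcard ℓ k r = (∑ j ∈ Finset.range k, (ℓ-1)*ℓ^(k-1) * Tcnt ℓ k r j)
      + ℓ^k * Tcnt ℓ k r k := by
  unfold Qcard
  rw [fub]
  have hinner : ∀ x : ZMod (ℓ^k) × ZMod (ℓ^k),
      (univ.filter fun w : ZMod (ℓ^k) × ZMod (ℓ^k) =>
        x.1*x.2 - w.1*w.2 = (r : ZMod (ℓ^k)) ∧ ¬ℓ ∣ (x.1+x.2+1).val).card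
      = (∑ j ∈ Finset.range k,
          if ℓ^j ∣ (x.1*x.2 - (r : ZMod (ℓ^k))).val ∧ ¬ℓ ∣ (x.1+x.2+1).val
          then (ℓ-1)*ℓ^(k-1) else 0)
        + (if ℓ^k ∣ (x.1*x.2 - (r : ZMod (ℓ^k))).val ∧ ¬ℓ ∣ (x.1+x.2+1).val
          then ℓ^k else 0) := by
    intro x
    by_cases hs : ℓ ∣ (x.1+x.2+1).val
    · have hempty : (univ.filter fun w : ZMod (ℓ^k) × ZMod (ℓ^k) =>
          x.1*x.2 - w.1*w.2 = (r : ZMod (ℓ^k)) ∧ ¬ℓ ∣ (x.1+x.2+1).val) = ∅ := by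
        refine Finset.filter_eq_empty_iff.mpr fun w _ => ?_
        rintro ⟨-, hcon⟩
        exact hcon hs
      rw [hempty, Finset.card_empty]
      have hz1 : ∀ j ∈ Finset.range k,
          (if ℓ^j ∣ (x.1*x.2 - (r : ZMod (ℓ^k))).val ∧ ¬ℓ ∣ (x.1+x.2+1).val
            then (ℓ-1)*ℓ^(k-1) else 0) = 0 := by
        intro j _
        rw [if_neg]
        rintro ⟨-, hcon⟩; exact hcon hs
      rw [Finset.sum_congr rfl hz1, Finset.sum_const_zero, if_neg, add_zero]
      rintro ⟨-, hcon⟩; exact hcon hs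
    · have hcongr : (univ.filter fun w : ZMod (ℓ^k) × ZMod (ℓ^k) =>
          x.1*x.2 - w.1*w.2 = (r : ZMod (ℓ^k)) ∧ ¬ℓ ∣ (x.1+x.2+1).val)
          = univ.filter fun w : ZMod (ℓ^k) × ZMod (ℓ^k) =>
              w.1*w.2 = x.1*x.2 - (r : ZMod (ℓ^k)) := by
        refine Finset.filter_congr fun w _ => ?_
        constructor
        · rintro ⟨h, -⟩
          linear_combination -h
        · intro h
          exact ⟨by linear_combination -h, hs⟩
      rw [hcongr, Fformula hℓ hk]
      congr 1
      · refine Finset.sum_congr rfl fun j _ => ?_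
        by_cases hdj : ℓ^j ∣ (x.1*x.2 - (r : ZMod (ℓ^k))).val
        · rw [if_pos hdj, if_pos ⟨hdj, hs⟩]
        · rw [if_neg hdj, if_neg (fun hcon => hdj hcon.1)]
      · by_cases hdk : ℓ^k ∣ (x.1*x.2 - (r : ZMod (ℓ^k))).val
        · rw [if_pos ((dvd_val_self_iff _).mp hdk), if_pos ⟨hdk, hs⟩]
        · rw [if_neg (fun hcon => hdk ((dvd_val_self_iff _).mpr hcon)),
            if_neg (fun hcon => hdk hcon.1)]
  rw [Finset.sum_congr rfl (fun x _ => hinner x), Finset.sum_add_distrib]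
  congr 1
  · rw [Finset.sum_comm]
    refine Finset.sum_congr rfl fun j _ => ?_
    rw [← Finset.sum_filter, Finset.sum_const, smul_eq_mul, mul_comm]
    rfl
  · rw [← Finset.sum_filter, Finset.sum_const, smul_eq_mul, mul_comm]
    rfl

end main

section bounds

variable {ℓ k : ℕ}

lemma Tfib (hℓ : ℓ.Prime) {j : ℕ} (hj1 : 1 ≤ j) (hjk : j ≤ k)
    [NeZero (ℓ^k)] [NeZero (ℓ^j)] [NeZero ℓ] (r : ℤ) :
    Tcnt ℓ k r j = ℓ^(k-j) * ℓ^(k-j) * Ucnt ℓ j r := by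
  unfold Tcnt Ucnt
  have hpt : ∀ x : ZMod (ℓ^k) × ZMod (ℓ^k),
      (ℓ^j ∣ (x.1*x.2 - (r : ZMod (ℓ^k))).val ∧ ¬ℓ ∣ (x.1+x.2+1).val)
      ↔ (fun y : ZMod (ℓ^j) × ZMod (ℓ^j) =>
          y.1*y.2 = (r : ZMod (ℓ^j)) ∧ ¬ℓ ∣ (y.1+y.2+1).val)
          (Prod.map (ZMod.castHom (pow_dvd_pow ℓ hjk) (ZMod (ℓ^j)))
            (ZMod.castHom (pow_dvd_pow ℓ hjk) (ZMod (ℓ^j))) x) := by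
    rintro ⟨x1, x2⟩
    simp only [Prod.map_apply]
    apply and_congr
    · rw [← cast_eq_zero_iff_dvd (pow_dvd_pow ℓ hjk) (x1*x2 - (r : ZMod (ℓ^k))),
        map_sub, _root_.map_mul, map_intCast, sub_eq_zero]
    · rw [dvd_val_cast hj1 hjk (x1+x2+1), map_add, map_add, _root_.map_one]
  rw [Finset.filter_congr (fun x _ => hpt x)]
  have hsingle : ∀ y : ZMod (ℓ^j),
      (univ.filter fun x : ZMod (ℓ^k) =>
        ZMod.castHom (pow_dvd_pow ℓ hjk) (ZMod (ℓ^j)) x = y).card = ℓ^(k-j) := by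
    intro y
    rw [fiber_card (pow_dvd_pow ℓ hjk), Nat.pow_div hjk hℓ.pos]
  exact genfib _ _ (prodfib _ _ _ _ hsingle hsingle)
    (fun y : ZMod (ℓ^j) × ZMod (ℓ^j) =>
      y.1*y.2 = (r : ZMod (ℓ^j)) ∧ ¬ℓ ∣ (y.1+y.2+1).val)

lemma T0_eq (hℓ : ℓ.Prime) (hk : 1 ≤ k) [NeZero (ℓ^k)] [NeZero (ℓ^1)] [NeZero ℓ] (r : ℤ) :
    Tcnt ℓ k r 0 = ℓ^(k-1) * ℓ^(k-1) * Scnt ℓ := by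
  unfold Tcnt Scnt
  have hpt : ∀ x : ZMod (ℓ^k) × ZMod (ℓ^k),
      (ℓ^0 ∣ (x.1*x.2 - (r : ZMod (ℓ^k))).val ∧ ¬ℓ ∣ (x.1+x.2+1).val)
      ↔ (fun y : ZMod (ℓ^1) × ZMod (ℓ^1) => ¬ℓ ∣ (y.1+y.2+1).val)
          (Prod.map (ZMod.castHom (pow_dvd_pow ℓ hk) (ZMod (ℓ^1)))
            (ZMod.castHom (pow_dvd_pow ℓ hk) (ZMod (ℓ^1))) x) := by
    rintro ⟨x1, x2⟩
    simp only [Prod.map_apply, pow_zero, one_dvd, true_and]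
    rw [dvd_val_cast (le_refl 1) hk (x1+x2+1), map_add, map_add, _root_.map_one]
  rw [Finset.filter_congr (fun x _ => hpt x)]
  have hsingle : ∀ y : ZMod (ℓ^1),
      (univ.filter fun x : ZMod (ℓ^k) =>
        ZMod.castHom (pow_dvd_pow ℓ hk) (ZMod (ℓ^1)) x = y).card = ℓ^(k-1) := by
    intro y
    rw [fiber_card (pow_dvd_pow ℓ hk), Nat.pow_div hk hℓ.pos]
  exact genfib _ _ (prodfib _ _ _ _ hsingle hsingle)
    (fun y : ZMod (ℓ^1) × ZMod (ℓ^1) => ¬ℓ ∣ (y.1+y.2+1).val)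

lemma dvd_val_one_iff [NeZero (ℓ^1)] (y : ZMod (ℓ^1)) : ℓ ∣ y.val ↔ y = 0 := by
  have hlt : y.val < ℓ := lt_of_lt_of_le (ZMod.val_lt y) (le_of_eq (pow_one ℓ))
  constructor
  · intro h
    exact (ZMod.val_eq_zero y).mp (Nat.eq_zero_of_dvd_of_lt h hlt)
  · rintro rfl
    simp [ZMod.val_zero]

lemma Scnt_eq [NeZero (ℓ^1)] : Scnt ℓ + ℓ = ℓ*ℓ := by
  unfold Scnt
  have hpart := Finset.card_filter_add_card_filter_not
    (s := (univ : Finset (ZMod (ℓ^1) × ZMod (ℓ^1))))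
    (p := fun y : ZMod (ℓ^1) × ZMod (ℓ^1) => ℓ ∣ (y.1+y.2+1).val)
  have hcnt : (univ.filter fun y : ZMod (ℓ^1) × ZMod (ℓ^1) => ℓ ∣ (y.1+y.2+1).val).card
      = ℓ := by
    have hpt : ∀ y : ZMod (ℓ^1) × ZMod (ℓ^1), (ℓ ∣ (y.1+y.2+1).val) ↔ y.1+y.2+1 = 0 :=
      fun y => dvd_val_one_iff _
    rw [Finset.filter_congr (fun y _ => hpt y)]
    have : (univ.filter fun y : ZMod (ℓ^1) × ZMod (ℓ^1) => y.1+y.2+1 = 0).card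
        = (univ : Finset (ZMod (ℓ^1))).card := by
      refine Finset.card_nbij' Prod.fst (fun a => (a, -a-1)) ?_ ?_ ?_ ?_
      · intro y _; exact mem_univ _
      · intro a _
        simp only [Finset.mem_coe, mem_filter, mem_univ, true_and]
        ring
      · rintro ⟨y1, y2⟩ hy
        simp only [Finset.mem_coe, mem_filter, mem_univ, true_and] at hy
        have : y2 = -y1 - 1 := by linear_combination hy
        simp [this]
      · intro a _; rfl
    rw [this, Finset.card_univ, ZMod.card, pow_one]
  rw [hcnt, Finset.card_univ, Fintype.card_prod, ZMod.card] at hpart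
  set s := (univ.filter fun y : ZMod (ℓ^1) × ZMod (ℓ^1) => ¬ℓ ∣ (y.1+y.2+1).val).card with hsdef
  rw [pow_one] at hpart
  omega

lemma card_shift (hℓ : ℓ.Prime) {j : ℕ} (hj1 : 1 ≤ j) [NeZero (ℓ^j)] [NeZero ℓ] :
    (univ.filter fun e : ZMod (ℓ^j) => ℓ ∣ (e+1).val).card = ℓ^(j-1) := by
  have hd : ℓ ∣ ℓ^j := dvd_pow_self ℓ (by omega)
  have hpt : ∀ e : ZMod (ℓ^j), (ℓ ∣ (e+1).val) ↔ ZMod.castHom hd (ZMod ℓ) e = -1 := by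
    intro e
    rw [← cast_eq_zero_iff_dvd hd (e+1), map_add, _root_.map_one]
    constructor
    · intro h
      exact eq_neg_of_add_eq_zero_left h
    · intro h
      rw [h]; ring
  rw [Finset.filter_congr (fun e _ => hpt e), fiber_card hd]
  have h1 : ℓ^j / ℓ = ℓ^j / ℓ^1 := by rw [pow_one]
  rw [h1, Nat.pow_div hj1 hℓ.pos]

lemma U_le (hℓ : ℓ.Prime) {j : ℕ} (hj1 : 1 ≤ j) [NeZero (ℓ^j)] [NeZero ℓ] (r : ℤ)
    (hr : (r : ZMod ℓ) = 0) :
    Ucnt ℓ j r + 2*ℓ^(j-1) ≤ j*((ℓ-1)*ℓ^(j-1)) + ℓ^j := by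
  haveI : Fact (1 < ℓ) := ⟨hℓ.one_lt⟩
  have hd : ℓ ∣ ℓ^j := dvd_pow_self ℓ (by omega)
  set φ := ZMod.castHom hd (ZMod ℓ) with hφ
  have hpart := Finset.card_filter_add_card_filter_not
    (s := univ.filter fun y : ZMod (ℓ^j) × ZMod (ℓ^j) => y.1*y.2 = (r : ZMod (ℓ^j)))
    (p := fun y : ZMod (ℓ^j) × ZMod (ℓ^j) => ℓ ∣ (y.1+y.2+1).val)
  rw [Finset.filter_filter, Finset.filter_filter] at hpart
  have hU : Ucnt ℓ j r = (univ.filter fun y : ZMod (ℓ^j) × ZMod (ℓ^j) =>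
      y.1*y.2 = (r : ZMod (ℓ^j)) ∧ ¬ℓ ∣ (y.1+y.2+1).val).card := rfl
  -- the B part
  have hrφ : φ ((r : ZMod (ℓ^j))) = 0 := by rw [map_intCast, hr]
  have hSunit : ∀ e : ZMod (ℓ^j), ℓ ∣ (e+1).val → IsUnit e := by
    intro e he
    rw [isUnit_iff_not_dvd hℓ hj1]
    intro hcon
    have h1 : φ (e+1) = 0 := (cast_eq_zero_iff_dvd hd _).mpr he
    have h2 : φ e = 0 := (cast_eq_zero_iff_dvd hd _).mpr hcon
    rw [map_add, _root_.map_one, h2, zero_add] at h1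
    exact one_ne_zero h1
  have hB : 2*ℓ^(j-1) ≤ (univ.filter fun y : ZMod (ℓ^j) × ZMod (ℓ^j) =>
      y.1*y.2 = (r : ZMod (ℓ^j)) ∧ ℓ ∣ (y.1+y.2+1).val).card := by
    set S := univ.filter fun e : ZMod (ℓ^j) => ℓ ∣ (e+1).val with hS
    set F1 := S.image (fun e => ((Ring.inverse e * (r : ZMod (ℓ^j)), e) :
      ZMod (ℓ^j) × ZMod (ℓ^j))) with hF1
    set F2 := S.image (fun e => ((e, Ring.inverse e * (r : ZMod (ℓ^j))) :
      ZMod (ℓ^j) × ZMod (ℓ^j))) with hF2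
    have hmulr : ∀ e : ZMod (ℓ^j), IsUnit e →
        Ring.inverse e * (r : ZMod (ℓ^j)) * e = (r : ZMod (ℓ^j)) := by
      intro e hu
      rw [mul_comm (Ring.inverse e) ((r : ZMod (ℓ^j))), mul_assoc,
        Ring.inverse_mul_cancel e hu, mul_one]
    have hφinv : ∀ e : ZMod (ℓ^j), φ (Ring.inverse e * (r : ZMod (ℓ^j))) = 0 := by
      intro e
      rw [_root_.map_mul, hrφ, mul_zero]
    have hsub1 : F1 ⊆ univ.filter fun y : ZMod (ℓ^j) × ZMod (ℓ^j) =>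
        y.1*y.2 = (r : ZMod (ℓ^j)) ∧ ℓ ∣ (y.1+y.2+1).val := by
      intro z hz
      rw [hF1, Finset.mem_image] at hz
      obtain ⟨e, heS, rfl⟩ := hz
      have heD : ℓ ∣ (e+1).val := by
        rw [hS] at heS
        exact (Finset.mem_filter.mp heS).2
      refine Finset.mem_filter.mpr ⟨mem_univ _, hmulr e (hSunit e heD), ?_⟩
      rw [← cast_eq_zero_iff_dvd hd]
      have h1 : φ (e+1) = 0 := (cast_eq_zero_iff_dvd hd _).mpr heD
      rw [map_add, _root_.map_one] at h1
      rw [map_add, map_add, _root_.map_one, hφinv, zero_add, h1]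
    have hsub2 : F2 ⊆ univ.filter fun y : ZMod (ℓ^j) × ZMod (ℓ^j) =>
        y.1*y.2 = (r : ZMod (ℓ^j)) ∧ ℓ ∣ (y.1+y.2+1).val := by
      intro z hz
      rw [hF2, Finset.mem_image] at hz
      obtain ⟨e, heS, rfl⟩ := hz
      have heD : ℓ ∣ (e+1).val := by
        rw [hS] at heS
        exact (Finset.mem_filter.mp heS).2
      refine Finset.mem_filter.mpr ⟨mem_univ _, ?_, ?_⟩
      · rw [mul_comm]
        exact hmulr e (hSunit e heD)
      · rw [← cast_eq_zero_iff_dvd hd]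
        have h1 : φ (e+1) = 0 := (cast_eq_zero_iff_dvd hd _).mpr heD
        rw [map_add, _root_.map_one] at h1
        rw [map_add, map_add, _root_.map_one, hφinv, add_zero, h1]
    have hdisj : Disjoint F1 F2 := by
      rw [Finset.disjoint_left]
      intro z hz1 hz2
      rw [hF1, Finset.mem_image] at hz1
      rw [hF2, Finset.mem_image] at hz2
      obtain ⟨e, heS, rfl⟩ := hz1
      obtain ⟨e', heS', heq⟩ := hz2
      have h1 : φ (Ring.inverse e * (r : ZMod (ℓ^j))) = 0 := hφinv e
      have h2 : φ e' = -1 := by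
        have heD' : ℓ ∣ (e'+1).val := (Finset.mem_filter.mp heS').2
        have := (cast_eq_zero_iff_dvd hd _).mpr heD'
        rw [map_add, _root_.map_one] at this
        exact eq_neg_of_add_eq_zero_left this
      have h3 : e' = Ring.inverse e * (r : ZMod (ℓ^j)) := by
        have := congrArg Prod.fst heq
        simpa using this
      rw [← h3, h2] at h1
      exact neg_ne_zero.mpr one_ne_zero h1
    have hc1 : F1.card = ℓ^(j-1) := by
      rw [hF1, Finset.card_image_of_injective _
        (fun a b h => (Prod.mk.injEq _ _ _ _).mp h |>.2), hS, card_shift hℓ hj1]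
    have hc2 : F2.card = ℓ^(j-1) := by
      rw [hF2, Finset.card_image_of_injective _
        (fun a b h => (Prod.mk.injEq _ _ _ _).mp h |>.1), hS, card_shift hℓ hj1]
    calc 2*ℓ^(j-1) = F1.card + F2.card := by rw [hc1, hc2]; ring
      _ = (F1 ∪ F2).card := (Finset.card_union_of_disjoint hdisj).symm
      _ ≤ _ := Finset.card_le_card (Finset.union_subset hsub1 hsub2)
  have hAle : (univ.filter fun y : ZMod (ℓ^j) × ZMod (ℓ^j) =>
      y.1*y.2 = (r : ZMod (ℓ^j))).card ≤ j*((ℓ-1)*ℓ^(j-1)) + ℓ^j := by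
    rw [Fformula hℓ hj1 ((r : ZMod (ℓ^j)))]
    have h1 : ∑ i ∈ Finset.range j,
        (if ℓ^i ∣ ((r : ZMod (ℓ^j))).val then (ℓ-1)*ℓ^(j-1) else 0)
        ≤ ∑ _i ∈ Finset.range j, (ℓ-1)*ℓ^(j-1) := by
      refine Finset.sum_le_sum fun i _ => ?_
      split_ifs
      · exact le_refl _
      · exact Nat.zero_le _
    have h2 : (if (r : ZMod (ℓ^j)) = 0 then ℓ^j else 0) ≤ ℓ^j := by
      split_ifs
      · exact le_refl _
      · exact Nat.zero_le _
    calc _ ≤ (∑ _i ∈ Finset.range j, (ℓ-1)*ℓ^(j-1)) + ℓ^j := Nat.add_le_add h1 h2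
      _ = j*((ℓ-1)*ℓ^(j-1)) + ℓ^j := by rw [Finset.sum_const, Finset.card_range, smul_eq_mul]
  omega

lemma U1_ge (hℓ : ℓ.Prime) [NeZero (ℓ^1)] [NeZero ℓ] (r : ℤ) (hr : (r : ZMod ℓ) = 0) :
    2*ℓ ≤ Ucnt ℓ 1 r + 3 := by
  haveI : Fact (1 < ℓ) := ⟨hℓ.one_lt⟩
  haveI : Fact (1 < ℓ^1) := ⟨by rw [pow_one]; exact hℓ.one_lt⟩
  have h0 : (r : ZMod (ℓ^1)) = 0 := by
    rw [ZMod.intCast_zmod_eq_zero_iff_dvd]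
    have h1 : (ℓ : ℤ) ∣ r := (ZMod.intCast_zmod_eq_zero_iff_dvd r ℓ).mp hr
    rw [pow_one]
    exact_mod_cast h1
  have hpart := Finset.card_filter_add_card_filter_not
    (s := (univ : Finset (ZMod (ℓ^1))))
    (p := fun e : ZMod (ℓ^1) => ℓ ∣ (e+1).val)
  rw [card_shift hℓ (le_refl 1), Finset.card_univ, ZMod.card] at hpart
  set S := univ.filter (fun e : ZMod (ℓ^1) => ¬ℓ ∣ (e+1).val) with hS
  have hScard : 1 + S.card = ℓ := by
    revert hpart
    generalize S.card = n
    intro hpart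
    rw [show ℓ^(1-1) = 1 by norm_num, pow_one] at hpart
    omega
  have h0S : (0 : ZMod (ℓ^1)) ∈ S := by
    rw [hS, Finset.mem_filter]
    refine ⟨mem_univ _, ?_⟩
    rw [zero_add, ZMod.val_one]
    exact Nat.Prime.not_dvd_one hℓ
  set G1 := S.image (fun a => ((a, 0) : ZMod (ℓ^1) × ZMod (ℓ^1))) with hG1
  set G2 := (S.erase 0).image (fun e => ((0, e) : ZMod (ℓ^1) × ZMod (ℓ^1))) with hG2
  have hG1card : G1.card = S.card := Finset.card_image_of_injective _
    (fun a b h => (Prod.mk.injEq _ _ _ _).mp h |>.1)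
  have hG2card : G2.card = S.card - 1 := by
    rw [hG2, Finset.card_image_of_injective _
      (fun a b h => (Prod.mk.injEq _ _ _ _).mp h |>.2), Finset.card_erase_of_mem h0S]
  have hUset : Ucnt ℓ 1 r = (univ.filter fun y : ZMod (ℓ^1) × ZMod (ℓ^1) =>
      y.1*y.2 = (r : ZMod (ℓ^1)) ∧ ¬ℓ ∣ (y.1+y.2+1).val).card := rfl
  have hsub1 : G1 ⊆ univ.filter fun y : ZMod (ℓ^1) × ZMod (ℓ^1) =>
      y.1*y.2 = (r : ZMod (ℓ^1)) ∧ ¬ℓ ∣ (y.1+y.2+1).val := by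
    intro z hz
    rw [hG1, Finset.mem_image] at hz
    obtain ⟨a, haS, rfl⟩ := hz
    have ha : ¬ℓ ∣ (a+1).val := (Finset.mem_filter.mp haS).2
    refine Finset.mem_filter.mpr ⟨mem_univ _, ?_, ?_⟩
    · rw [mul_zero, h0]
    · rwa [add_zero]
  have hsub2 : G2 ⊆ univ.filter fun y : ZMod (ℓ^1) × ZMod (ℓ^1) =>
      y.1*y.2 = (r : ZMod (ℓ^1)) ∧ ¬ℓ ∣ (y.1+y.2+1).val := by
    intro z hz
    rw [hG2, Finset.mem_image] at hz
    obtain ⟨e, heS, rfl⟩ := hz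
    have he : ¬ℓ ∣ (e+1).val := (Finset.mem_filter.mp (Finset.mem_of_mem_erase heS)).2
    refine Finset.mem_filter.mpr ⟨mem_univ _, ?_, ?_⟩
    · rw [zero_mul, h0]
    · rwa [zero_add]
  have hdisj : Disjoint G1 G2 := by
    rw [Finset.disjoint_left]
    intro z hz1 hz2
    rw [hG1, Finset.mem_image] at hz1
    rw [hG2, Finset.mem_image] at hz2
    obtain ⟨a, _, rfl⟩ := hz1
    obtain ⟨e, heS, heq⟩ := hz2
    have he0 : e ≠ 0 := Finset.ne_of_mem_erase heS
    have : e = 0 := congrArg Prod.snd heq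
    exact he0 this
  have hfinal : S.card + (S.card - 1) ≤ Ucnt ℓ 1 r := by
    rw [hUset]
    calc S.card + (S.card - 1) = G1.card + G2.card := by rw [hG1card, hG2card]
      _ = (G1 ∪ G2).card := (Finset.card_union_of_disjoint hdisj).symm
      _ ≤ _ := Finset.card_le_card (Finset.union_subset hsub1 hsub2)
  have hl2 : 2 ≤ ℓ := hℓ.two_le
  omega

end bounds

lemma sum_geom (L : ℝ) (hL : 2 ≤ L) (m : ℕ) :
    ∑ i ∈ Finset.range m, (((i:ℝ)+1)*(L-1) + L - 2) / L^(i+1) = 2 - ((m:ℝ)+2)/L^m := by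
  have hL0 : L ≠ 0 := by linarith
  induction m with
  | zero => norm_num
  | succ n ih =>
    rw [Finset.sum_range_succ, ih]
    have hpow : L^n ≠ 0 := pow_ne_zero _ hL0
    have hpow1 : L^(n+1) ≠ 0 := pow_ne_zero _ hL0
    push_cast
    field_simp
    ring

set_option maxHeartbeats 1000000

/-- For a prime `ℓ`, `k ≥ 1` and an integer `r ≡ 0 (mod ℓ)`:
`(1/φ(ℓ^k))·(ℓ-2)/(ℓ-1) ≤ |C_r(ℓ^k)|/|GL₂(ℤ/ℓ^kℤ)| ≤ (1/φ(ℓ^k))·(1 + 1/((ℓ³-1)(ℓ²-1)))`. -/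
theorem stmt8 (ℓ k : ℕ) (hℓ : ℓ.Prime) (hk : 1 ≤ k) (r : ℤ) (hr : (r : ZMod ℓ) = 0) :
    (1 / (Nat.totient (ℓ ^ k) : ℝ)) * (((ℓ : ℝ) - 2) / ((ℓ : ℝ) - 1))
      ≤ (Nat.card (Cset (ℓ ^ k) r) : ℝ) / (Nat.card (GL (Fin 2) (ZMod (ℓ ^ k))) : ℝ) ∧
    (Nat.card (Cset (ℓ ^ k) r) : ℝ) / (Nat.card (GL (Fin 2) (ZMod (ℓ ^ k))) : ℝ)
      ≤ (1 / (Nat.totient (ℓ ^ k) : ℝ))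
          * (1 + 1 / ((((ℓ : ℝ) ^ 3 - 1) * ((ℓ : ℝ) ^ 2 - 1)))) := by
  haveI : NeZero ℓ := ⟨hℓ.pos.ne'⟩
  haveI : NeZero (ℓ^k) := ⟨pow_ne_zero _ hℓ.pos.ne'⟩
  haveI : NeZero (ℓ^1) := ⟨pow_ne_zero _ hℓ.pos.ne'⟩
  have h1l : 1 ≤ ℓ := hℓ.one_le
  have h2l : 2 ≤ ℓ := hℓ.two_le
  have hCQ := Cset_eq_Q hℓ hk r hr
  have hmaster := master hℓ hk r
  have hGL := GLcard_eq (k := k) hℓ hk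
  have hGL1 := GL1cnt_add (ℓ := ℓ) hℓ
  have hT0 := T0_eq hℓ hk r
  have hS := Scnt_eq (ℓ := ℓ)
  set L : ℝ := (ℓ : ℝ) with hLdef
  set X : ℝ := L^(k-1) with hXdef
  clear_value L X
  have hL2 : (2:ℝ) ≤ L := by rw [hLdef]; exact_mod_cast h2l
  have hL0 : L ≠ 0 := by linarith
  have hLpos : (0:ℝ) < L := by linarith
  have hXpos : (0:ℝ) < X := by rw [hXdef]; exact pow_pos hLpos _
  have hX0 : X ≠ 0 := hXpos.ne'
  have hA : (0:ℝ) < L - 1 := by linarith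
  have hB : (0:ℝ) < L^2 - 1 := by
    have h4 : (2:ℝ)^2 ≤ L^2 := pow_le_pow_left₀ (by norm_num) hL2 2
    nlinarith [h4]
  have hC : (0:ℝ) < L^3 - 1 := by
    have h8 : (2:ℝ)^3 ≤ L^3 := pow_le_pow_left₀ (by norm_num) hL2 3
    nlinarith [h8]
  have hK1 : (1:ℝ) ≤ (k:ℝ) := by exact_mod_cast hk
  have hLk : L^k = L * X := by
    rw [hXdef, ← pow_succ']
    congr 1
    omega
  -- GL cardinality
  have hg1 : ((GL1cnt ℓ : ℕ) : ℝ) = L^4 - (L^2*(L-1) + L*(2*L-1)) := by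
    have hcst := congrArg (Nat.cast (R := ℝ)) hGL1
    push_cast [Nat.cast_sub h1l, Nat.cast_sub (by omega : 1 ≤ 2*ℓ)] at hcst
    simp only [← hLdef] at hcst
    linarith
  have hGLreal : (Nat.card (GL (Fin 2) (ZMod (ℓ^k))) : ℝ) = X^4 * (L*(L-1)*(L^2-1)) := by
    have hcst := congrArg (Nat.cast (R := ℝ)) hGL
    push_cast at hcst
    simp only [← hLdef, ← hXdef] at hcst
    rw [hcst, hg1]
    ring
  have hGpos' : (0:ℝ) < X^4 * (L*(L-1)*(L^2-1)) := by
    exact mul_pos (pow_pos hXpos 4) (mul_pos (mul_pos hLpos hA) hB)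
  -- totient
  have hphi : ((Nat.totient (ℓ^k) : ℕ) : ℝ) = X*(L-1) := by
    rw [Nat.totient_prime_pow hℓ (by omega : 0 < k)]
    push_cast [Nat.cast_sub h1l]
    simp only [← hLdef, ← hXdef]
  -- T 0
  have hT0real : ((Tcnt ℓ k r 0 : ℕ) : ℝ) = X*X*(L*L - L) := by
    have hs' : ((Scnt ℓ : ℕ) : ℝ) = L*L - L := by
      have hcst := congrArg (Nat.cast (R := ℝ)) hS
      push_cast at hcst
      simp only [← hLdef] at hcst
      linarith
    have hcst := congrArg (Nat.cast (R := ℝ)) hT0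
    push_cast at hcst
    simp only [← hLdef, ← hXdef] at hcst
    rw [hcst, hs']
  -- T j upper bounds, 1 ≤ j ≤ k
  have hTj : ∀ j : ℕ, 1 ≤ j → j ≤ k →
      ((Tcnt ℓ k r j : ℕ) : ℝ) ≤ (L^k/L^j) * (L^k/L^j) * (((j:ℝ)*(L-1) + L - 2) * L^(j-1)) := by
    intro j hj1 hjk
    haveI : NeZero (ℓ^j) := ⟨pow_ne_zero _ hℓ.pos.ne'⟩
    have hfib := Tfib (k := k) hℓ hj1 hjk r
    have hule := U_le hℓ hj1 r hr
    have hpowj : L^(k-j) = L^k/L^j := by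
      rw [eq_div_iff (pow_ne_zero _ hL0), ← pow_add]
      congr 1
      omega
    have huler : ((Ucnt ℓ j r : ℕ) : ℝ) ≤ ((j:ℝ)*(L-1) + L - 2) * L^(j-1) := by
      have hc := (Nat.cast_le (α := ℝ)).mpr hule
      push_cast [Nat.cast_sub h1l] at hc
      simp only [← hLdef] at hc
      have hLj : L^j = L * L^(j-1) := by
        rw [← pow_succ']
        congr 1
        omega
      nlinarith [pow_pos hLpos (j-1)]
    have hcst := congrArg (Nat.cast (R := ℝ)) hfib
    push_cast at hcst
    simp only [← hLdef] at hcst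
    rw [hcst, hpowj]
    have hq1 : (0:ℝ) ≤ L^k/L^j :=
      div_nonneg (pow_nonneg hLpos.le k) (pow_nonneg hLpos.le j)
    exact mul_le_mul_of_nonneg_left huler (mul_nonneg hq1 hq1)
  have hTj' : ∀ i : ℕ, i + 1 ≤ k →
      ((Tcnt ℓ k r (i+1) : ℕ) : ℝ) ≤ (L*X^2) * ((((i:ℝ)+1)*(L-1) + L - 2)/L^(i+1)) := by
    intro i hik
    have hb := hTj (i+1) (by omega) hik
    have hcast1 : (((i+1 : ℕ)):ℝ) = (i:ℝ)+1 := by push_cast; ring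
    have hcast2 : L^((i+1)-1) = L^i := by norm_num
    rw [hcast1, hcast2] at hb
    refine le_trans hb (le_of_eq ?_)
    rw [hLk]
    have h1 : L^(i+1) ≠ 0 := pow_ne_zero _ hL0
    field_simp
    ring
  have hTk : ((Tcnt ℓ k r k : ℕ) : ℝ) ≤ ((k:ℝ)*(L-1) + L - 2)*X := by
    have hb := hTj k hk (le_refl k)
    have h0 : L^k/L^k = 1 := div_self (pow_ne_zero _ hL0)
    rw [h0] at hb
    have h2 : L^(k-1) = X := hXdef.symm
    rw [h2] at hb
    calc ((Tcnt ℓ k r k : ℕ) : ℝ) ≤ 1 * 1 * ((((k:ℝ))*(L-1) + L - 2)*X) := hb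
      _ = ((k:ℝ)*(L-1) + L - 2)*X := by ring
  -- T 1 lower
  have hT1low : X*X*(2*L - 3) ≤ ((Tcnt ℓ k r 1 : ℕ) : ℝ) := by
    have hfib := Tfib (k := k) hℓ (le_refl 1) hk r
    have hu1 := U1_ge hℓ (r := r) hr
    have hu1r : 2*L - 3 ≤ ((Ucnt ℓ 1 r : ℕ) : ℝ) := by
      have hc := (Nat.cast_le (α := ℝ)).mpr hu1
      push_cast at hc
      simp only [← hLdef] at hc
      linarith
    have hcst := congrArg (Nat.cast (R := ℝ)) hfib
    push_cast at hcst
    simp only [← hLdef, ← hXdef] at hcst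
    rw [hcst]
    exact mul_le_mul_of_nonneg_left hu1r (mul_pos hXpos hXpos).le
  -- master in ℝ
  have hmr : ((Qcard ℓ k r : ℕ) : ℝ)
      = (∑ j ∈ Finset.range k, ((L-1)*X) * ((Tcnt ℓ k r j : ℕ) : ℝ))
        + (L*X) * ((Tcnt ℓ k r k : ℕ) : ℝ) := by
    have hmc := congrArg (Nat.cast (R := ℝ)) hmaster
    push_cast [Nat.cast_sub h1l] at hmc
    simp only [← hLdef, ← hXdef] at hmc
    rw [hmc, hLk]
  -- upper bound on Qcard
  have hQup : ((Qcard ℓ k r : ℕ) : ℝ) ≤ L*X^3*(L^2-1) := by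
    rw [hmr]
    have hrange : Finset.range k = Finset.range ((k-1)+1) := by congr 1; omega
    rw [hrange, Finset.sum_range_succ']
    have hsum1 : ∑ i ∈ Finset.range (k-1), ((L-1)*X) * ((Tcnt ℓ k r (i+1) : ℕ) : ℝ)
        ≤ ((L-1)*X) * (L*X^2) * (2 - ((k:ℝ)+1)/X) := by
      have hstep : ∑ i ∈ Finset.range (k-1), ((L-1)*X) * ((Tcnt ℓ k r (i+1) : ℕ) : ℝ)
          ≤ ∑ i ∈ Finset.range (k-1),
              ((L-1)*X) * ((L*X^2) * ((((i:ℝ)+1)*(L-1) + L - 2)/L^(i+1))) := by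
        refine Finset.sum_le_sum fun i hi => ?_
        have hik : i + 1 ≤ k := by
          have := Finset.mem_range.mp hi; omega
        exact mul_le_mul_of_nonneg_left (hTj' i hik) (mul_nonneg hA.le hXpos.le)
      refine le_trans hstep (le_of_eq ?_)
      have hfold : ∀ i : ℕ, ((L-1)*X) * ((L*X^2) * ((((i:ℝ)+1)*(L-1) + L - 2)/L^(i+1)))
          = (((L-1)*X) * (L*X^2)) * ((((i:ℝ)+1)*(L-1) + L - 2)/L^(i+1)) := by
        intro i; ring
      rw [Finset.sum_congr rfl (fun i _ => hfold i), ← Finset.mul_sum,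
        sum_geom L hL2 (k-1)]
      have hc : (((k-1 : ℕ)):ℝ) = (k:ℝ) - 1 := by
        push_cast [Nat.cast_sub hk]; ring
      rw [hc]
      have hXk : L^(k-1) = X := hXdef.symm
      rw [hXk]
      ring_nf
    have hf0 : ((L-1)*X) * ((Tcnt ℓ k r 0 : ℕ) : ℝ) = ((L-1)*X)*(X*X*(L*L-L)) := by
      rw [hT0real]
    have hfk : (L*X) * ((Tcnt ℓ k r k : ℕ) : ℝ) ≤ (L*X)*(((k:ℝ)*(L-1) + L - 2)*X) :=
      mul_le_mul_of_nonneg_left hTk (mul_pos hLpos hXpos).le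
    have htotal : ((L-1)*X)*(X*X*(L*L-L)) + ((L-1)*X) * (L*X^2) * (2 - ((k:ℝ)+1)/X)
        + (L*X)*(((k:ℝ)*(L-1) + L - 2)*X) = L*X^3*(L^2-1) - L*X^2 := by
      field_simp
      ring
    have hLX2 : (0:ℝ) < L*X^2 := mul_pos hLpos (pow_pos hXpos 2)
    linarith [hsum1, hfk, hf0]
  -- lower bound on Qcard (ℕ level)
  have hQlowN : ((ℓ-1)*ℓ^(k-1)) * Tcnt ℓ k r 0 + ((ℓ-1)*ℓ^(k-1)) * Tcnt ℓ k r 1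
      ≤ Qcard ℓ k r := by
    rw [hmaster]
    rcases Nat.lt_or_ge k 2 with hk2 | hk2
    · have hk1 : k = 1 := by omega
      subst hk1
      rw [Finset.sum_range_one]
      have hmul : ((ℓ-1)*ℓ^(1-1)) * Tcnt ℓ 1 r 1 ≤ ℓ^1 * Tcnt ℓ 1 r 1 := by
        refine Nat.mul_le_mul_right _ ?_
        have : (ℓ-1)*ℓ^(1-1) = ℓ - 1 := by norm_num
        rw [this, pow_one]
        omega
      omega
    · have hsub : ({0, 1} : Finset ℕ) ⊆ Finset.range k := by
        intro x hx
        simp only [Finset.mem_insert, Finset.mem_singleton] at hx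
        rcases hx with rfl | rfl <;> (rw [Finset.mem_range]; omega)
      have hss := Finset.sum_le_sum_of_subset
        (f := fun j => ((ℓ-1)*ℓ^(k-1)) * Tcnt ℓ k r j) hsub
      rw [Finset.sum_pair (by norm_num : (0:ℕ) ≠ 1)] at hss
      exact le_trans hss (Nat.le_add_right _ _)
  have hQlow : (L-1)*X*(X*X*(L*L-L)) + (L-1)*X*(X*X*(2*L-3))
      ≤ ((Qcard ℓ k r : ℕ) : ℝ) := by
    have hc := (Nat.cast_le (α := ℝ)).mpr hQlowN
    push_cast [Nat.cast_sub h1l] at hc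
    simp only [← hLdef, ← hXdef] at hc
    have hw0 : (0:ℝ) ≤ (L-1)*X := mul_nonneg hA.le hXpos.le
    have m1 : (L-1)*X*(X*X*(L*L-L)) = (L-1)*X*((Tcnt ℓ k r 0 : ℕ) : ℝ) := by
      rw [hT0real]
    have m2 : (L-1)*X*(X*X*(2*L-3)) ≤ (L-1)*X*((Tcnt ℓ k r 1 : ℕ) : ℝ) :=
      mul_le_mul_of_nonneg_left hT1low hw0
    linarith [hc, m1, m2]
  -- final assembly
  rw [hCQ, hphi, hGLreal]
  constructor
  · -- lower bound
    have hlhs : 1/(X*(L-1)) * ((L-2)/(L-1)) = (L-2)/(X*(L-1)*(L-1)) := by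
      field_simp
    rw [hlhs, div_le_div_iff₀ (mul_pos (mul_pos hXpos hA) hA) hGpos']
    have hClow : (L-1)*X^3*(L*L+L-3) ≤ ((Qcard ℓ k r : ℕ) : ℝ) := by
      have hring : (L-1)*X*(X*X*(L*L-L)) + (L-1)*X*(X*X*(2*L-3))
          = (L-1)*X^3*(L*L+L-3) := by ring
      linarith [hQlow]
    have hfac : (0:ℝ) ≤ X*(L-1)*(L-1) := (mul_pos (mul_pos hXpos hA) hA).le
    have hstep := mul_le_mul_of_nonneg_right hClow hfac
    have hq : (0:ℝ) ≤ L*L - 2*L + 3 := by nlinarith [sq_nonneg (L-1)]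
    have hpoly : (L-2) * (X^4*(L*(L-1)*(L^2-1)))
        ≤ (L-1)*X^3*(L*L+L-3) * (X*(L-1)*(L-1)) := by
      nlinarith [mul_nonneg (mul_nonneg (pow_pos hXpos 4).le (sq_nonneg (L-1))) hq]
    exact le_trans hpoly hstep
  · -- upper bound
    have hmain : ((Qcard ℓ k r : ℕ) : ℝ) / (X^4*(L*(L-1)*(L^2-1))) ≤ 1/(X*(L-1)) := by
      rw [div_le_div_iff₀ hGpos' (mul_pos hXpos hA)]
      have hw0 : (0:ℝ) ≤ X*(L-1) := (mul_pos hXpos hA).le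
      have h2 := mul_le_mul_of_nonneg_right hQup hw0
      have h3 : L*X^3*(L^2-1)*(X*(L-1)) = 1*(X^4*(L*(L-1)*(L^2-1))) := by ring
      linarith [h2]
    refine le_trans hmain ?_
    have heps : (0:ℝ) ≤ 1/((L^3-1)*(L^2-1)) :=
      le_of_lt (div_pos one_pos (mul_pos hC hB))
    have hnn : (0:ℝ) ≤ 1/(X*(L-1)) :=
      le_of_lt (div_pos one_pos (mul_pos hXpos hA))
    nlinarith [mul_nonneg hnn heps]
end

section
/- Let p be a prime, let 1 ≤ e ≤ k be integers, let r be an integer, and let g ∈ GL₂(ℤ/p^eℤ) satisfy det(g) + 1 − tr(g) ≡ r (mod p^e) and be not congruent to the identity matrix modulo p. Then the number of matrices ĝ ∈ GL₂(ℤ/p^kℤ) that reduce to g modulo p^e and satisfy det(ĝ) + 1 − tr(ĝ) ≡ r (mod p^k) is exactly p^{3(k−e)}. -/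
open Matrix

section helpers
lemma R1 {p : ℕ} (hp : p.Prime) (m : ℕ) (a : ZMod (p^(m+1))) :
    (p:ZMod (p^(m+1)))^m * a = 0 ↔
      ZMod.castHom (dvd_pow_self p (Nat.succ_ne_zero m)) (ZMod p) a = 0 := by
  have hpm : NeZero (p^(m+1)) := ⟨pow_ne_zero _ hp.ne_zero⟩
  conv_lhs => rw [← ZMod.natCast_rightInverse a]
  rw [ZMod.castHom_apply, ZMod.cast_eq_val]
  rw [← Nat.cast_pow, ← Nat.cast_mul, ZMod.natCast_eq_zero_iff,
    ZMod.natCast_eq_zero_iff]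
  generalize a.val = n
  rw [pow_succ', mul_comm p (p^m), Nat.mul_dvd_mul_iff_left (Nat.pow_pos (n := m) hp.pos)]

lemma R1' {p : ℕ} (hp : p.Prime) (m : ℕ) (a b : ZMod (p^(m+1))) :
    (p:ZMod (p^(m+1)))^m * a = (p:ZMod (p^(m+1)))^m * b ↔
      ZMod.castHom (dvd_pow_self p (Nat.succ_ne_zero m)) (ZMod p) a =
      ZMod.castHom (dvd_pow_self p (Nat.succ_ne_zero m)) (ZMod p) b := by
  rw [← sub_eq_zero, ← mul_sub, R1 hp, map_sub, sub_eq_zero]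

lemma R3 {p : ℕ} (hp : p.Prime) (m : ℕ) (t : ZMod p) :
    ZMod.castHom (dvd_pow_self p (Nat.succ_ne_zero m)) (ZMod p)
      ((ZMod.cast t : ZMod (p^(m+1)))) = t := by
  have : NeZero p := ⟨hp.ne_zero⟩
  rw [ZMod.castHom_apply, ZMod.cast_cast_zmod_of_le (Nat.le_self_pow (Nat.succ_ne_zero m) p)]

lemma R3' {p : ℕ} (hp : p.Prime) (m : ℕ) (t : ZMod (p^m)) :
    ZMod.castHom (pow_dvd_pow p (Nat.le_succ m)) (ZMod (p^m))
      ((ZMod.cast t : ZMod (p^(m+1)))) = t := by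
  have : NeZero (p^m) := ⟨pow_ne_zero _ hp.ne_zero⟩
  rw [ZMod.castHom_apply,
    ZMod.cast_cast_zmod_of_le (Nat.pow_le_pow_right hp.pos (Nat.le_succ m))]

lemma R2 {p : ℕ} (hp : p.Prime) (m : ℕ) (a : ZMod (p^(m+1)))
    (h : ZMod.castHom (pow_dvd_pow p (Nat.le_succ m)) (ZMod (p^m)) a = 0) :
    ∃ t : ZMod p, a = (p:ZMod (p^(m+1)))^m * (ZMod.cast t) := by
  have hpm : NeZero (p^(m+1)) := ⟨pow_ne_zero _ hp.ne_zero⟩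
  have h2 : ((a.val : ℕ) : ZMod (p^m)) = 0 := by
    rwa [ZMod.castHom_apply, ZMod.cast_eq_val] at h
  rw [ZMod.natCast_eq_zero_iff] at h2
  obtain ⟨x, hx⟩ := h2
  refine ⟨(x : ZMod p), ?_⟩
  have ha : a = ((p^m * x : ℕ) : ZMod (p^(m+1))) := by
    rw [← hx, ZMod.natCast_rightInverse a]
  rw [ha]
  push_cast
  refine ((R1' hp m _ _).mpr ?_)
  rw [map_natCast, R3 hp]

lemma M1 {R : Type*} [CommRing R] (X Y : Matrix (Fin 2) (Fin 2) R) :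
    (X + Y).det = X.det + Y.det + (X.adjugate * Y).trace := by
  simp [Matrix.det_fin_two, Matrix.adjugate_fin_two, Matrix.trace_fin_two, Matrix.mul_apply,
    Matrix.vecMul, dotProduct, Fin.sum_univ_two]
  ring

lemma M2 {R : Type*} [CommRing R] (A : Matrix (Fin 2) (Fin 2) R) (h : A.adjugate = 1) :
    A = 1 := by
  have := congrArg Matrix.adjugate h
  rw [Matrix.adjugate_adjugate', Matrix.adjugate_one] at this
  simpa using this

lemma traceMap {R S : Type*} [CommRing R] [CommRing S] (f : R →+* S)
    (X : Matrix (Fin 2) (Fin 2) R) : f X.trace = (X.map f).trace := by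
  simp [Matrix.trace_fin_two, Matrix.map_apply]

lemma detMap {R S : Type*} [CommRing R] [CommRing S] (f : R →+* S)
    (X : Matrix (Fin 2) (Fin 2) R) : f X.det = (X.map f).det := by
  simp [Matrix.det_fin_two, Matrix.map_apply]

lemma Ctr {R : Type*} [CommRing R] (D : Matrix (Fin 2) (Fin 2) R) (i j : Fin 2) (x : R) :
    (D * Matrix.single j i x).trace = D i j * x := by
  fin_cases i <;> fin_cases j <;> simp [Matrix.trace_fin_two]

lemma C1 {p : ℕ} (hp : p.Prime) (D : Matrix (Fin 2) (Fin 2) (ZMod p)) (hD : D ≠ 0)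
    (c : ZMod p) :
    Nat.card {B : Matrix (Fin 2) (Fin 2) (ZMod p) // (D * B).trace = c} = p ^ 3 := by
  haveI : Fact p.Prime := ⟨hp⟩
  let f : Matrix (Fin 2) (Fin 2) (ZMod p) →+ ZMod p :=
    { toFun := fun B => (D * B).trace
      map_zero' := by simp
      map_add' := fun B C => by show (D*(B+C)).trace = _; rw [mul_add, Matrix.trace_add] }
  have hfsurj : Function.Surjective f := by
    obtain ⟨i, j, hij⟩ : ∃ i j, D i j ≠ 0 := by
      by_contra h
      push_neg at h
      exact hD (by ext i j; simp [h])
    intro c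
    exact ⟨Matrix.single j i ((D i j)⁻¹ * c), by
      simp [f, Ctr, ← mul_assoc, mul_inv_cancel₀ hij]⟩
  have hcard : Nat.card (Matrix (Fin 2) (Fin 2) (ZMod p)) = p ^ 4 := by
    rw [Nat.card_eq_fintype_card]
    have : Fintype.card (Matrix (Fin 2) (Fin 2) (ZMod p)) =
        Fintype.card (Fin 2 → Fin 2 → ZMod p) := rfl
    rw [this]
    simp [ZMod.card]
    ring
  have h1 : Nat.card (Matrix (Fin 2) (Fin 2) (ZMod p)) =
      Nat.card (Matrix (Fin 2) (Fin 2) (ZMod p) ⧸ f.ker) * Nat.card f.ker :=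
    AddSubgroup.card_eq_card_quotient_mul_card_addSubgroup f.ker
  have h2 : Nat.card (Matrix (Fin 2) (Fin 2) (ZMod p) ⧸ f.ker) = p := by
    rw [Nat.card_congr (QuotientAddGroup.quotientKerEquivOfSurjective f hfsurj).toEquiv]
    simp [Nat.card_eq_fintype_card, ZMod.card]
  have hker : Nat.card f.ker = p ^ 3 := by
    rw [hcard, h2] at h1
    have : p ^ 4 = p * p ^ 3 := by ring
    rw [this] at h1
    exact (Nat.eq_of_mul_eq_mul_left hp.pos h1).symm
  obtain ⟨B₀, hB₀⟩ := hfsurj c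
  have : {B : Matrix (Fin 2) (Fin 2) (ZMod p) // (D * B).trace = c} ≃ f.ker := by
    refine ⟨fun B => ⟨B.1 - B₀, ?_⟩, fun B => ⟨B.1 + B₀, ?_⟩, fun B => by simp, fun B => by simp⟩
    · have : f B.1 = c := B.2
      simp [AddMonoidHom.mem_ker, map_sub, this, hB₀]
    · have : f B.1 = 0 := B.2
      show f _ = c
      simp [map_add, this, hB₀]
  rw [Nat.card_congr this, hker]
end helpers

lemma S1 {p : ℕ} (hp : p.Prime) (m : ℕ) (hm : 1 ≤ m)
    (A : Matrix (Fin 2) (Fin 2) (ZMod (p^m)))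
    (hA1 : A.map (ZMod.castHom (dvd_pow_self p (Nat.one_le_iff_ne_zero.mp hm)) (ZMod p)) ≠ 1)
    (s : ZMod (p^(m+1)))
    (hs : ZMod.castHom (pow_dvd_pow p (Nat.le_succ m)) (ZMod (p^m)) s = A.det + 1 - A.trace) :
    Nat.card {M : Matrix (Fin 2) (Fin 2) (ZMod (p^(m+1))) //
        M.map (ZMod.castHom (pow_dvd_pow p (Nat.le_succ m)) (ZMod (p^m))) = A ∧
        M.det + 1 - M.trace = s} = p ^ 3 := by
  haveI : NeZero (p^(m+1)) := ⟨pow_ne_zero _ hp.ne_zero⟩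
  haveI : NeZero (p^m) := ⟨pow_ne_zero _ hp.ne_zero⟩
  haveI : NeZero p := ⟨hp.ne_zero⟩
  set π : ZMod (p^(m+1)) →+* ZMod (p^m) :=
    ZMod.castHom (pow_dvd_pow p (Nat.le_succ m)) (ZMod (p^m)) with hπdef
  set ρ : ZMod (p^(m+1)) →+* ZMod p :=
    ZMod.castHom (dvd_pow_self p (Nat.succ_ne_zero m)) (ZMod p) with hρdef
  set σ : ZMod (p^m) →+* ZMod p :=
    ZMod.castHom (dvd_pow_self p (Nat.one_le_iff_ne_zero.mp hm)) (ZMod p) with hσdef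
  set c : ZMod (p^(m+1)) := (p:ZMod (p^(m+1)))^m with hcdef
  set A₀ : Matrix (Fin 2) (Fin 2) (ZMod (p^(m+1))) := A.map ZMod.cast with hA₀def
  have hcomp : ∀ x, σ (π x) = ρ x := by
    intro x
    have := ZMod.castHom_comp (m := p^m) (n := p)
      (dvd_pow_self p (Nat.one_le_iff_ne_zero.mp hm)) (pow_dvd_pow p (Nat.le_succ m))
    exact (RingHom.congr_fun this x)
  have hπA₀ : A₀.map π = A := by
    ext i j
    simp only [hA₀def, Matrix.map_apply]
    exact R3' hp m (A i j)
  have hρA₀ : A₀.map ρ = A.map σ := by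
    ext i j
    simp only [hA₀def, Matrix.map_apply]
    rw [← hcomp, R3' hp m]
  have hρcast : ∀ t : ZMod p, ρ ((ZMod.cast t : ZMod (p^(m+1)))) = t := fun t => R3 hp m t
  have hc2 : c * c = 0 := by
    have h1 : ((p^m * p^m : ℕ) : ZMod (p^(m+1))) = 0 := by
      rw [ZMod.natCast_eq_zero_iff, ← pow_add]
      exact pow_dvd_pow p (by omega)
    rw [hcdef, ← Nat.cast_pow, ← Nat.cast_mul, h1]
  have hπc : π c = 0 := by
    rw [hcdef, map_pow, map_natCast, ← Nat.cast_pow, ZMod.natCast_self]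
  -- key φ computation
  have hφ : ∀ X : Matrix (Fin 2) (Fin 2) (ZMod (p^(m+1))),
      (A₀ + c • X).det + 1 - (A₀ + c • X).trace =
        (A₀.det + 1 - A₀.trace) + c * ((A₀.adjugate - 1) * X).trace := by
    intro X
    have h1 : (A₀ + c • X).det = A₀.det + c * (A₀.adjugate * X).trace := by
      rw [M1, Matrix.det_smul, mul_smul_comm, Matrix.trace_smul]
      have : Fintype.card (Fin 2) = 2 := by simp
      rw [this, pow_two, hc2, zero_mul, add_zero, smul_eq_mul]
    have h2 : (A₀ + c • X).trace = A₀.trace + c * X.trace := by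
      rw [Matrix.trace_add, Matrix.trace_smul, smul_eq_mul]
    rw [h1, h2, Matrix.sub_mul, Matrix.one_mul, Matrix.trace_sub]
    ring
  -- w
  have hπφA₀ : π (A₀.det + 1 - A₀.trace) = A.det + 1 - A.trace := by
    rw [map_sub, map_add, _root_.map_one, detMap π, traceMap π, hπA₀]
  obtain ⟨w, hw⟩ := R2 hp m (s - (A₀.det + 1 - A₀.trace)) (by rw [map_sub, hs, hπφA₀, sub_self])
  set D : Matrix (Fin 2) (Fin 2) (ZMod p) := (A₀.adjugate - 1).map ρ with hDdef
  have hD : D ≠ 0 := by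
    intro h0
    apply hA1
    have hadj : (A₀.map ρ).adjugate = 1 := by
      have h1 : A₀.adjugate.map ρ = 1 := by
        have : (A₀.adjugate - 1).map ρ = A₀.adjugate.map ρ - (1 : Matrix _ _ _).map ρ := by
          ext i j
          simp [Matrix.map_apply, Matrix.sub_apply, Matrix.one_apply, apply_ite ρ]
        rw [hDdef, this, Matrix.map_one ρ (map_zero ρ) (map_one ρ)] at h0
        rwa [sub_eq_zero] at h0
      rw [← h1]
      have := (RingHom.map_adjugate ρ A₀).symm
      exact this
    have := M2 _ hadj
    rw [hρA₀] at this
    rw [this]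
  -- key equivalence of conditions
  have hkey : ∀ B : Matrix (Fin 2) (Fin 2) (ZMod p),
      ((A₀ + c • (B.map ZMod.cast)).det + 1 - (A₀ + c • (B.map ZMod.cast)).trace = s)
        ↔ (D * B).trace = w := by
    intro B
    rw [hφ]
    have hBmap : (B.map (ZMod.cast : ZMod p → ZMod (p^(m+1)))).map ρ = B := by
      ext i j; simp only [Matrix.map_apply]; exact hρcast _
    have hT : ρ (((A₀.adjugate - 1) * (B.map ZMod.cast)).trace) = (D * B).trace := by
      rw [traceMap, Matrix.map_mul (f := ρ), hBmap]
    constructor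
    · intro h
      have h2 : c * ((A₀.adjugate - 1) * (B.map ZMod.cast)).trace
          = c * (ZMod.cast w : ZMod (p^(m+1))) := by
        rw [← hw]
        linear_combination h
      rw [hcdef] at h2
      have := (R1' hp m _ _).mp h2
      rwa [hT, hρcast] at this
    · intro h
      have h2 : c * ((A₀.adjugate - 1) * (B.map ZMod.cast)).trace
          = c * (ZMod.cast w : ZMod (p^(m+1))) := by
        rw [hcdef]
        refine (R1' hp m _ _).mpr ?_
        rw [hT, hρcast, h]
      rw [h2, ← hw]
      ring
  -- reduction condition automatic
  have hredM : ∀ B : Matrix (Fin 2) (Fin 2) (ZMod p),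
      (A₀ + c • (B.map ZMod.cast)).map π = A := by
    intro B
    ext i j
    simp only [Matrix.map_apply, Matrix.add_apply, Matrix.smul_apply, smul_eq_mul, map_add,
      _root_.map_mul, hπc, zero_mul, add_zero]
    exact R3' hp m (A i j)
  -- the bijection
  let F : {B : Matrix (Fin 2) (Fin 2) (ZMod p) // (D * B).trace = w} →
      {M : Matrix (Fin 2) (Fin 2) (ZMod (p^(m+1))) //
        M.map π = A ∧ M.det + 1 - M.trace = s} :=
    fun B => ⟨A₀ + c • (B.1.map ZMod.cast), hredM B.1, (hkey B.1).mpr B.2⟩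
  have hFbij : Function.Bijective F := by
    constructor
    · rintro ⟨B, hB⟩ ⟨B', hB'⟩ hFeq
      have hval : A₀ + c • (B.map ZMod.cast) = A₀ + c • (B'.map ZMod.cast) :=
        congrArg Subtype.val hFeq
      have hsm : c • (B.map ZMod.cast : Matrix (Fin 2) (Fin 2) (ZMod (p^(m+1))))
          = c • (B'.map ZMod.cast) := by
        exact add_left_cancel hval
      ext i j
      have hent : c * (ZMod.cast (B i j) : ZMod (p^(m+1))) = c * ZMod.cast (B' i j) := by
        have := congrArg (fun M => M i j) hsm
        simpa [Matrix.smul_apply, smul_eq_mul, Matrix.map_apply] using this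
      rw [hcdef] at hent
      have := (R1' hp m _ _).mp hent
      rwa [hρcast, hρcast] at this
    · rintro ⟨M, h1, h2⟩
      have hzero : ∀ i j, π ((M - A₀) i j) = 0 := by
        intro i j
        simp only [Matrix.sub_apply, map_sub]
        have hMij : π (M i j) = A i j := by
          have := congrArg (fun N => N i j) h1
          simpa [Matrix.map_apply] using this
        have hA₀ij : π (A₀ i j) = A i j := R3' hp m (A i j)
        rw [hMij, hA₀ij, sub_self]
      choose t ht using fun (i j : Fin 2) => R2 hp m ((M - A₀) i j) (hzero i j)
      refine ⟨⟨Matrix.of t, ?_⟩, ?_⟩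
      · -- condition
        have hMeq : M = A₀ + c • ((Matrix.of t).map ZMod.cast) := by
          ext i j
          simp only [Matrix.add_apply, Matrix.smul_apply, Matrix.map_apply, smul_eq_mul,
            Matrix.of_apply]
          rw [hcdef, ← ht i j]
          simp [Matrix.sub_apply]
        rw [hMeq] at h2
        exact (hkey _).mp h2
      · -- F applied gives M
        apply Subtype.ext
        show A₀ + c • ((Matrix.of t).map ZMod.cast) = M
        ext i j
        simp only [Matrix.add_apply, Matrix.smul_apply, Matrix.map_apply, smul_eq_mul,
          Matrix.of_apply]
        rw [hcdef, ← ht i j]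
        simp [Matrix.sub_apply]
  rw [← Nat.card_eq_of_bijective F hFbij, C1 hp D hD w]

lemma Ulift {p e k : ℕ} (hp : p.Prime) (he : 1 ≤ e) (hek : e ≤ k) (a : ZMod (p^k))
    (h : IsUnit (ZMod.castHom (pow_dvd_pow p hek) (ZMod (p^e)) a)) : IsUnit a := by
  haveI : NeZero (p^k) := ⟨pow_ne_zero _ hp.ne_zero⟩
  have h1 : ZMod.castHom (pow_dvd_pow p hek) (ZMod (p^e)) a = ((a.val : ℕ) : ZMod (p^e)) := by
    rw [ZMod.castHom_apply, ZMod.cast_eq_val]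
  rw [h1, ZMod.isUnit_iff_coprime,
    Nat.coprime_pow_right_iff (lt_of_lt_of_le zero_lt_one he)] at h
  rw [← ZMod.natCast_rightInverse a, ZMod.isUnit_iff_coprime,
    Nat.coprime_pow_right_iff (lt_of_lt_of_le (lt_of_lt_of_le zero_lt_one he) hek)]
  exact h

lemma GLcoe {R S : Type*} [CommRing R] [CommRing S] (f : R →+* S) (g : GL (Fin 2) R) :
    ((Matrix.GeneralLinearGroup.map f g : GL (Fin 2) S) : Matrix (Fin 2) (Fin 2) S)
      = (g : Matrix (Fin 2) (Fin 2) R).map f := by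
  ext i j
  rw [Matrix.map_apply]
  exact Matrix.GeneralLinearGroup.map_apply f i j g

lemma Tmain {p e : ℕ} (hp : p.Prime) (he : 1 ≤ e)
    (A : Matrix (Fin 2) (Fin 2) (ZMod (p^e)))
    (hA1 : A.map (ZMod.castHom (dvd_pow_self p (Nat.one_le_iff_ne_zero.mp he)) (ZMod p)) ≠ 1)
    (r : ℤ) (hr : A.det + 1 - A.trace = (r : ZMod (p^e))) :
    ∀ k, ∀ hek : e ≤ k,
    Nat.card {M : Matrix (Fin 2) (Fin 2) (ZMod (p^k)) //
        M.map (ZMod.castHom (pow_dvd_pow p hek) (ZMod (p^e))) = A ∧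
        M.det + 1 - M.trace = (r : ZMod (p^k))} = p ^ (3*(k-e)) := by
  intro k hek
  induction k, hek using Nat.le_induction with
  | base =>
    have hid : ZMod.castHom (pow_dvd_pow p (le_refl e)) (ZMod (p^e)) = RingHom.id _ :=
      ZMod.castHom_self
    have heq : ∀ M : Matrix (Fin 2) (Fin 2) (ZMod (p^e)),
        (M.map (ZMod.castHom (pow_dvd_pow p (le_refl e)) (ZMod (p^e))) = A ∧
          M.det + 1 - M.trace = (r : ZMod (p^e))) ↔ M = A := by
      intro M
      rw [hid]
      have hmap : M.map (⇑(RingHom.id (ZMod (p^e)))) = M := by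
        ext i j; simp [Matrix.map_apply]
      rw [hmap]
      exact ⟨fun h => h.1, fun h => ⟨h, h ▸ hr⟩⟩
    rw [Nat.card_congr (Equiv.subtypeEquivRight heq), Nat.sub_self, mul_zero, pow_zero]
    haveI : Unique {M : Matrix (Fin 2) (Fin 2) (ZMod (p^e)) // M = A} :=
      ⟨⟨⟨A, rfl⟩⟩, by rintro ⟨x, rfl⟩; rfl⟩
    exact Nat.card_unique
  | succ k hk IH =>
    classical
    haveI : NeZero p := ⟨hp.ne_zero⟩
    set π : ZMod (p^(k+1)) →+* ZMod (p^k) :=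
      ZMod.castHom (pow_dvd_pow p (Nat.le_succ k)) (ZMod (p^k)) with hπdef
    set τk : ZMod (p^k) →+* ZMod (p^e) :=
      ZMod.castHom (pow_dvd_pow p hk) (ZMod (p^e)) with hτkdef
    have hcomp : (⇑τk ∘ ⇑π) =
        ⇑(ZMod.castHom (pow_dvd_pow p (le_trans hk (Nat.le_succ k))) (ZMod (p^e))) := by
      funext x
      exact RingHom.congr_fun
        (ZMod.castHom_comp (pow_dvd_pow p hk) (pow_dvd_pow p (Nat.le_succ k))) x
    let G : {M : Matrix (Fin 2) (Fin 2) (ZMod (p^(k+1))) //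
          M.map (ZMod.castHom (pow_dvd_pow p (le_trans hk (Nat.le_succ k)))
            (ZMod (p^e))) = A ∧
          M.det + 1 - M.trace = (r : ZMod (p^(k+1)))} →
        {M : Matrix (Fin 2) (Fin 2) (ZMod (p^k)) //
          M.map (ZMod.castHom (pow_dvd_pow p hk) (ZMod (p^e))) = A ∧
          M.det + 1 - M.trace = (r : ZMod (p^k))} :=
      fun M => ⟨M.1.map π, by
          rw [Matrix.map_map, hcomp]
          exact M.2.1, by
          have hφ : (M.1.map π).det + 1 - (M.1.map π).trace
              = π (M.1.det + 1 - M.1.trace) := by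
            rw [map_sub, map_add, _root_.map_one, detMap, traceMap]
          rw [hφ, M.2.2, map_intCast]⟩
    rw [Nat.card_congr (Equiv.sigmaFiberEquiv G).symm]
    letI : Fintype {M : Matrix (Fin 2) (Fin 2) (ZMod (p^k)) //
          M.map (ZMod.castHom (pow_dvd_pow p hk) (ZMod (p^e))) = A ∧
          M.det + 1 - M.trace = (r : ZMod (p^k))} := Fintype.ofFinite _
    letI : ∀ N, Fintype {M // G M = N} := fun N => Fintype.ofFinite _
    rw [Nat.card_eq_fintype_card, Fintype.card_sigma]
    have hfib : ∀ N, Fintype.card {M // G M = N} = p^3 := by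
      intro N
      rw [← Nat.card_eq_fintype_card]
      have E : {M // G M = N} ≃ {M : Matrix (Fin 2) (Fin 2) (ZMod (p^(k+1))) //
          M.map (ZMod.castHom (pow_dvd_pow p (Nat.le_succ k)) (ZMod (p^k))) = N.1 ∧
          M.det + 1 - M.trace = (r : ZMod (p^(k+1)))} :=
        { toFun := fun M => ⟨M.1.1, congrArg Subtype.val M.2, M.1.2.2⟩
          invFun := fun M => ⟨⟨M.1, by
              rw [← hcomp, ← Matrix.map_map, M.2.1]
              exact N.2.1, M.2.2⟩, Subtype.ext M.2.1⟩
          left_inv := fun M => Subtype.ext (Subtype.ext rfl)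
          right_inv := fun M => Subtype.ext rfl }
      rw [Nat.card_congr E]
      have hN1 : N.1.map (ZMod.castHom (dvd_pow_self p
          (Nat.one_le_iff_ne_zero.mp (le_trans he hk))) (ZMod p)) ≠ 1 := by
        intro h0
        apply hA1
        have hcmp2 : (⇑(ZMod.castHom (dvd_pow_self p (Nat.one_le_iff_ne_zero.mp he))
              (ZMod p)) ∘ ⇑τk) = ⇑(ZMod.castHom (dvd_pow_self p
              (Nat.one_le_iff_ne_zero.mp (le_trans he hk))) (ZMod p)) := by
          funext x
          exact RingHom.congr_fun (ZMod.castHom_comp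
            (dvd_pow_self p (Nat.one_le_iff_ne_zero.mp he)) (pow_dvd_pow p hk)) x
        rw [← N.2.1, Matrix.map_map, hcmp2, h0]
      have hs : ZMod.castHom (pow_dvd_pow p (Nat.le_succ k)) (ZMod (p^k))
          ((r : ZMod (p^(k+1)))) = N.1.det + 1 - N.1.trace := by
        rw [map_intCast, N.2.2]
      exact S1 hp k (le_trans he hk) N.1 hN1 _ hs
    rw [Finset.sum_congr rfl (fun N _ => hfib N), Finset.sum_const, smul_eq_mul,
      Finset.card_univ, ← Nat.card_eq_fintype_card, IH, ← pow_add]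
    congr 1
    omega

/-- Let `p` be prime, `1 ≤ e ≤ k`, `r ∈ ℤ`, and `g ∈ GL₂(ℤ/p^eℤ)` with
`det g + 1 - tr g ≡ r (mod p^e)` and `g` not congruent to the identity modulo `p`.
Then the number of lifts `g' ∈ GL₂(ℤ/p^kℤ)` of `g` with `det g' + 1 - tr g' ≡ r (mod p^k)`
is exactly `p^{3(k-e)}`. -/
theorem stmt9 (p e k : ℕ) (hp : p.Prime) (he : 1 ≤ e) (hek : e ≤ k) (r : ℤ)
    (g : GL (Fin 2) (ZMod (p ^ e)))
    (hg : Matrix.det (g : Matrix (Fin 2) (Fin 2) (ZMod (p ^ e))) + 1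
          - Matrix.trace (g : Matrix (Fin 2) (Fin 2) (ZMod (p ^ e))) = (r : ZMod (p ^ e)))
    (hgI : Matrix.GeneralLinearGroup.map
        (ZMod.castHom (dvd_pow_self p (Nat.one_le_iff_ne_zero.mp he)) (ZMod p)) g ≠ 1) :
    Nat.card {g' : GL (Fin 2) (ZMod (p ^ k)) //
        Matrix.GeneralLinearGroup.map (ZMod.castHom (pow_dvd_pow p hek) (ZMod (p ^ e))) g' = g ∧
        Matrix.det (g' : Matrix (Fin 2) (Fin 2) (ZMod (p ^ k))) + 1
          - Matrix.trace (g' : Matrix (Fin 2) (Fin 2) (ZMod (p ^ k))) = (r : ZMod (p ^ k))}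
      = p ^ (3 * (k - e)) := by
  set A : Matrix (Fin 2) (Fin 2) (ZMod (p^e)) := (g : Matrix (Fin 2) (Fin 2) (ZMod (p^e)))
    with hAdef
  have hA1 : A.map (ZMod.castHom (dvd_pow_self p (Nat.one_le_iff_ne_zero.mp he))
      (ZMod p)) ≠ 1 := by
    intro h0
    apply hgI
    apply Units.ext
    rw [GLcoe, ← hAdef, h0, Units.val_one]
  set τ : ZMod (p^k) →+* ZMod (p^e) := ZMod.castHom (pow_dvd_pow p hek) (ZMod (p^e))
    with hτdef
  have E : {g' : GL (Fin 2) (ZMod (p ^ k)) //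
        Matrix.GeneralLinearGroup.map τ g' = g ∧
        Matrix.det (g' : Matrix (Fin 2) (Fin 2) (ZMod (p ^ k))) + 1
          - Matrix.trace (g' : Matrix (Fin 2) (Fin 2) (ZMod (p ^ k))) = (r : ZMod (p ^ k))}
      ≃ {M : Matrix (Fin 2) (Fin 2) (ZMod (p^k)) //
        M.map τ = A ∧ M.det + 1 - M.trace = (r : ZMod (p^k))} :=
    { toFun := fun g' => ⟨(g'.1 : Matrix (Fin 2) (Fin 2) (ZMod (p^k))), by
        rw [← GLcoe τ g'.1, g'.2.1], g'.2.2⟩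
      invFun := fun M =>
        ⟨((Matrix.isUnit_iff_isUnit_det M.1).mpr (Ulift hp he hek _ (by
            have hτd : τ M.1.det = A.det := by rw [detMap, M.2.1]
            rw [hτd]
            exact (Matrix.isUnit_iff_isUnit_det A).mp ⟨g, rfl⟩))).unit, by
          apply Units.ext
          rw [GLcoe, IsUnit.unit_spec, M.2.1], by
          rw [IsUnit.unit_spec]
          exact M.2.2⟩
      left_inv := fun g' => Subtype.ext (Units.ext rfl)
      right_inv := fun M => Subtype.ext rfl }
  rw [Nat.card_congr E]
  exact Tmain hp he A hA1 r hg k hek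
end

section
/- Let p be a prime, let 1 ≤ e ≤ k be integers, and let r be an integer. Then the number of matrices ĝ ∈ GL₂(ℤ/p^kℤ) that are congruent to the identity matrix modulo p^e and satisfy det(ĝ) + 1 − tr(ĝ) ≡ r (mod p^k) is at most p^{3(k−e)}·p^{4e+1}. -/
open Matrix

namespace Stmt11
open Finset


variable {p : ℕ}

lemma count_le_total [NeZero p] (m : ℕ) :
    (univ.filter (fun q : (ZMod (p^m) × ZMod (p^m)) × (ZMod (p^m) × ZMod (p^m)) =>
      q.1.1 * q.1.2 = q.2.1 * q.2.2)).card ≤ p ^ (4*m) := by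
  refine le_trans (card_filter_le _ _) ?_
  rw [card_univ]
  simp only [Fintype.card_prod, ZMod.card]
  exact le_of_eq (by ring)

lemma dvd_val_of_not_isUnit (hp : p.Prime) {m : ℕ} [NeZero p] {x : ZMod (p^(m+2))}
    (h : ¬ IsUnit x) : p ∣ x.val := by
  by_contra hd
  apply h
  have : Nat.Coprime x.val (p^(m+2)) :=
    Nat.Coprime.pow_right _ ((Nat.Prime.coprime_iff_not_dvd hp).mpr hd).symm
  have := (ZMod.isUnit_iff_coprime x.val (p^(m+2))).mpr this
  rwa [ZMod.natCast_zmod_val] at this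

lemma val_reconstruct {m : ℕ} [NeZero p] {x x' : ZMod (p^(m+2))}
    (hx : p ∣ x.val) (hx' : p ∣ x'.val)
    (h1 : ((x.val / p : ℕ) : ZMod (p^m)) = ((x'.val / p : ℕ) : ZMod (p^m)))
    (h2 : x.val / p / p^m = x'.val / p / p^m) : x = x' := by
  have hv : x.val = x'.val := by
    have e1 : x.val / p % p^m = x'.val / p % p^m := by
      rwa [ZMod.natCast_eq_natCast_iff] at h1
    have d1 := Nat.div_add_mod (x.val / p) (p^m)
    have d2 := Nat.div_add_mod (x'.val / p) (p^m)
    have : x.val / p = x'.val / p := by rw [← d1, ← d2, e1, h2]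
    calc x.val = p * (x.val / p) := (Nat.mul_div_cancel' hx).symm
    _ = p * (x'.val / p) := by rw [this]
    _ = x'.val := Nat.mul_div_cancel' hx'
  calc x = ((x.val : ℕ) : ZMod (p^(m+2))) := (ZMod.natCast_zmod_val x).symm
  _ = ((x'.val : ℕ) : ZMod (p^(m+2))) := by rw [hv]
  _ = x' := ZMod.natCast_zmod_val x'

lemma digit_lt (hp : p.Prime) {m : ℕ} [NeZero p] (x : ZMod (p^(m+2))) :
    x.val / p / p^m < p := by
  have hlt : x.val < p^(m+2) := ZMod.val_lt x
  have hpos : 0 < p * p^m := Nat.mul_pos hp.pos (pow_pos hp.pos m)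
  rw [Nat.div_div_eq_div_mul, Nat.div_lt_iff_lt_mul hpos]
  calc x.val < p^(m+2) := hlt
  _ = p * (p * p^m) := by ring


lemma desc (hp : p.Prime) [NeZero p] {m : ℕ} {x w y z : ZMod (p^(m+2))}
    (hc : x * w = y * z) (hx : p ∣ x.val) (hw : p ∣ w.val) (hy : p ∣ y.val) (hz : p ∣ z.val) :
    ((x.val/p : ℕ) : ZMod (p^m)) * ((w.val/p : ℕ) : ZMod (p^m))
      = ((y.val/p : ℕ) : ZMod (p^m)) * ((z.val/p : ℕ) : ZMod (p^m)) := by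
  have hmm : ((x.val * w.val : ℕ) : ZMod (p^(m+2))) = ((y.val * z.val : ℕ) : ZMod (p^(m+2))) := by
    push_cast [ZMod.natCast_zmod_val]; exact hc
  have h1 : x.val * w.val ≡ y.val * z.val [MOD p^(m+2)] := (ZMod.natCast_eq_natCast_iff _ _ _).mp hmm
  have h2 : (p*p) * (x.val/p * (w.val/p)) ≡ (p*p) * (y.val/p * (z.val/p)) [MOD (p*p) * p^m] := by
    have e1 : (p*p) * (x.val/p * (w.val/p)) = x.val * w.val := by
      calc (p*p) * (x.val/p * (w.val/p)) = (p * (x.val/p)) * (p * (w.val/p)) := by ring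
      _ = x.val * w.val := by rw [Nat.mul_div_cancel' hx, Nat.mul_div_cancel' hw]
    have e2 : (p*p) * (y.val/p * (z.val/p)) = y.val * z.val := by
      calc (p*p) * (y.val/p * (z.val/p)) = (p * (y.val/p)) * (p * (z.val/p)) := by ring
      _ = y.val * z.val := by rw [Nat.mul_div_cancel' hy, Nat.mul_div_cancel' hz]
    have e3 : (p*p) * p^m = p^(m+2) := by ring
    rw [e1, e2, e3]; exact h1
  have h3 := Nat.ModEq.mul_left_cancel' (Nat.mul_pos hp.pos hp.pos).ne' h2
  have h4 : ((x.val/p * (w.val/p) : ℕ) : ZMod (p^m)) = ((y.val/p * (z.val/p) : ℕ) : ZMod (p^m)) :=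
    (ZMod.natCast_eq_natCast_iff _ _ _).mpr h3
  push_cast at h4; exact h4

lemma key (hp : p.Prime) [NeZero p] (m : ℕ) :
    (univ.filter (fun q : (ZMod (p^m) × ZMod (p^m)) × (ZMod (p^m) × ZMod (p^m)) =>
      q.1.1 * q.1.2 = q.2.1 * q.2.2)).card ≤ p ^ (3*m+4) := by
  induction m using Nat.strong_induction_on with
  | _ m ih =>
  have hple : 1 ≤ p := hp.pos
  rcases m with _ | _ | m
  · exact le_trans (count_le_total 0) (Nat.pow_le_pow_right hple (by omega))
  · exact le_trans (count_le_total 1) (Nat.pow_le_pow_right hple (by omega))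
  set Z := ZMod (p^(m+2)) with hZ
  set S : Finset ((Z × Z) × (Z × Z)) :=
    univ.filter (fun q => q.1.1 * q.1.2 = q.2.1 * q.2.2) with hS
  have hcardZ : Fintype.card Z = p^(m+2) := ZMod.card _
  have memS : ∀ q : (Z × Z) × (Z × Z), q ∈ S → q.1.1 * q.1.2 = q.2.1 * q.2.2 := by
    intro q hq; exact (mem_filter.mp hq).2
  -- unit pieces
  have hcard3 : (univ : Finset (Z × (Z × Z))).card = p^(3*(m+2)) := by
    rw [card_univ]; simp only [Fintype.card_prod, hcardZ]; ring
  have hcard3' : (univ : Finset ((Z × Z) × Z)).card = p^(3*(m+2)) := by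
    rw [card_univ]; simp only [Fintype.card_prod, hcardZ]; ring
  have piece1 : ∀ T : Finset ((Z × Z) × (Z × Z)), T ⊆ S →
      (T.filter (fun q => IsUnit q.1.1)).card ≤ p^(3*(m+2)) := by
    intro T hT
    rw [← hcard3]
    apply Finset.card_le_card_of_injOn (fun q => (q.1.1, q.2)) (fun q _ => mem_univ _)
    intro q hq q' hq' h
    simp only [coe_filter, Set.mem_setOf_eq] at hq hq'
    have hc := memS q (hT hq.1); have hc' := memS q' (hT hq'.1)
    simp only [Prod.mk.injEq] at h
    obtain ⟨h1, h2⟩ := h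
    have h3 : q.1.2 = q'.1.2 := by
      apply hq.2.mul_left_cancel
      rw [hc, h1, h2, hc']
    exact Prod.ext (Prod.ext h1 h3) h2
  have piece2 : ∀ T : Finset ((Z × Z) × (Z × Z)), T ⊆ S →
      (T.filter (fun q => IsUnit q.1.2)).card ≤ p^(3*(m+2)) := by
    intro T hT
    rw [← hcard3]
    apply Finset.card_le_card_of_injOn (fun q => (q.1.2, q.2)) (fun q _ => mem_univ _)
    intro q hq q' hq' h
    simp only [coe_filter, Set.mem_setOf_eq] at hq hq'
    have hc := memS q (hT hq.1); have hc' := memS q' (hT hq'.1)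
    simp only [Prod.mk.injEq] at h
    obtain ⟨h1, h2⟩ := h
    have h3 : q.1.1 = q'.1.1 := by
      apply hq.2.mul_right_cancel
      rw [hc, h1, h2, hc']
    exact Prod.ext (Prod.ext h3 h1) h2
  have piece3 : ∀ T : Finset ((Z × Z) × (Z × Z)), T ⊆ S →
      (T.filter (fun q => IsUnit q.2.1)).card ≤ p^(3*(m+2)) := by
    intro T hT
    rw [← hcard3']
    apply Finset.card_le_card_of_injOn (fun q => (q.1, q.2.1)) (fun q _ => mem_univ _)
    intro q hq q' hq' h
    simp only [coe_filter, Set.mem_setOf_eq] at hq hq'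
    have hc := memS q (hT hq.1); have hc' := memS q' (hT hq'.1)
    simp only [Prod.mk.injEq] at h
    obtain ⟨h1, h2⟩ := h
    have h3 : q.2.2 = q'.2.2 := by
      apply hq.2.mul_left_cancel
      rw [← hc, h1, h2, ← hc']
    exact Prod.ext h1 (Prod.ext h2 h3)
  have piece4 : ∀ T : Finset ((Z × Z) × (Z × Z)), T ⊆ S →
      (T.filter (fun q => IsUnit q.2.2)).card ≤ p^(3*(m+2)) := by
    intro T hT
    rw [← hcard3']
    apply Finset.card_le_card_of_injOn (fun q => (q.1, q.2.2)) (fun q _ => mem_univ _)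
    intro q hq q' hq' h
    simp only [coe_filter, Set.mem_setOf_eq] at hq hq'
    have hc := memS q (hT hq.1); have hc' := memS q' (hT hq'.1)
    simp only [Prod.mk.injEq] at h
    obtain ⟨h1, h2⟩ := h
    have h3 : q.2.1 = q'.2.1 := by
      apply hq.2.mul_right_cancel
      rw [← hc, h1, h2, ← hc']
    exact Prod.ext h1 (Prod.ext h3 h2)
  classical
  set T0 := S.filter (fun q => ¬ IsUnit q.1.1) with hT0
  set T1 := T0.filter (fun q => ¬ IsUnit q.1.2) with hT1
  set T2 := T1.filter (fun q => ¬ IsUnit q.2.1) with hT2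
  set T3 := T2.filter (fun q => ¬ IsUnit q.2.2) with hT3
  have sub0 : T0 ⊆ S := filter_subset _ _
  have sub1 : T1 ⊆ S := le_trans (filter_subset _ _) sub0
  have sub2 : T2 ⊆ S := le_trans (filter_subset _ _) sub1
  have sub3 : T3 ⊆ S := le_trans (filter_subset _ _) sub2
  have piece5 : T3.card ≤ p^4 * p^(3*m+4) := by
    have memT3 : ∀ q, q ∈ T3 → q.1.1 * q.1.2 = q.2.1 * q.2.2 ∧
        (p ∣ q.1.1.val ∧ p ∣ q.1.2.val ∧ p ∣ q.2.1.val ∧ p ∣ q.2.2.val) := by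
      intro q hq
      have h3 := hq
      rw [hT3, mem_filter] at h3
      have h2 := h3.1
      rw [hT2, mem_filter] at h2
      have h1 := h2.1
      rw [hT1, mem_filter] at h1
      have h0 := h1.1
      rw [hT0, mem_filter] at h0
      exact ⟨memS q h0.1, dvd_val_of_not_isUnit hp h0.2, dvd_val_of_not_isUnit hp h1.2,
        dvd_val_of_not_isUnit hp h2.2, dvd_val_of_not_isUnit hp h3.2⟩
    have hinj : T3.card ≤ ((univ.filter
        (fun q : (ZMod (p^m) × ZMod (p^m)) × (ZMod (p^m) × ZMod (p^m)) =>
          q.1.1 * q.1.2 = q.2.1 * q.2.2)) ×ˢ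
        (univ : Finset ((Fin p × Fin p) × (Fin p × Fin p)))).card := by
      apply Finset.card_le_card_of_injOn (fun q =>
        (((((q.1.1.val/p : ℕ) : ZMod (p^m)), ((q.1.2.val/p : ℕ) : ZMod (p^m))),
          (((q.2.1.val/p : ℕ) : ZMod (p^m)), ((q.2.2.val/p : ℕ) : ZMod (p^m)))),
         ((⟨q.1.1.val/p/p^m, digit_lt hp q.1.1⟩, ⟨q.1.2.val/p/p^m, digit_lt hp q.1.2⟩),
          (⟨q.2.1.val/p/p^m, digit_lt hp q.2.1⟩, ⟨q.2.2.val/p/p^m, digit_lt hp q.2.2⟩))))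
      · intro q hq
        obtain ⟨hc, hx, hw, hy, hz⟩ := memT3 q hq
        rw [Finset.mem_coe, mem_product, mem_filter]
        exact ⟨⟨mem_univ _, desc hp hc hx hw hy hz⟩, mem_univ _⟩
      · intro q hq q' hq' h
        obtain ⟨hc, hx, hw, hy, hz⟩ := memT3 q hq
        obtain ⟨hc', hx', hw', hy', hz'⟩ := memT3 q' hq'
        simp only [Prod.mk.injEq, Fin.mk.injEq] at h
        obtain ⟨⟨⟨a1, a2⟩, a3, a4⟩, ⟨b1, b2⟩, b3, b4⟩ := h
        exact Prod.ext
          (Prod.ext (val_reconstruct hx hx' a1 b1) (val_reconstruct hw hw' a2 b2))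
          (Prod.ext (val_reconstruct hy hy' a3 b3) (val_reconstruct hz hz' a4 b4))
    refine le_trans hinj ?_
    have hcu : (univ : Finset ((Fin p × Fin p) × (Fin p × Fin p))).card = p^4 := by
      rw [card_univ]; simp only [Fintype.card_prod, Fintype.card_fin]; ring
    rw [card_product, hcu]
    exact le_trans (Nat.mul_le_mul_right _ (ih m (by omega))) (le_of_eq (Nat.mul_comm _ _))
  have e0 : S.card = (S.filter (fun q => IsUnit q.1.1)).card + T0.card :=
    (card_filter_add_card_filter_not _).symm
  have e1 : T0.card = (T0.filter (fun q => IsUnit q.1.2)).card + T1.card :=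
    (card_filter_add_card_filter_not _).symm
  have e2 : T1.card = (T1.filter (fun q => IsUnit q.2.1)).card + T2.card :=
    (card_filter_add_card_filter_not _).symm
  have e3 : T2.card = (T2.filter (fun q => IsUnit q.2.2)).card + T3.card :=
    (card_filter_add_card_filter_not _).symm
  have hP1 := piece1 S (le_refl _)
  have hP2 := piece2 T0 sub0
  have hP3 := piece3 T1 sub1
  have hP4 := piece4 T2 sub2
  have h4p : 4 ≤ p^2 := by nlinarith [hp.two_le]
  have htot : S.card ≤ 4 * p^(3*(m+2)) + p^4 * p^(3*m+4) := by omega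
  refine le_trans htot ?_
  calc 4 * p^(3*(m+2)) + p^4 * p^(3*m+4)
      = 4 * p^(3*m+6) + p^(3*m+8) := by ring
    _ ≤ p^2 * p^(3*m+6) + p^(3*m+8) :=
        Nat.add_le_add_right (Nat.mul_le_mul_right _ h4p) _
    _ = 2 * p^(3*m+8) := by ring
    _ ≤ p^2 * p^(3*m+8) :=
        Nat.mul_le_mul_right _ (le_trans (by norm_num) h4p)
    _ = p^(3*(m+2)+4) := by ring

lemma cs {α β : Type*} [Fintype α] [DecidableEq α] [Fintype β] [DecidableEq β]
    [AddCommGroup β] (f : α → β) (r : β) :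
    (univ.filter (fun q : α × α => f q.1 - f q.2 = r)).card ≤
      (univ.filter (fun q : α × α => f q.1 = f q.2)).card := by
  classical
  have key : ∀ s : β, (univ.filter (fun q : α × α => f q.1 - f q.2 = s)).card
      = ∑ t : β, (univ.filter (fun a => f a = t)).card *
          (univ.filter (fun a => f a = t - s)).card := by
    intro s
    rw [Finset.card_eq_sum_card_fiberwise
      (f := fun q : α × α => f q.1) (t := univ) (fun _ _ => mem_univ _)]
    refine Finset.sum_congr rfl fun t _ => ?_
    rw [Finset.filter_filter]
    have heq : (univ.filter (fun q : α × α => (f q.1 - f q.2 = s) ∧ f q.1 = t))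
        = (univ.filter (fun a => f a = t)) ×ˢ (univ.filter (fun a => f a = t - s)) := by
      ext q
      simp only [mem_filter, mem_univ, true_and, mem_product]
      constructor
      · rintro ⟨h1, h2⟩
        refine ⟨h2, ?_⟩
        rw [← h1, ← h2, sub_sub_cancel]
      · rintro ⟨h1, h2⟩
        rw [h1, h2]
        exact ⟨sub_sub_cancel t s, rfl⟩
    rw [heq, Finset.card_product]
  have hzero : (univ.filter (fun q : α × α => f q.1 = f q.2))
      = (univ.filter (fun q : α × α => f q.1 - f q.2 = 0)) := by
    ext q; simp [sub_eq_zero]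
  rw [key r, hzero, key 0]
  simp only [sub_zero]
  have hre : ∑ t : β, (univ.filter (fun a => f a = t - r)).card *
      (univ.filter (fun a => f a = t - r)).card
      = ∑ t : β, (univ.filter (fun a => f a = t)).card *
          (univ.filter (fun a => f a = t)).card := by
    apply Fintype.sum_equiv (Equiv.subRight r)
    intro t
    simp [Equiv.subRight]
    congr
  have h2 : 2 * (∑ t : β, (univ.filter (fun a => f a = t)).card *
      (univ.filter (fun a => f a = t - r)).card)
      ≤ 2 * ∑ t : β, (univ.filter (fun a => f a = t)).card *
          (univ.filter (fun a => f a = t)).card := by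
    have hterm : ∀ t : β, 2 * ((univ.filter (fun a => f a = t)).card *
        (univ.filter (fun a => f a = t - r)).card)
        ≤ (univ.filter (fun a => f a = t)).card * (univ.filter (fun a => f a = t)).card
          + (univ.filter (fun a => f a = t - r)).card *
            (univ.filter (fun a => f a = t - r)).card := by
      intro t
      nlinarith [sq_nonneg ((univ.filter (fun a => f a = t)).card
        - (univ.filter (fun a => f a = t - r)).card : ℤ)]
    calc 2 * (∑ t : β, (univ.filter (fun a => f a = t)).card *
          (univ.filter (fun a => f a = t - r)).card)
        = ∑ t : β, 2 * ((univ.filter (fun a => f a = t)).card *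
          (univ.filter (fun a => f a = t - r)).card) := Finset.mul_sum _ _ _
      _ ≤ ∑ t : β, ((univ.filter (fun a => f a = t)).card * (univ.filter (fun a => f a = t)).card
          + (univ.filter (fun a => f a = t - r)).card *
            (univ.filter (fun a => f a = t - r)).card) :=
          Finset.sum_le_sum (fun t _ => hterm t)
      _ = ∑ t : β, (univ.filter (fun a => f a = t)).card * (univ.filter (fun a => f a = t)).card
          + ∑ t : β, (univ.filter (fun a => f a = t - r)).card *
            (univ.filter (fun a => f a = t - r)).card := Finset.sum_add_distrib
      _ = 2 * ∑ t : β, (univ.filter (fun a => f a = t)).card *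
            (univ.filter (fun a => f a = t)).card := by rw [hre]; ring
  omega

lemma val_eq_of {N : ℕ} [NeZero N] {x x' : ZMod N} {M : ℕ}
    (h1 : ((x.val : ℕ) : ZMod M) = ((x'.val : ℕ) : ZMod M))
    (h2 : x.val / M = x'.val / M) : x = x' := by
  have e1 : x.val % M = x'.val % M := (ZMod.natCast_eq_natCast_iff _ _ _).mp h1
  have d1 := Nat.div_add_mod x.val M
  have d2 := Nat.div_add_mod x'.val M
  have hv : x.val = x'.val := by rw [← d1, ← d2, e1, h2]
  calc x = ((x.val : ℕ) : ZMod N) := (ZMod.natCast_zmod_val x).symm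
  _ = ((x'.val : ℕ) : ZMod N) := by rw [hv]
  _ = x' := ZMod.natCast_zmod_val x'

lemma desc2 (hp : p.Prime) {e n m : ℕ} (hn : n = m + e) {a b c d : ℕ}
    (hmod : p^e * a * (p^e * b) ≡ p^e * c * (p^e * d) [MOD p^(e+n)]) :
    ((a : ℕ) : ZMod (p^m)) * ((b : ℕ) : ZMod (p^m))
      = ((c : ℕ) : ZMod (p^m)) * ((d : ℕ) : ZMod (p^m)) := by
  have h2 : (p^e*p^e) * (a*b) ≡ (p^e*p^e) * (c*d) [MOD (p^e*p^e) * p^m] := by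
    rw [show (p^e*p^e) * (a*b) = p^e*a*(p^e*b) by ring,
      show (p^e*p^e) * (c*d) = p^e*c*(p^e*d) by ring,
      show (p^e*p^e) * p^m = p^(e+n) by subst hn; ring]
    exact hmod
  have hne : (p^e*p^e) ≠ 0 := (Nat.mul_pos (pow_pos hp.pos e) (pow_pos hp.pos e)).ne'
  have h3 := Nat.ModEq.mul_left_cancel' hne h2
  have h4 : ((a*b : ℕ) : ZMod (p^m)) = ((c*d : ℕ) : ZMod (p^m)) :=
    (ZMod.natCast_eq_natCast_iff _ _ _).mpr h3
  push_cast at h4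
  exact h4

lemma level (hp : p.Prime) [NeZero p]
    (keyb : ∀ m : ℕ,
      (univ.filter (fun q : (ZMod (p^m) × ZMod (p^m)) × (ZMod (p^m) × ZMod (p^m)) =>
        q.1.1 * q.1.2 = q.2.1 * q.2.2)).card ≤ p ^ (3*m+4))
    (e n : ℕ) :
    (univ.filter (fun q : (ZMod (p^n) × ZMod (p^n)) × (ZMod (p^n) × ZMod (p^n)) =>
      ((p^e * q.1.1.val * (p^e * q.1.2.val) : ℕ) : ZMod (p^(e+n)))
        = ((p^e * q.2.1.val * (p^e * q.2.2.val) : ℕ) : ZMod (p^(e+n))))).card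
      ≤ p^(3*n+e+4) := by
  have hp1 : 1 ≤ p := hp.pos
  by_cases hen : e ≤ n
  · set m := n - e with hm
    have hn : n = m + e := by omega
    have hdig : ∀ x : ZMod (p^n), x.val / p^m < p^e := by
      intro x
      have hlt : x.val < p^n := ZMod.val_lt x
      have hpos : 0 < p^m := pow_pos hp.pos m
      rw [Nat.div_lt_iff_lt_mul hpos]
      calc x.val < p^n := hlt
      _ = p^e * p^m := by rw [hn, pow_add, Nat.mul_comm]
    have hinj : (univ.filter (fun q : (ZMod (p^n) × ZMod (p^n)) × (ZMod (p^n) × ZMod (p^n)) =>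
        ((p^e * q.1.1.val * (p^e * q.1.2.val) : ℕ) : ZMod (p^(e+n)))
          = ((p^e * q.2.1.val * (p^e * q.2.2.val) : ℕ) : ZMod (p^(e+n))))).card ≤
        ((univ.filter (fun q : (ZMod (p^m) × ZMod (p^m)) × (ZMod (p^m) × ZMod (p^m)) =>
          q.1.1 * q.1.2 = q.2.1 * q.2.2)) ×ˢ
          (univ : Finset ((Fin (p^e) × Fin (p^e)) × (Fin (p^e) × Fin (p^e))))).card := by
      apply Finset.card_le_card_of_injOn (fun q =>
        (((((q.1.1.val : ℕ) : ZMod (p^m)), ((q.1.2.val : ℕ) : ZMod (p^m))),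
          (((q.2.1.val : ℕ) : ZMod (p^m)), ((q.2.2.val : ℕ) : ZMod (p^m)))),
         ((⟨q.1.1.val/p^m, hdig q.1.1⟩, ⟨q.1.2.val/p^m, hdig q.1.2⟩),
          (⟨q.2.1.val/p^m, hdig q.2.1⟩, ⟨q.2.2.val/p^m, hdig q.2.2⟩))))
      · intro q hq
        rw [Finset.mem_coe, mem_filter] at hq
        have hmod := (ZMod.natCast_eq_natCast_iff _ _ _).mp hq.2
        rw [Finset.mem_coe, mem_product, mem_filter]
        exact ⟨⟨mem_univ _, desc2 hp hn hmod⟩, mem_univ _⟩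
      · intro q hq q' hq' h
        simp only [Prod.mk.injEq, Fin.mk.injEq] at h
        obtain ⟨⟨⟨a1, a2⟩, a3, a4⟩, ⟨b1, b2⟩, b3, b4⟩ := h
        exact Prod.ext (Prod.ext (val_eq_of a1 b1) (val_eq_of a2 b2))
          (Prod.ext (val_eq_of a3 b3) (val_eq_of a4 b4))
    refine le_trans hinj ?_
    have hcu : (univ : Finset ((Fin (p^e) × Fin (p^e)) × (Fin (p^e) × Fin (p^e)))).card
        = p^(4*e) := by
      rw [card_univ]; simp only [Fintype.card_prod, Fintype.card_fin]; ring
    rw [card_product, hcu]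
    calc (univ.filter (fun q : (ZMod (p^m) × ZMod (p^m)) × (ZMod (p^m) × ZMod (p^m)) =>
          q.1.1 * q.1.2 = q.2.1 * q.2.2)).card * p^(4*e)
        ≤ p^(3*m+4) * p^(4*e) := Nat.mul_le_mul_right _ (keyb m)
      _ = p^(3*m+4+4*e) := (pow_add p _ _).symm
      _ ≤ p^(3*n+e+4) := Nat.pow_le_pow_right hp1 (by omega)
  · refine le_trans (card_filter_le _ _) ?_
    rw [card_univ]
    simp only [Fintype.card_prod, ZMod.card]
    calc p^n * p^n * (p^n * p^n) = p^(4*n) := by ring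
    _ ≤ p^(3*n+e+4) := Nat.pow_le_pow_right hp1 (by omega)

end Stmt11


/-- Let `p` be prime, `1 ≤ e ≤ k`, `r ∈ ℤ`. The number of `g' ∈ GL₂(ℤ/p^kℤ)` congruent to
the identity modulo `p^e` and satisfying `det g' + 1 - tr g' ≡ r (mod p^k)` is at most
`p^{3(k-e)} · p^{4e+1}`. -/
theorem stmt11 (p e k : ℕ) (hp : p.Prime) (he : 1 ≤ e) (hek : e ≤ k) (r : ℤ) :
    Nat.card {g' : GL (Fin 2) (ZMod (p ^ k)) //
        Matrix.GeneralLinearGroup.map (ZMod.castHom (pow_dvd_pow p hek) (ZMod (p ^ e))) g' = 1 ∧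
        Matrix.det (g' : Matrix (Fin 2) (Fin 2) (ZMod (p ^ k))) + 1
          - Matrix.trace (g' : Matrix (Fin 2) (Fin 2) (ZMod (p ^ k))) = (r : ZMod (p ^ k))}
      ≤ p ^ (3 * (k - e)) * p ^ (4 * e + 1) := by
  haveI : NeZero p := ⟨hp.ne_zero⟩
  obtain ⟨n, rfl⟩ : ∃ n, k = e + n := ⟨k - e, by omega⟩
  have hpe : 0 < p^e := pow_pos hp.pos e
  -- helper : cast-to-zero gives divisibility
  have hdvd0 : ∀ x : ZMod (p^(e+n)),
      ZMod.castHom (pow_dvd_pow p hek) (ZMod (p^e)) x = 0 → p^e ∣ x.val := by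
    intro x hx
    have h1 : ((x.val : ℕ) : ZMod (p^e)) = 0 := by
      rw [ZMod.natCast_val, ← ZMod.castHom_apply (h := pow_dvd_pow p hek)]
      exact hx
    exact (ZMod.natCast_eq_zero_iff _ _).mp h1
  -- facts about members of the subtype
  have hfacts : ∀ x : {g' : GL (Fin 2) (ZMod (p ^ (e+n))) //
      Matrix.GeneralLinearGroup.map (ZMod.castHom (pow_dvd_pow p hek) (ZMod (p ^ e))) g' = 1 ∧
      Matrix.det (g' : Matrix (Fin 2) (Fin 2) (ZMod (p ^ (e+n)))) + 1
        - Matrix.trace (g' : Matrix (Fin 2) (Fin 2) (ZMod (p ^ (e+n)))) = (r : ZMod (p ^ (e+n)))},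
      (p^e ∣ ((x.1 : Matrix (Fin 2) (Fin 2) (ZMod (p^(e+n)))) 0 0 - 1).val) ∧
      (p^e ∣ ((x.1 : Matrix (Fin 2) (Fin 2) (ZMod (p^(e+n)))) 1 1 - 1).val) ∧
      (p^e ∣ ((x.1 : Matrix (Fin 2) (Fin 2) (ZMod (p^(e+n)))) 0 1).val) ∧
      (p^e ∣ ((x.1 : Matrix (Fin 2) (Fin 2) (ZMod (p^(e+n)))) 1 0).val) ∧
      (((x.1 : Matrix (Fin 2) (Fin 2) (ZMod (p^(e+n)))) 0 0 - 1) *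
          ((x.1 : Matrix (Fin 2) (Fin 2) (ZMod (p^(e+n)))) 1 1 - 1) -
          ((x.1 : Matrix (Fin 2) (Fin 2) (ZMod (p^(e+n)))) 0 1 *
           (x.1 : Matrix (Fin 2) (Fin 2) (ZMod (p^(e+n)))) 1 0) = (r : ZMod (p^(e+n)))) := by
    rintro ⟨g, hg1, hg2⟩
    have hmat : ((Matrix.GeneralLinearGroup.map
        (ZMod.castHom (pow_dvd_pow p hek) (ZMod (p ^ e))) g : GL (Fin 2) (ZMod (p^e))) :
          Matrix (Fin 2) (Fin 2) (ZMod (p^e)))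
        = (1 : Matrix (Fin 2) (Fin 2) (ZMod (p^e))) := by rw [hg1]; rfl
    have hent : ∀ i j, (ZMod.castHom (pow_dvd_pow p hek) (ZMod (p^e)))
        ((g : Matrix (Fin 2) (Fin 2) (ZMod (p^(e+n)))) i j)
        = (1 : Matrix (Fin 2) (Fin 2) (ZMod (p^e))) i j := by
      intro i j
      have := congrArg (fun N : Matrix (Fin 2) (Fin 2) (ZMod (p^e)) => N i j) hmat
      simpa using this
    have h00 : (ZMod.castHom (pow_dvd_pow p hek) (ZMod (p^e)))
        ((g : Matrix (Fin 2) (Fin 2) (ZMod (p^(e+n)))) 0 0 - 1) = 0 := by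
      rw [map_sub, _root_.map_one, hent 0 0, Matrix.one_apply_eq, sub_self]
    have h11 : (ZMod.castHom (pow_dvd_pow p hek) (ZMod (p^e)))
        ((g : Matrix (Fin 2) (Fin 2) (ZMod (p^(e+n)))) 1 1 - 1) = 0 := by
      rw [map_sub, _root_.map_one, hent 1 1, Matrix.one_apply_eq, sub_self]
    have h01 : (ZMod.castHom (pow_dvd_pow p hek) (ZMod (p^e)))
        ((g : Matrix (Fin 2) (Fin 2) (ZMod (p^(e+n)))) 0 1) = 0 := by
      rw [hent 0 1, Matrix.one_apply_ne (by decide)]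
    have h10 : (ZMod.castHom (pow_dvd_pow p hek) (ZMod (p^e)))
        ((g : Matrix (Fin 2) (Fin 2) (ZMod (p^(e+n)))) 1 0) = 0 := by
      rw [hent 1 0, Matrix.one_apply_ne (by decide)]
    have hdetr : ((g : Matrix (Fin 2) (Fin 2) (ZMod (p^(e+n)))) 0 0 - 1) *
        ((g : Matrix (Fin 2) (Fin 2) (ZMod (p^(e+n)))) 1 1 - 1) -
        ((g : Matrix (Fin 2) (Fin 2) (ZMod (p^(e+n)))) 0 1 *
         (g : Matrix (Fin 2) (Fin 2) (ZMod (p^(e+n)))) 1 0) = (r : ZMod (p^(e+n))) := by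
      rw [Matrix.det_fin_two, Matrix.trace_fin_two] at hg2
      linear_combination hg2
    exact ⟨hdvd0 _ h00, hdvd0 _ h11, hdvd0 _ h01, hdvd0 _ h10, hdetr⟩
  -- ψ and its properties
  have hvlt : ∀ x : ZMod (p^(e+n)), p^e ∣ x.val → x.val / p^e < p^n := by
    intro x hx
    rw [Nat.div_lt_iff_lt_mul hpe]
    calc x.val < p^(e+n) := ZMod.val_lt x
    _ = p^n * p^e := by rw [pow_add]; ring
  have hpsival : ∀ x : ZMod (p^(e+n)), p^e ∣ x.val →
      (((x.val / p^e : ℕ) : ZMod (p^n))).val = x.val / p^e := by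
    intro x hx
    rw [ZMod.val_natCast, Nat.mod_eq_of_lt (hvlt x hx)]
  have hFmul : ∀ x w : ZMod (p^(e+n)), p^e ∣ x.val → p^e ∣ w.val →
      ((p^e * (((x.val / p^e : ℕ) : ZMod (p^n))).val *
        (p^e * (((w.val / p^e : ℕ) : ZMod (p^n))).val) : ℕ) : ZMod (p^(e+n))) = x * w := by
    intro x w hx hw
    rw [hpsival x hx, hpsival w hw, Nat.mul_div_cancel' hx, Nat.mul_div_cancel' hw]
    push_cast [ZMod.natCast_zmod_val]
    rfl
  have hrec : ∀ x x' : ZMod (p^(e+n)), p^e ∣ x.val → p^e ∣ x'.val →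
      ((x.val / p^e : ℕ) : ZMod (p^n)) = ((x'.val / p^e : ℕ) : ZMod (p^n)) → x = x' := by
    intro x x' hx hx' h
    have h1 : x.val / p^e = x'.val / p^e := by
      have := congrArg ZMod.val h
      rwa [hpsival x hx, hpsival x' hx'] at this
    have h2 : x.val = x'.val := by
      rw [← Nat.mul_div_cancel' hx, ← Nat.mul_div_cancel' hx', h1]
    calc x = ((x.val : ℕ) : ZMod (p^(e+n))) := (ZMod.natCast_zmod_val x).symm
    _ = ((x'.val : ℕ) : ZMod (p^(e+n))) := by rw [h2]
    _ = x' := ZMod.natCast_zmod_val x'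
  -- the injection into pairs
  have hprop : ∀ x : {g' : GL (Fin 2) (ZMod (p ^ (e+n))) //
      Matrix.GeneralLinearGroup.map (ZMod.castHom (pow_dvd_pow p hek) (ZMod (p ^ e))) g' = 1 ∧
      Matrix.det (g' : Matrix (Fin 2) (Fin 2) (ZMod (p ^ (e+n)))) + 1
        - Matrix.trace (g' : Matrix (Fin 2) (Fin 2) (ZMod (p ^ (e+n)))) = (r : ZMod (p ^ (e+n)))},
      (fun v : ZMod (p^n) × ZMod (p^n) =>
        ((p^e * v.1.val * (p^e * v.2.val) : ℕ) : ZMod (p^(e+n))))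
        (((((x.1 : Matrix (Fin 2) (Fin 2) (ZMod (p^(e+n)))) 0 0 - 1).val / p^e : ℕ) : ZMod (p^n)),
         ((((x.1 : Matrix (Fin 2) (Fin 2) (ZMod (p^(e+n)))) 1 1 - 1).val / p^e : ℕ) : ZMod (p^n)))
      - (fun v : ZMod (p^n) × ZMod (p^n) =>
        ((p^e * v.1.val * (p^e * v.2.val) : ℕ) : ZMod (p^(e+n))))
        (((((x.1 : Matrix (Fin 2) (Fin 2) (ZMod (p^(e+n)))) 0 1).val / p^e : ℕ) : ZMod (p^n)),
         ((((x.1 : Matrix (Fin 2) (Fin 2) (ZMod (p^(e+n)))) 1 0).val / p^e : ℕ) : ZMod (p^n)))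
      = (r : ZMod (p^(e+n))) := by
    intro x
    obtain ⟨d1, d2, d3, d4, hdet⟩ := hfacts x
    simp only
    rw [hFmul _ _ d1 d2, hFmul _ _ d3 d4]
    exact hdet
  have step1 : Nat.card {g' : GL (Fin 2) (ZMod (p ^ (e+n))) //
      Matrix.GeneralLinearGroup.map (ZMod.castHom (pow_dvd_pow p hek) (ZMod (p ^ e))) g' = 1 ∧
      Matrix.det (g' : Matrix (Fin 2) (Fin 2) (ZMod (p ^ (e+n)))) + 1
        - Matrix.trace (g' : Matrix (Fin 2) (Fin 2) (ZMod (p ^ (e+n)))) = (r : ZMod (p ^ (e+n)))}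
      ≤ Nat.card {u : (ZMod (p^n) × ZMod (p^n)) × (ZMod (p^n) × ZMod (p^n)) //
        (fun v : ZMod (p^n) × ZMod (p^n) =>
          ((p^e * v.1.val * (p^e * v.2.val) : ℕ) : ZMod (p^(e+n)))) u.1
        - (fun v : ZMod (p^n) × ZMod (p^n) =>
          ((p^e * v.1.val * (p^e * v.2.val) : ℕ) : ZMod (p^(e+n)))) u.2
        = (r : ZMod (p^(e+n)))} := by
    apply Nat.card_le_card_of_injective (fun x =>
      ⟨((((((x.1 : Matrix (Fin 2) (Fin 2) (ZMod (p^(e+n)))) 0 0 - 1).val / p^e : ℕ) : ZMod (p^n)),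
         ((((x.1 : Matrix (Fin 2) (Fin 2) (ZMod (p^(e+n)))) 1 1 - 1).val / p^e : ℕ) : ZMod (p^n))),
        (((((x.1 : Matrix (Fin 2) (Fin 2) (ZMod (p^(e+n)))) 0 1).val / p^e : ℕ) : ZMod (p^n)),
         ((((x.1 : Matrix (Fin 2) (Fin 2) (ZMod (p^(e+n)))) 1 0).val / p^e : ℕ) : ZMod (p^n)))),
       hprop x⟩)
    intro x x' h
    obtain ⟨d1, d2, d3, d4, _⟩ := hfacts x
    obtain ⟨d1', d2', d3', d4', _⟩ := hfacts x'
    simp only [Subtype.mk.injEq, Prod.mk.injEq] at h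
    obtain ⟨⟨a1, a2⟩, a3, a4⟩ := h
    have e00 := hrec _ _ d1 d1' a1
    have e11 := hrec _ _ d2 d2' a2
    have e01 := hrec _ _ d3 d3' a3
    have e10 := hrec _ _ d4 d4' a4
    apply Subtype.ext
    apply Units.ext
    ext i j
    fin_cases i <;> fin_cases j
    · exact sub_left_injective e00
    · exact e01
    · exact e10
    · exact sub_left_injective e11
  refine le_trans step1 ?_
  rw [Nat.card_eq_fintype_card, Fintype.card_subtype]
  refine le_trans (Stmt11.cs (fun v : ZMod (p^n) × ZMod (p^n) =>
    ((p^e * v.1.val * (p^e * v.2.val) : ℕ) : ZMod (p^(e+n)))) (r : ZMod (p^(e+n)))) ?_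
  refine le_trans (Stmt11.level hp (Stmt11.key hp) e n) ?_
  have hrw : p ^ (3 * ((e+n) - e)) * p ^ (4*e+1) = p ^ (3*n + (4*e+1)) := by
    rw [← pow_add]; congr 1; omega
  rw [hrw]
  exact Nat.pow_le_pow_right hp.pos (by omega)
end

section
/- Let ℓ be a prime, k ≥ 1 an integer, and r an integer with r ≢ 0 (mod ℓ). Then |C_r(ℓ^k)| = ℓ^{3(k−1)}·|C_r(ℓ)|. -/
open Matrix

namespace Stmt12Aux

/-- The matrix version of `Cset`. -/
def Tset (n : ℕ) (r : ℤ) : Set (Matrix (Fin 2) (Fin 2) (ZMod n)) :=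
  {h | h.det = (r : ZMod n) ∧ IsUnit (h + 1).det}

lemma det_add_one {R : Type*} [CommRing R] (A : Matrix (Fin 2) (Fin 2) R) :
    (A + 1).det + 1 - Matrix.trace (A + 1) = A.det := by
  simp [Matrix.det_fin_two, Matrix.trace_fin_two, Matrix.add_apply, Matrix.one_apply]
  ring

lemma det_sub_one {R : Type*} [CommRing R] (A : Matrix (Fin 2) (Fin 2) R) :
    (A - 1).det = A.det + 1 - Matrix.trace A := by
  simp [Matrix.det_fin_two, Matrix.trace_fin_two, Matrix.sub_apply, Matrix.one_apply]
  ring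

/-- `Cset n r` is in bijection with `Tset n r` via `g ↦ g - 1`. -/
noncomputable def csetEquivT (n : ℕ) (r : ℤ) : Cset n r ≃ Tset n r where
  toFun g := ⟨(g.1 : Matrix (Fin 2) (Fin 2) (ZMod n)) - 1, by
    constructor
    · rw [det_sub_one]; exact g.2
    · rw [sub_add_cancel]
      exact (Matrix.isUnit_iff_isUnit_det _).mp g.1.isUnit⟩
  invFun h := ⟨((Matrix.isUnit_iff_isUnit_det _).mpr h.2.2).unit, by
    show Matrix.det _ + 1 - Matrix.trace _ = _
    rw [IsUnit.unit_spec, det_add_one]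
    exact h.2.1⟩
  left_inv g := by
    apply Subtype.ext; apply Units.ext
    simp only [IsUnit.unit_spec, sub_add_cancel]
  right_inv h := by
    apply Subtype.ext
    simp only [IsUnit.unit_spec, add_sub_cancel_right]

variable {ℓ k : ℕ}

/-- Units lift along `ZMod (ℓ^k) → ZMod ℓ`. -/
lemma unit_lift (hℓ : ℓ.Prime) (hk : 1 ≤ k) {x : ZMod (ℓ ^ k)}
    (h : IsUnit (ZMod.castHom (dvd_pow_self ℓ (Nat.one_le_iff_ne_zero.mp hk)) (ZMod ℓ) x)) :
    IsUnit x := by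
  haveI : NeZero (ℓ ^ k) := ⟨pow_ne_zero k hℓ.pos.ne'⟩
  have hx : ((x.val : ℕ) : ZMod ℓ)
      = ZMod.castHom (dvd_pow_self ℓ (Nat.one_le_iff_ne_zero.mp hk)) (ZMod ℓ) x := by
    rw [ZMod.castHom_apply, ZMod.natCast_val]
  rw [← hx, ZMod.isUnit_iff_coprime] at h
  have h2 : IsUnit ((x.val : ℕ) : ZMod (ℓ ^ k)) := by
    rw [ZMod.isUnit_iff_coprime]
    exact (Nat.coprime_pow_right_iff hk _ _).mpr h
  rwa [ZMod.natCast_zmod_val] at h2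

/-- Each fiber of `ZMod (ℓ^k) → ZMod ℓ` has `ℓ^(k-1)` elements. -/
lemma card_fiber (hℓ : ℓ.Prime) (hk : 1 ≤ k) (t : ZMod ℓ) :
    Nat.card {x : ZMod (ℓ ^ k) //
      ZMod.castHom (dvd_pow_self ℓ (Nat.one_le_iff_ne_zero.mp hk)) (ZMod ℓ) x = t} = ℓ ^ (k - 1) := by
  haveI : NeZero ℓ := ⟨hℓ.pos.ne'⟩
  haveI : NeZero (ℓ ^ k) := ⟨pow_ne_zero k hℓ.pos.ne'⟩
  set π := ZMod.castHom (dvd_pow_self ℓ (Nat.one_le_iff_ne_zero.mp hk)) (ZMod ℓ) with hπ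
  have hσ : ∀ s : ZMod ℓ, π ((s.val : ℕ) : ZMod (ℓ ^ k)) = s := by
    intro s
    rw [map_natCast, ZMod.natCast_zmod_val]
  -- translate fiber over `t` to fiber over `0`
  have e0 : {x : ZMod (ℓ ^ k) // π x = t} ≃ {x : ZMod (ℓ ^ k) // π x = 0} :=
    { toFun := fun x => ⟨x.1 - ((t.val : ℕ) : ZMod (ℓ ^ k)), by
        rw [_root_.map_sub, x.2, hσ, sub_self]⟩
      invFun := fun x => ⟨x.1 + ((t.val : ℕ) : ZMod (ℓ ^ k)), by
        rw [_root_.map_add, x.2, hσ, zero_add]⟩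
      left_inv := fun x => by apply Subtype.ext; simp
      right_inv := fun x => by apply Subtype.ext; simp }
  -- `ZMod (ℓ^k) ≃ ZMod ℓ × fiber 0`
  have e1 : ZMod (ℓ ^ k) ≃ ZMod ℓ × {x : ZMod (ℓ ^ k) // π x = 0} :=
    { toFun := fun x => (π x, ⟨x - (((π x).val : ℕ) : ZMod (ℓ ^ k)), by
        rw [_root_.map_sub, hσ, sub_self]⟩)
      invFun := fun p => (((p.1.val : ℕ) : ZMod (ℓ ^ k))) + p.2.1
      left_inv := fun x => by simp
      right_inv := fun p => by
        have h1 : π ((((p.1.val : ℕ) : ZMod (ℓ ^ k))) + p.2.1) = p.1 := by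
          rw [_root_.map_add, hσ, p.2.2, add_zero]
        refine Prod.ext h1 (Subtype.ext ?_)
        simp only [h1]
        ring }
  have hcard : (ℓ : ℕ) ^ k = ℓ * Nat.card {x : ZMod (ℓ ^ k) // π x = 0} := by
    calc (ℓ : ℕ) ^ k = Nat.card (ZMod (ℓ ^ k)) := (Nat.card_zmod _).symm
    _ = Nat.card (ZMod ℓ × {x : ZMod (ℓ ^ k) // π x = 0}) := Nat.card_congr e1
    _ = ℓ * Nat.card {x : ZMod (ℓ ^ k) // π x = 0} := by rw [Nat.card_prod, Nat.card_zmod]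
  have hpow : (ℓ : ℕ) ^ k = ℓ * ℓ ^ (k - 1) := by
    conv_lhs => rw [show k = 1 + (k - 1) by omega]
    rw [pow_add, pow_one]
  rw [Nat.card_congr e0]
  exact Nat.eq_of_mul_eq_mul_left hℓ.pos (by rw [← hcard, hpow])


/-- Key counting: the fiber over `y ∈ Tset ℓ r` of the reduction map has `ℓ^(3(k-1))` elements. -/
lemma fiber_card (hℓ : ℓ.Prime) (hk : 1 ≤ k) (r : ℤ) (hr : (r : ZMod ℓ) ≠ 0)
    (y : Matrix (Fin 2) (Fin 2) (ZMod ℓ)) (hy : y ∈ Tset ℓ r) :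
    Nat.card {A : Matrix (Fin 2) (Fin 2) (ZMod (ℓ ^ k)) //
      (ZMod.castHom (dvd_pow_self ℓ (Nat.one_le_iff_ne_zero.mp hk)) (ZMod ℓ)).mapMatrix A = y
        ∧ A.det = (r : ZMod (ℓ ^ k))} = ℓ ^ (3 * (k - 1)) := by
  haveI : NeZero ℓ := ⟨hℓ.pos.ne'⟩
  haveI : NeZero (ℓ ^ k) := ⟨pow_ne_zero k hℓ.pos.ne'⟩
  haveI := Fact.mk hℓ
  set π := ZMod.castHom (dvd_pow_self ℓ (Nat.one_le_iff_ne_zero.mp hk)) (ZMod ℓ) with hπdef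
  -- the chosen lift of `y`
  set h₀ : Matrix (Fin 2) (Fin 2) (ZMod (ℓ ^ k)) :=
    y.map (fun s => ((s.val : ℕ) : ZMod (ℓ ^ k))) with hh₀
  have hμh₀ : π.mapMatrix h₀ = y := by
    ext i j
    simp [RingHom.mapMatrix_apply, Matrix.map_apply, hh₀, map_natCast, ZMod.natCast_zmod_val]
  have hπdet : π h₀.det = (r : ZMod ℓ) := by
    rw [RingHom.map_det, hμh₀]; exact hy.1
  have hu : IsUnit h₀.det :=
    unit_lift hℓ hk (by rw [hπdet]; exact isUnit_iff_ne_zero.mpr hr)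
  set c : ZMod (ℓ ^ k) := Ring.inverse h₀.det * (r : ZMod (ℓ ^ k)) with hc
  have hπc : π c = 1 := by
    have h1 : π (Ring.inverse h₀.det) * π h₀.det = 1 := by
      rw [← _root_.map_mul, Ring.inverse_mul_cancel _ hu, _root_.map_one]
    rw [hc, _root_.map_mul, map_intCast, ← hπdet]
    exact h1
  -- multiplication by h₀⁻¹
  have e2 : {A : Matrix (Fin 2) (Fin 2) (ZMod (ℓ ^ k)) //
        π.mapMatrix A = y ∧ A.det = (r : ZMod (ℓ ^ k))}
      ≃ {B : Matrix (Fin 2) (Fin 2) (ZMod (ℓ ^ k)) //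
        π.mapMatrix B = 1 ∧ B.det = c} :=
    { toFun := fun A => ⟨h₀⁻¹ * A.1, by
        constructor
        · rw [_root_.map_mul, A.2.1, ← hμh₀, ← _root_.map_mul, Matrix.nonsing_inv_mul _ hu, _root_.map_one]
        · rw [Matrix.det_mul, Matrix.det_nonsing_inv, A.2.2]⟩
      invFun := fun B => ⟨h₀ * B.1, by
        constructor
        · rw [_root_.map_mul, B.2.1, mul_one, hμh₀]
        · rw [Matrix.det_mul, B.2.2, hc, ← mul_assoc, Ring.mul_inverse_cancel _ hu, one_mul]⟩
      left_inv := fun A => by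
        apply Subtype.ext
        show h₀ * (h₀⁻¹ * A.1) = A.1
        rw [← mul_assoc, Matrix.mul_nonsing_inv _ hu, one_mul]
      right_inv := fun B => by
        apply Subtype.ext
        show h₀⁻¹ * (h₀ * B.1) = B.1
        rw [← mul_assoc, Matrix.nonsing_inv_mul _ hu, one_mul] }
  -- parametrize the congruence-1 fiber by three free entries
  have e3 : {B : Matrix (Fin 2) (Fin 2) (ZMod (ℓ ^ k)) //
        π.mapMatrix B = 1 ∧ B.det = c}
      ≃ {x : ZMod (ℓ ^ k) // π x = 1} ×
        {x : ZMod (ℓ ^ k) // π x = 0} × {x : ZMod (ℓ ^ k) // π x = 0} :=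
    { toFun := fun B => by
        refine ⟨⟨B.1 1 1, ?_⟩, ⟨B.1 0 1, ?_⟩, ⟨B.1 1 0, ?_⟩⟩
        · have := congrFun (congrFun (congrArg (fun M => M) B.2.1) 1) 1
          simpa [RingHom.mapMatrix_apply, Matrix.map_apply, Matrix.one_apply] using this
        · have := congrFun (congrFun (congrArg (fun M => M) B.2.1) 0) 1
          simpa [RingHom.mapMatrix_apply, Matrix.map_apply, Matrix.one_apply] using this
        · have := congrFun (congrFun (congrArg (fun M => M) B.2.1) 1) 0
          simpa [RingHom.mapMatrix_apply, Matrix.map_apply, Matrix.one_apply] using this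
      invFun := fun p => by
        obtain ⟨⟨d, hd⟩, ⟨b, hb⟩, ⟨c', hc'⟩⟩ := p
        have hdu : IsUnit d := unit_lift hℓ hk (by rw [hd]; exact isUnit_one)
        have hπinv : π (Ring.inverse d) = 1 := by
          have := congrArg π (Ring.inverse_mul_cancel d hdu)
          rwa [_root_.map_mul, _root_.map_one, hd, mul_one] at this
        refine ⟨!![(c + b * c') * Ring.inverse d, b; c', d], ?_, ?_⟩
        · ext i j
          fin_cases i <;> fin_cases j <;>
            simp [RingHom.mapMatrix_apply, Matrix.map_apply, Matrix.one_apply,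
              _root_.map_mul, _root_.map_add, hπc, hb, hc', hd, hπinv]
        · rw [Matrix.det_fin_two_of, mul_assoc, Ring.inverse_mul_cancel _ hdu, mul_one]
          ring
      left_inv := fun B => by
        apply Subtype.ext
        obtain ⟨B, hB1, hB2⟩ := B
        have hd1 : π (B 1 1) = 1 := by
          have := congrFun (congrFun (congrArg (fun M => M) hB1) 1) 1
          simpa [RingHom.mapMatrix_apply, Matrix.map_apply, Matrix.one_apply] using this
        have hdu : IsUnit (B 1 1) := unit_lift hℓ hk (by rw [hd1]; exact isUnit_one)
        have hdet : B 0 0 * B 1 1 - B 0 1 * B 1 0 = c := by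
          rw [← Matrix.det_fin_two]; exact hB2
        have ha : (c + B 0 1 * B 1 0) * Ring.inverse (B 1 1) = B 0 0 := by
          rw [← hdet]
          have : B 0 0 * B 1 1 - B 0 1 * B 1 0 + B 0 1 * B 1 0 = B 0 0 * B 1 1 := by ring
          rw [this, mul_assoc, Ring.mul_inverse_cancel _ hdu, mul_one]
        show (!![(c + B 0 1 * B 1 0) * Ring.inverse (B 1 1), B 0 1; B 1 0, B 1 1] : _) = B
        ext i j
        fin_cases i <;> fin_cases j <;> simp [ha]
      right_inv := fun p => by
        obtain ⟨⟨d, hd⟩, ⟨b, hb⟩, ⟨c', hc'⟩⟩ := p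
        refine Prod.ext (Subtype.ext ?_) (Prod.ext (Subtype.ext ?_) (Subtype.ext ?_)) <;> simp }
  rw [Nat.card_congr (e2.trans e3), Nat.card_prod, Nat.card_prod,
    card_fiber hℓ hk 1, card_fiber hℓ hk 0, ← pow_add, ← pow_add]
  congr 1
  omega

end Stmt12Aux

/-- For a prime `ℓ`, `k ≥ 1` and an integer `r ≢ 0 (mod ℓ)`:
`|C_r(ℓ^k)| = ℓ^{3(k-1)} · |C_r(ℓ)|`. -/
theorem stmt12 (ℓ k : ℕ) (hℓ : ℓ.Prime) (hk : 1 ≤ k) (r : ℤ) (hr : (r : ZMod ℓ) ≠ 0) :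
    Nat.card (Cset (ℓ ^ k) r) = ℓ ^ (3 * (k - 1)) * Nat.card (Cset ℓ r) := by
  classical
  haveI : NeZero ℓ := ⟨hℓ.pos.ne'⟩
  haveI : NeZero (ℓ ^ k) := ⟨pow_ne_zero k hℓ.pos.ne'⟩
  rw [Nat.card_congr (Stmt12Aux.csetEquivT (ℓ ^ k) r),
    Nat.card_congr (Stmt12Aux.csetEquivT ℓ r)]
  set π := ZMod.castHom (dvd_pow_self ℓ (Nat.one_le_iff_ne_zero.mp hk)) (ZMod ℓ) with hπdef
  have hΨmem : ∀ x : Stmt12Aux.Tset (ℓ ^ k) r, π.mapMatrix x.1 ∈ Stmt12Aux.Tset ℓ r := by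
    intro x
    constructor
    · rw [← RingHom.map_det, x.2.1, map_intCast]
    · have : (π.mapMatrix x.1 + 1).det = π ((x.1 + 1).det) := by
        rw [RingHom.map_det, _root_.map_add, _root_.map_one]
      rw [this]
      exact x.2.2.map π
  set Ψ : Stmt12Aux.Tset (ℓ ^ k) r → Stmt12Aux.Tset ℓ r :=
    fun x => ⟨π.mapMatrix x.1, hΨmem x⟩ with hΨdef
  have hfib : ∀ y : Stmt12Aux.Tset ℓ r,
      Nat.card {x : Stmt12Aux.Tset (ℓ ^ k) r // Ψ x = y} = ℓ ^ (3 * (k - 1)) := by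
    intro y
    have e1 : {x : Stmt12Aux.Tset (ℓ ^ k) r // Ψ x = y}
        ≃ {A : Matrix (Fin 2) (Fin 2) (ZMod (ℓ ^ k)) //
            A ∈ Stmt12Aux.Tset (ℓ ^ k) r ∧ π.mapMatrix A = y.1} :=
      (Equiv.subtypeEquivRight (fun x => Subtype.ext_iff)).trans
        (Equiv.subtypeSubtypeEquivSubtypeInter
          (· ∈ Stmt12Aux.Tset (ℓ ^ k) r) (fun A => π.mapMatrix A = y.1))
    have e2 : {A : Matrix (Fin 2) (Fin 2) (ZMod (ℓ ^ k)) //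
            A ∈ Stmt12Aux.Tset (ℓ ^ k) r ∧ π.mapMatrix A = y.1}
        ≃ {A : Matrix (Fin 2) (Fin 2) (ZMod (ℓ ^ k)) //
            π.mapMatrix A = y.1 ∧ A.det = (r : ZMod (ℓ ^ k))} := by
      refine Equiv.subtypeEquivRight (fun A => ?_)
      constructor
      · exact fun h => ⟨h.2, h.1.1⟩
      · rintro ⟨h1, h2⟩
        refine ⟨⟨h2, ?_⟩, h1⟩
        refine Stmt12Aux.unit_lift hℓ hk ?_
        have : π ((A + 1).det) = (y.1 + 1).det := by
          rw [RingHom.map_det, _root_.map_add, _root_.map_one, h1]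
        rw [this]
        exact y.2.2
    rw [Nat.card_congr (e1.trans e2)]
    exact Stmt12Aux.fiber_card hℓ hk r hr y.1 y.2
  rw [Nat.card_congr (Equiv.sigmaFiberEquiv Ψ).symm]
  haveI : Fintype (Stmt12Aux.Tset ℓ r) := Fintype.ofFinite _
  haveI : ∀ y : Stmt12Aux.Tset ℓ r, Fintype {x // Ψ x = y} := fun y => Fintype.ofFinite _
  rw [Nat.card_eq_fintype_card, Fintype.card_sigma]
  have hsum : ∀ y : Stmt12Aux.Tset ℓ r,
      Fintype.card {x // Ψ x = y} = ℓ ^ (3 * (k - 1)) := by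
    intro y
    rw [← Nat.card_eq_fintype_card]
    exact hfib y
  rw [Finset.sum_congr rfl (fun y _ => hsum y), Finset.sum_const, Finset.card_univ,
    smul_eq_mul, ← Nat.card_eq_fintype_card, mul_comm]
end

section
/- Define V(z) := ∏_{p < z} (1 − (p² − 2)/((p−1)(p²−1))), the product over primes p < z. There exists a constant A > 0 such that for all real numbers 2 ≤ z₁ < z₂ one has |V(z₁)/V(z₂) − (log z₂)/(log z₁)| ≤ A·(log z₂)/(log z₁)²; in other words V(z₁)/V(z₂) = (log z₂/log z₁)·(1 + O(1/log z₁)) uniformly in 2 ≤ z₁ < z₂. -/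
open Finset

/-- `log(1+1/x) ≤ 1/x` and `≥ 1/(x+1)` helpers -/
lemma log_succ_sub_log_le (x : ℝ) (hx : 1 ≤ x) :
    Real.log (x + 1) - Real.log x ≤ 1 / x := by
  have hx0 : (0:ℝ) < x := by linarith
  rw [← Real.log_div (by linarith) (ne_of_gt hx0)]
  have := Real.log_le_sub_one_of_pos (x := (x+1)/x) (by positivity)
  have h : (x+1)/x - 1 = 1/x := by field_simp; ring
  linarith [this, h ▸ this]

lemma one_div_succ_le_log_sub (x : ℝ) (hx : 1 ≤ x) :
    1 / (x + 1) ≤ Real.log (x + 1) - Real.log x := by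
  have hx0 : (0:ℝ) < x := by linarith
  rw [← Real.log_div (by linarith) (ne_of_gt hx0)]
  have := Real.log_le_sub_one_of_pos (x := x/(x+1)) (by positivity)
  have hlog : Real.log (x/(x+1)) = - Real.log ((x+1)/x) := by
    rw [← Real.log_inv]; congr 1; field_simp
  have h : x/(x+1) - 1 = -(1/(x+1)) := by field_simp; ring
  rw [hlog, h] at this; linarith

lemma log_factorial_lower (M : ℕ) (hM : 1 ≤ M) :
    (M:ℝ) * Real.log M - M + 1 ≤ Real.log (Nat.factorial M) := by
  induction M, hM using Nat.le_induction with
  | base => simp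
  | succ n hn ih =>
    have hn1 : (1:ℝ) ≤ (n:ℝ) := by exact_mod_cast hn
    have hfac : (Nat.factorial (n+1) : ℝ) = ((n:ℝ)+1) * (Nat.factorial n : ℝ) := by
      push_cast [Nat.factorial_succ]; ring
    have hlog : Real.log (Nat.factorial (n+1) : ℝ) = Real.log ((n:ℝ)+1) + Real.log (Nat.factorial n : ℝ) := by
      rw [hfac, Real.log_mul (by positivity) (by positivity)]
    have key : (n:ℝ) * (Real.log ((n:ℝ)+1) - Real.log n) ≤ 1 := by
      have := log_succ_sub_log_le (n:ℝ) hn1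
      calc (n:ℝ) * (Real.log ((n:ℝ)+1) - Real.log n) ≤ (n:ℝ) * (1/n) := by
            apply mul_le_mul_of_nonneg_left this (by positivity)
        _ = 1 := by field_simp
    push_cast [hlog]
    push_cast at ih
    nlinarith [ih]

lemma log_factorial_upper (M : ℕ) (hM : 1 ≤ M) :
    Real.log (Nat.factorial M) ≤ ((M:ℝ) + 1) * Real.log M - M + 1 := by
  induction M, hM using Nat.le_induction with
  | base => simp
  | succ n hn ih =>
    have hn1 : (1:ℝ) ≤ (n:ℝ) := by exact_mod_cast hn
    have hfac : (Nat.factorial (n+1) : ℝ) = ((n:ℝ)+1) * (Nat.factorial n : ℝ) := by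
      push_cast [Nat.factorial_succ]; ring
    have hlog : Real.log (Nat.factorial (n+1) : ℝ) = Real.log ((n:ℝ)+1) + Real.log (Nat.factorial n : ℝ) := by
      rw [hfac, Real.log_mul (by positivity) (by positivity)]
    have key : 1 ≤ ((n:ℝ)+1) * (Real.log ((n:ℝ)+1) - Real.log n) := by
      have := one_div_succ_le_log_sub (n:ℝ) hn1
      calc (1:ℝ) = ((n:ℝ)+1) * (1/((n:ℝ)+1)) := by field_simp
        _ ≤ ((n:ℝ)+1) * (Real.log ((n:ℝ)+1) - Real.log n) := by
            apply mul_le_mul_of_nonneg_left this (by positivity)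
    push_cast [hlog]
    push_cast at ih
    nlinarith [ih]

lemma abs_log_factorial (M : ℕ) (hM : 1 ≤ M) :
    |Real.log (Nat.factorial M) - ((M:ℝ) * Real.log M - M)| ≤ Real.log M + 1 := by
  have h1 := log_factorial_lower M hM
  have h2 := log_factorial_upper M hM
  have hlM : 0 ≤ Real.log M := Real.log_natCast_nonneg M
  rw [abs_le]; constructor <;> nlinarith

lemma theta_le (M : ℕ) :
    ∑ p ∈ (M+1).primesBelow, Real.log p ≤ (M:ℝ) * Real.log 4 := by
  have hP : (M+1).primesBelow = {p ∈ range (M+1) | p.Prime} := rfl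
  have h1 : ∑ p ∈ (M+1).primesBelow, Real.log p
      = Real.log (primorial M : ℝ) := by
    rw [primorial]
    push_cast
    rw [Real.log_prod]
    · rfl
    · intro p hp
      simp only [mem_filter, mem_range] at hp
      exact_mod_cast hp.2.pos.ne'
  rw [h1]
  calc Real.log (primorial M : ℝ) ≤ Real.log ((4:ℝ)^M) := by
        apply Real.log_le_log (by exact_mod_cast (primorial_pos M))
        exact_mod_cast primorial_le_4_pow M
    _ = (M:ℝ) * Real.log 4 := by rw [Real.log_pow]

lemma sum_log_div_sq_aux (K : ℕ) (hK : 1 ≤ K) :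
    ∑ k ∈ Icc 1 K, Real.log k / (k:ℝ)^2 ≤ 2 - (Real.log K + 2)/K := by
  induction K, hK using Nat.le_induction with
  | base => simp
  | succ n hn ih =>
    rw [Finset.sum_Icc_succ_top (by omega)]
    have hn1 : (1:ℝ) ≤ (n:ℝ) := by exact_mod_cast hn
    have hn0 : (0:ℝ) < (n:ℝ) := by linarith
    have h1 : Real.log ((n:ℝ)+1) - Real.log n ≤ 1/n := log_succ_sub_log_le _ hn1
    have hlg : 0 ≤ Real.log (n:ℝ) := Real.log_natCast_nonneg n
    have key : Real.log ((n:ℝ)+1) / ((n:ℝ)+1)^2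
        ≤ (Real.log n + 2)/n - (Real.log ((n:ℝ)+1) + 2)/((n:ℝ)+1) := by
      have hb : Real.log ((n:ℝ)+1) ≤ Real.log n + 1/n := by linarith
      have hkey : (n:ℝ) * (Real.log ((n:ℝ)+1) - Real.log n) ≤ 1 := by
        calc (n:ℝ) * (Real.log ((n:ℝ)+1) - Real.log n) ≤ (n:ℝ) * (1/n) :=
              mul_le_mul_of_nonneg_left h1 (le_of_lt hn0)
          _ = 1 := by field_simp
      rw [div_sub_div _ _ (ne_of_gt hn0) (by positivity), div_le_div_iff₀ (by positivity) (by positivity)]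
      nlinarith [sq_nonneg ((n:ℝ)+1), hn0]
    push_cast
    push_cast at ih key
    linarith

lemma sum_log_div_sq (K : ℕ) : ∑ k ∈ Icc 1 K, Real.log k / (k:ℝ)^2 ≤ 2 := by
  rcases Nat.eq_zero_or_pos K with h | h
  · simp [h]
  · have := sum_log_div_sq_aux K h
    have h2 : 0 ≤ (Real.log K + 2)/(K:ℝ) := by
      have : 0 ≤ Real.log (K:ℝ) := Real.log_natCast_nonneg K
      positivity
    linarith
lemma geom_tail_le {x : ℝ} (hx0 : 0 < x) (hx : x ≤ 1/2) (b : ℕ) :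
    ∑ i ∈ Ico 1 b, x^i ≤ x + 2*x^2 := by
  rcases le_or_gt b 1 with hb | hb
  · rw [Finset.Ico_eq_empty (by omega)]
    simp; nlinarith
  · rw [Finset.sum_eq_sum_Ico_succ_bot hb]
    have hx1 : x ≠ 1 := by linarith
    rw [geom_sum_Ico hx1 hb, pow_one]
    have hxb : 0 ≤ x^b := by positivity
    have h2 : (x^b - x^(Nat.succ 1))/(x-1) ≤ 2*x^2 := by
      rw [div_le_iff_of_neg (by linarith)]
      have : x^(Nat.succ 1) = x^2 := by norm_num
      nlinarith
    linarith

lemma nu_bounds (M p : ℕ) (hp : p.Prime) (hpM : p ≤ M) :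
    (M:ℝ)/p - 1 ≤ ((Nat.factorial M).factorization p : ℝ) ∧
    ((Nat.factorial M).factorization p : ℝ) ≤ (M:ℝ)/p + 2*M/(p:ℝ)^2 := by
  haveI := Fact.mk hp
  set b := Nat.log p M + 1 with hb
  have hnu : (Nat.factorial M).factorization p = ∑ i ∈ Ico 1 b, M / p^i := by
    rw [Nat.factorization_def _ hp, padicValNat_factorial (p:=p) (n:=M) (b:=b) (by omega)]
  have hp0 : (0:ℝ) < (p:ℝ) := by exact_mod_cast hp.pos
  have hp2 : (2:ℝ) ≤ (p:ℝ) := by exact_mod_cast hp.two_le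
  constructor
  · -- lower bound
    have hb2 : 2 ≤ b := by
      have := Nat.log_pos hp.one_lt hpM; omega
    have h1 : M / p ≤ ∑ i ∈ Ico 1 b, M / p^i := by
      have : 1 ∈ Ico 1 b := by simp; omega
      calc M / p = M / p^1 := by rw [pow_one]
        _ ≤ _ := Finset.single_le_sum (f := fun i => M / p^i) (fun i _ => Nat.zero_le _) this
    have h2 : (M:ℝ)/p - 1 ≤ ((M/p : ℕ) : ℝ) := by
      have hdm := Nat.div_add_mod M p
      have hmod := Nat.mod_lt M hp.pos
      have : (M:ℝ) = (p:ℝ) * ((M/p : ℕ):ℝ) + ((M % p : ℕ):ℝ) := by exact_mod_cast hdm.symm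
      have hmod' : ((M % p : ℕ):ℝ) < (p:ℝ) := by exact_mod_cast hmod
      rw [div_sub_one (ne_of_gt hp0), div_le_iff₀ hp0]
      nlinarith
    calc (M:ℝ)/p - 1 ≤ ((M/p : ℕ) : ℝ) := h2
      _ ≤ ((∑ i ∈ Ico 1 b, M / p^i : ℕ) : ℝ) := by exact_mod_cast h1
      _ = _ := by rw [hnu]
  · -- upper bound
    rw [hnu]
    push_cast
    have hc : ∀ i ∈ Ico 1 b, ((M / p^i : ℕ) : ℝ) ≤ (M:ℝ) * (1/(p:ℝ))^i := by
      intro i _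
      calc ((M / p^i : ℕ) : ℝ) ≤ (M:ℝ) / ((p^i : ℕ):ℝ) := Nat.cast_div_le
        _ = (M:ℝ) * (1/(p:ℝ))^i := by push_cast; rw [div_pow]; ring_nf
    calc (∑ i ∈ Ico 1 b, ((M / p^i : ℕ):ℝ)) ≤ ∑ i ∈ Ico 1 b, (M:ℝ) * (1/(p:ℝ))^i :=
          Finset.sum_le_sum hc
      _ = (M:ℝ) * ∑ i ∈ Ico 1 b, (1/(p:ℝ))^i := by rw [Finset.mul_sum]
      _ ≤ (M:ℝ) * (1/(p:ℝ) + 2*(1/(p:ℝ))^2) := by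
          apply mul_le_mul_of_nonneg_left _ (Nat.cast_nonneg M)
          apply geom_tail_le (by positivity)
          rw [div_le_div_iff₀ hp0 (by norm_num)]; linarith
      _ = (M:ℝ)/p + 2*M/(p:ℝ)^2 := by field_simp
lemma log_eq_sum_factorization (n : ℕ) (hn : n ≠ 0) :
    Real.log n = ∑ p ∈ n.primeFactors, ((n.factorization p : ℝ)) * Real.log p := by
  conv_lhs => rw [← Nat.factorization_prod_pow_eq_self hn]
  rw [Finsupp.prod, Nat.support_factorization]
  push_cast
  rw [Real.log_prod]
  · exact Finset.sum_congr rfl fun p hp => by rw [Real.log_pow]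
  · intro p hp
    have := (Nat.prime_of_mem_primeFactors hp).pos
    have h0 : (0:ℝ) < (p:ℝ) := by exact_mod_cast this
    positivity

lemma primeFactors_factorial (M : ℕ) (hM : 1 ≤ M) :
    (Nat.factorial M).primeFactors = (M+1).primesBelow := by
  ext p
  simp only [Nat.mem_primeFactors, Nat.mem_primesBelow]
  constructor
  · rintro ⟨hp, hdvd, -⟩
    have := (hp.dvd_factorial).mp hdvd
    exact ⟨by omega, hp⟩
  · rintro ⟨hlt, hp⟩
    exact ⟨hp, hp.dvd_factorial.mpr (by omega), Nat.factorial_ne_zero M⟩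

lemma mertens1 (N : ℕ) (hN : 2 ≤ N) :
    |(∑ p ∈ N.primesBelow, Real.log p / p) - Real.log N| ≤ 10 := by
  obtain ⟨M, rfl⟩ : ∃ M, N = M + 1 := ⟨N - 1, by omega⟩
  have hM : 1 ≤ M := by omega
  have hM0 : (0:ℝ) < (M:ℝ) := by exact_mod_cast hM
  have h0 : Real.log (Nat.factorial M)
      = ∑ p ∈ (M+1).primesBelow, ((Nat.factorial M).factorization p : ℝ) * Real.log p := by
    rw [log_eq_sum_factorization _ (Nat.factorial_ne_zero M), primeFactors_factorial M hM]
  set S := ∑ p ∈ (M+1).primesBelow, Real.log p / p with hS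
  -- pointwise bounds
  have hpt : ∀ p ∈ (M+1).primesBelow,
      |((Nat.factorial M).factorization p : ℝ) * Real.log p - (M:ℝ) * (Real.log p / p)|
        ≤ Real.log p + 2*(M:ℝ)*(Real.log p / (p:ℝ)^2) := by
    intro p hp
    obtain ⟨hlt, hp'⟩ := Nat.mem_primesBelow.mp hp
    have hpM : p ≤ M := by omega
    obtain ⟨h1, h2⟩ := nu_bounds M p hp' hpM
    have hlogp : 0 ≤ Real.log p := Real.log_natCast_nonneg p
    have hp0 : (0:ℝ) < (p:ℝ) := by exact_mod_cast hp'.pos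
    have e1 := mul_le_mul_of_nonneg_right h1 hlogp
    have e2 := mul_le_mul_of_nonneg_right h2 hlogp
    rw [abs_le]
    constructor
    · have : ((M:ℝ)/p - 1) * Real.log p = (M:ℝ) * (Real.log p / p) - Real.log p := by ring
      rw [this] at e1
      nlinarith [mul_nonneg (mul_nonneg (by norm_num : (0:ℝ) ≤ 2) hM0.le)
        (div_nonneg hlogp (sq_nonneg (p:ℝ)))]
    · have : ((M:ℝ)/p + 2*M/(p:ℝ)^2) * Real.log p
          = (M:ℝ) * (Real.log p / p) + 2*(M:ℝ)*(Real.log p / (p:ℝ)^2) := by ring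
      rw [this] at e2
      linarith
  -- sum the bounds
  have hsum : |Real.log (Nat.factorial M) - (M:ℝ) * S|
      ≤ (M:ℝ) * Real.log 4 + 4 * M := by
    rw [h0, hS, Finset.mul_sum, ← Finset.sum_sub_distrib]
    calc |∑ p ∈ (M+1).primesBelow, (((Nat.factorial M).factorization p : ℝ) * Real.log p
            - (M:ℝ) * (Real.log p / p))|
        ≤ ∑ p ∈ (M+1).primesBelow, |((Nat.factorial M).factorization p : ℝ) * Real.log p
            - (M:ℝ) * (Real.log p / p)| := Finset.abs_sum_le_sum_abs _ _
      _ ≤ ∑ p ∈ (M+1).primesBelow, (Real.log p + 2*(M:ℝ)*(Real.log p / (p:ℝ)^2)) :=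
          Finset.sum_le_sum hpt
      _ = (∑ p ∈ (M+1).primesBelow, Real.log p)
            + 2*(M:ℝ) * ∑ p ∈ (M+1).primesBelow, Real.log p / (p:ℝ)^2 := by
          rw [Finset.sum_add_distrib, Finset.mul_sum]
      _ ≤ (M:ℝ) * Real.log 4 + 2*(M:ℝ) * 2 := by
          have hsub : (M+1).primesBelow ⊆ Icc 1 M := by
            intro p hp
            obtain ⟨hlt, hp'⟩ := Nat.mem_primesBelow.mp hp
            simp only [Finset.mem_Icc]
            exact ⟨hp'.pos, by omega⟩
          have h4 : ∑ p ∈ (M+1).primesBelow, Real.log p / (p:ℝ)^2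
              ≤ ∑ k ∈ Icc 1 M, Real.log k / (k:ℝ)^2 := by
            apply Finset.sum_le_sum_of_subset_of_nonneg hsub
            intro k _ _
            have := Real.log_natCast_nonneg k
            positivity
          have h5 := sum_log_div_sq M
          have := theta_le M
          nlinarith
      _ = (M:ℝ) * Real.log 4 + 4 * M := by ring
  have hA := abs_log_factorial M hM
  have hlog2 : Real.log 2 < 0.6931471808 := Real.log_two_lt_d9
  have hlog2' : (0:ℝ) < Real.log 2 := Real.log_pos (by norm_num)
  have hlog4 : Real.log 4 = 2 * Real.log 2 := by
    rw [show (4:ℝ) = 2^2 by norm_num, Real.log_pow]; push_cast; ring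
  have hlogM : Real.log M ≤ (M:ℝ) - 1 := Real.log_le_sub_one_of_pos hM0
  have hlogMnn : 0 ≤ Real.log M := Real.log_natCast_nonneg M
  have hstep : Real.log ((M:ℝ)+1) - Real.log M ≤ 1/M :=
    log_succ_sub_log_le _ (by exact_mod_cast hM)
  have hstep' : Real.log M ≤ Real.log ((M:ℝ)+1) :=
    Real.log_le_log (by positivity) (by linarith)
  have hM1 : (1:ℝ) ≤ (M:ℝ) := by exact_mod_cast hM
  have hinv : 1/(M:ℝ) ≤ 1 := by rw [div_le_one hM0]; exact hM1
  obtain ⟨a1, a2⟩ := abs_le.mp hA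
  obtain ⟨b1, b2⟩ := abs_le.mp hsum
  have hcast : ((M+1 : ℕ):ℝ) = (M:ℝ) + 1 := by push_cast; ring
  rw [hcast, abs_le]
  constructor
  · have key : (M:ℝ) * (S - Real.log ((M:ℝ)+1) + 10) ≥ 0 := by nlinarith
    nlinarith
  · have key : (M:ℝ) * (Real.log ((M:ℝ)+1) + 10 - S) ≥ 0 := by nlinarith
    nlinarith
noncomputable def mertC (k : ℕ) : ℝ := if k.Prime then Real.log k / k else 0
noncomputable def mertS (k : ℕ) : ℝ := ∑ p ∈ k.primesBelow, Real.log p / p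
noncomputable def mertR (k : ℕ) : ℝ := mertS k - Real.log k
noncomputable def gg (k : ℕ) : ℝ := (Real.log k)⁻¹
noncomputable def EE (k : ℕ) : ℝ :=
  (Real.log (k+1:ℕ) - Real.log k) * gg k
    - (Real.log (Real.log (k+1:ℕ)) - Real.log (Real.log k))
    + mertR (k+1) * (gg k - gg (k+1))

lemma mertS_succ (k : ℕ) : mertS (k+1) = mertS k + mertC k := by
  unfold mertS mertC
  rw [Nat.primesBelow_succ]
  split_ifs with h
  · rw [Finset.sum_insert (Nat.notMem_primesBelow k)]; ring
  · ring

lemma abel_identity (m : ℕ) : ∀ n, m ≤ n →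
    ∑ k ∈ Ico m n, mertC k * gg k
      = (Real.log (Real.log n) - Real.log (Real.log m))
        + mertR n * gg n - mertR m * gg m + ∑ k ∈ Ico m n, EE k := by
  intro n hn
  induction n, hn using Nat.le_induction with
  | base => simp
  | succ n hmn ih =>
    rw [Finset.sum_Ico_succ_top hmn, Finset.sum_Ico_succ_top hmn, ih]
    have hc : mertC n = (Real.log (n+1:ℕ) + mertR (n+1)) - (Real.log n + mertR n) := by
      have := mertS_succ n
      unfold mertR; linarith
    unfold EE
    linear_combination gg n * hc

lemma sum_g_telescope (m : ℕ) : ∀ n, m ≤ n →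
    ∑ k ∈ Ico m n, (gg k - gg (k+1)) = gg m - gg n := by
  intro n hn
  induction n, hn using Nat.le_induction with
  | base => simp
  | succ n hmn ih => rw [Finset.sum_Ico_succ_top hmn, ih]; ring

lemma log_pos_nat (k : ℕ) (hk : 2 ≤ k) : 0 < Real.log k :=
  Real.log_pos (by exact_mod_cast hk)

lemma gg_antitone (k : ℕ) (hk : 2 ≤ k) : gg (k+1) ≤ gg k := by
  unfold gg
  apply inv_anti₀ (log_pos_nat k hk)
  apply Real.log_le_log (by positivity)
  exact_mod_cast Nat.le_succ k

lemma EE_bound (k : ℕ) (hk : 2 ≤ k) : |EE k| ≤ (21/2) * (gg k - gg (k+1)) := by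
  have hk1 : (1:ℝ) ≤ (k:ℝ) := by exact_mod_cast (by omega : 1 ≤ k)
  have hLk : 0 < Real.log k := log_pos_nat k hk
  have hLk1 : 0 < Real.log (k+1:ℕ) := log_pos_nat (k+1) (by omega)
  have hcast : ((k+1:ℕ):ℝ) = (k:ℝ)+1 := by push_cast; ring
  set δ := Real.log (k+1:ℕ) - Real.log k with hδ
  have hδ0 : 0 ≤ δ := by
    rw [hδ, sub_nonneg]
    apply Real.log_le_log (by positivity)
    exact_mod_cast Nat.le_succ k
  have hδhalf : δ ≤ 1/2 := by
    rw [hδ, hcast]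
    calc Real.log ((k:ℝ)+1) - Real.log k ≤ 1/(k:ℝ) := log_succ_sub_log_le _ hk1
      _ ≤ 1/2 := by
        apply div_le_div_of_nonneg_left (by norm_num) (by norm_num)
        exact_mod_cast hk
  have hLk1' : 0 < Real.log ((k:ℝ)+1) := by rw [← hcast]; exact hLk1
  have hgdiff : gg k - gg (k+1) = δ * (gg k * gg (k+1)) := by
    unfold gg
    rw [hδ]
    push_cast
    field_simp
  have hg1 : 0 < gg (k+1) := by unfold gg; positivity
  have hg0 : 0 < gg k := by unfold gg; positivity
  -- Δ bounds
  set Δ := Real.log (Real.log (k+1:ℕ)) - Real.log (Real.log k) with hΔ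
  have hΔeq : Δ = Real.log (Real.log (k+1:ℕ) / Real.log k) := by
    rw [hΔ, Real.log_div (ne_of_gt hLk1) (ne_of_gt hLk)]
  have hΔu : Δ ≤ δ * gg k := by
    rw [hΔeq]
    have := Real.log_le_sub_one_of_pos (x := Real.log (k+1:ℕ) / Real.log k) (by positivity)
    have heq : Real.log (k+1:ℕ) / Real.log k - 1 = δ * gg k := by
      unfold gg; rw [hδ]; push_cast; field_simp
    linarith [heq ▸ this]
  have hΔl : δ * gg (k+1) ≤ Δ := by
    rw [hΔeq]
    have h1 := Real.log_le_sub_one_of_pos (x := Real.log k / Real.log (k+1:ℕ)) (by positivity)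
    have h2 : Real.log (Real.log k / Real.log (k+1:ℕ))
        = - Real.log (Real.log (k+1:ℕ) / Real.log k) := by
      rw [← Real.log_inv]; congr 1; field_simp
    have heq : Real.log k / Real.log (k+1:ℕ) - 1 = - (δ * gg (k+1)) := by
      unfold gg; rw [hδ]; push_cast; field_simp; ring
    rw [h2, heq] at h1; linarith
  -- R bound
  have hRb : |mertR (k+1)| ≤ 10 := by
    unfold mertR mertS
    exact mertens1 (k+1) (by omega)
  have hgd0 : 0 ≤ gg k - gg (k+1) := by
    have := gg_antitone k hk; linarith
  have hterm1 : |δ * gg k - Δ| ≤ (1/2) * (gg k - gg (k+1)) := by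
    have hexp : δ * (gg k - gg (k+1)) = δ * gg k - δ * gg (k+1) := by ring
    have hhalf := mul_le_mul_of_nonneg_right hδhalf hgd0
    rw [abs_le]
    constructor
    · nlinarith [hΔu, hgd0]
    · nlinarith [hΔl]
  have hRb2 : |mertR (k+1) * (gg k - gg (k+1))| ≤ 10 * (gg k - gg (k+1)) := by
    rw [abs_mul, abs_of_nonneg hgd0]
    exact mul_le_mul_of_nonneg_right hRb hgd0
  have hEEeq : EE k = (δ * gg k - Δ) + mertR (k+1) * (gg k - gg (k+1)) := by
    unfold EE; ring
  calc |EE k| = |(δ * gg k - Δ) + mertR (k+1) * (gg k - gg (k+1))| := by rw [hEEeq]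
    _ ≤ |δ * gg k - Δ| + |mertR (k+1) * (gg k - gg (k+1))| := abs_add_le _ _
    _ ≤ (1/2) * (gg k - gg (k+1)) + 10 * (gg k - gg (k+1)) := by linarith
    _ = (21/2) * (gg k - gg (k+1)) := by ring
lemma mertens2 (m n : ℕ) (hm : 2 ≤ m) (hmn : m ≤ n) :
    |(∑ k ∈ Ico m n, mertC k * gg k)
        - (Real.log (Real.log n) - Real.log (Real.log m))|
      ≤ 31 / Real.log m := by
  have hid := abel_identity m n hmn
  have hgm : 0 < gg m := by unfold gg; exact inv_pos.mpr (log_pos_nat m hm)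
  have hgn : 0 < gg n := by unfold gg; exact inv_pos.mpr (log_pos_nat n (by omega))
  have hgnm : gg n ≤ gg m := by
    unfold gg
    apply inv_anti₀ (log_pos_nat m hm)
    apply Real.log_le_log (by positivity)
    exact_mod_cast hmn
  have hRn : |mertR n| ≤ 10 := mertens1 n (by omega)
  have hRm : |mertR m| ≤ 10 := mertens1 m hm
  have hEsum : |∑ k ∈ Ico m n, EE k| ≤ (21/2) * (gg m - gg n) := by
    calc |∑ k ∈ Ico m n, EE k| ≤ ∑ k ∈ Ico m n, |EE k| := Finset.abs_sum_le_sum_abs _ _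
      _ ≤ ∑ k ∈ Ico m n, (21/2) * (gg k - gg (k+1)) := by
          apply Finset.sum_le_sum
          intro k hk
          obtain ⟨hk1, -⟩ := Finset.mem_Ico.mp hk
          exact EE_bound k (by omega)
      _ = (21/2) * (gg m - gg n) := by
          rw [← Finset.mul_sum, sum_g_telescope m n hmn]
  have h1 : |mertR n * gg n| ≤ 10 * gg m := by
    rw [abs_mul, abs_of_nonneg hgn.le]
    calc |mertR n| * gg n ≤ 10 * gg n := mul_le_mul_of_nonneg_right hRn hgn.le
      _ ≤ 10 * gg m := by linarith
  have h2 : |mertR m * gg m| ≤ 10 * gg m := by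
    rw [abs_mul, abs_of_nonneg hgm.le]
    exact mul_le_mul_of_nonneg_right hRm hgm.le
  have hfin : |(∑ k ∈ Ico m n, mertC k * gg k)
      - (Real.log (Real.log n) - Real.log (Real.log m))| ≤ 31 * gg m := by
    rw [hid]
    have : (Real.log (Real.log n) - Real.log (Real.log m)) + mertR n * gg n
        - mertR m * gg m + (∑ k ∈ Ico m n, EE k)
        - (Real.log (Real.log n) - Real.log (Real.log m))
        = mertR n * gg n - mertR m * gg m + ∑ k ∈ Ico m n, EE k := by ring
    rw [this]
    calc |mertR n * gg n - mertR m * gg m + ∑ k ∈ Ico m n, EE k|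
        ≤ |mertR n * gg n| + |mertR m * gg m| + |∑ k ∈ Ico m n, EE k| := by
          exact (abs_add_le _ _).trans (by gcongr; exact abs_sub _ _)
      _ ≤ 10 * gg m + 10 * gg m + (21/2) * (gg m - gg n) := by linarith
      _ ≤ 31 * gg m := by linarith
  calc _ ≤ 31 * gg m := hfin
    _ = 31 / Real.log m := by unfold gg; rw [div_eq_mul_inv]
lemma factor_facts (x : ℝ) (hx : 2 ≤ x) :
    0 < (x^2-2)/((x-1)*(x^2-1)) ∧ (x^2-2)/((x-1)*(x^2-1)) ≤ 2/3 ∧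
      1/x ≤ (x^2-2)/((x-1)*(x^2-1)) ∧ (x^2-2)/((x-1)*(x^2-1)) ≤ 1/x + 4/x^2 := by
  have hden : 0 < (x-1)*(x^2-1) := by nlinarith
  have hx0 : 0 < x := by linarith
  have hnum : 0 < x^2 - 2 := by nlinarith
  refine ⟨by positivity, ?_, ?_, ?_⟩
  · rw [div_le_div_iff₀ hden (by norm_num : (0:ℝ) < 3)]
    nlinarith [mul_nonneg (by linarith : (0:ℝ) ≤ x - 2) (by nlinarith : (0:ℝ) ≤ 2*x^2 - x - 4)]
  · rw [div_le_div_iff₀ hx0 hden]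
    nlinarith
  · have h1 : (x^2-2)/((x-1)*(x^2-1)) ≤ (x+4)/x^2 := by
      rw [div_le_div_iff₀ hden (by positivity)]
      nlinarith [mul_nonneg (by linarith : (0:ℝ) ≤ x - 2) (by nlinarith : (0:ℝ) ≤ 3*x^2 - 3)]
    have h2 : (x+4)/x^2 = 1/x + 4/x^2 := by field_simp
    linarith [h2 ▸ h1]

lemma factor_log_bound (x : ℝ) (hx : 2 ≤ x) :
    |(- Real.log (1 - (x^2-2)/((x-1)*(x^2-1)))) - 1/x| ≤ 31/x^2 := by
  obtain ⟨ha0, ha23, hal, hau⟩ := factor_facts x hx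
  set a := (x^2-2)/((x-1)*(x^2-1)) with ha
  have hx0 : 0 < x := by linarith
  have h1a : 0 < 1 - a := by linarith
  have hlog1 : Real.log (1-a) ≤ -a := by
    have := Real.log_le_sub_one_of_pos h1a; linarith
  have hlog2 : - Real.log (1-a) ≤ a/(1-a) := by
    have h := Real.log_le_sub_one_of_pos (x := (1-a)⁻¹) (by positivity)
    have h2 : Real.log ((1-a)⁻¹) = - Real.log (1-a) := Real.log_inv _
    have h3 : (1-a)⁻¹ - 1 = a/(1-a) := by field_simp; ring
    rw [h2, h3] at h; linarith
  have ha3x : a ≤ 3/x := by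
    have h4 : 4/x^2 ≤ 2/x := by
      rw [div_le_div_iff₀ (by positivity) hx0]; nlinarith
    have : 1/x + 2/x = 3/x := by ring
    linarith
  have e3 : a^2 ≤ 9/x^2 := by
    have h32 : (3/x)^2 = 9/x^2 := by rw [div_pow]; norm_num
    nlinarith [ha0, ha3x]
  have hquad : a/(1-a) ≤ a + 27/x^2 := by
    have e2 : a/(1-a) ≤ a + 3*a^2 := by
      rw [div_le_iff₀ h1a]; nlinarith
    calc a/(1-a) ≤ a + 3*a^2 := e2
      _ ≤ a + 3*(9/x^2) := by linarith [mul_le_mul_of_nonneg_left e3 (by norm_num : (0:ℝ) ≤ 3)]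
      _ = a + 27/x^2 := by ring
  have h4x : a - 1/x ≤ 4/x^2 := by linarith
  rw [abs_le]
  constructor
  · -- -log(1-a) ≥ a ≥ 1/x, so -log(1-a) - 1/x ≥ 0 ≥ -31/x²
    have : 0 ≤ 31/x^2 := by positivity
    linarith
  · calc -Real.log (1-a) - 1/x ≤ a/(1-a) - 1/x := by linarith
      _ ≤ (a + 27/x^2) - 1/x := by linarith
      _ = (a - 1/x) + 27/x^2 := by ring
      _ ≤ 4/x^2 + 27/x^2 := by linarith
      _ = 31/x^2 := by ring
lemma sum_telescope_f (f : ℕ → ℝ) (m : ℕ) : ∀ n, m ≤ n →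
    ∑ k ∈ Ico m n, (f k - f (k+1)) = f m - f n := by
  intro n hn
  induction n, hn using Nat.le_induction with
  | base => simp
  | succ n hmn ih => rw [Finset.sum_Ico_succ_top hmn, ih]; ring

lemma sum_inv_sq_tail (m n : ℕ) (hm : 2 ≤ m) (hmn : m ≤ n) :
    ∑ k ∈ Ico m n, 1/(k:ℝ)^2 ≤ 1/((m:ℝ)-1) := by
  have key : ∑ k ∈ Ico m n, 1/(k:ℝ)^2
      ≤ ∑ k ∈ Ico m n, (1/((k:ℝ)-1) - 1/(((k+1:ℕ):ℝ)-1)) := by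
    apply Finset.sum_le_sum
    intro k hk
    obtain ⟨hk1, -⟩ := Finset.mem_Ico.mp hk
    have hk2 : (2:ℝ) ≤ (k:ℝ) := by exact_mod_cast (by omega : 2 ≤ k)
    have h0 : (0:ℝ) < (k:ℝ) - 1 := by linarith
    have h1 : (0:ℝ) < (k:ℝ) := by linarith
    have hc : ((k+1:ℕ):ℝ) - 1 = (k:ℝ) := by push_cast; ring
    rw [hc, div_sub_div _ _ (ne_of_gt h0) (ne_of_gt h1), div_le_div_iff₀ (by positivity) (by positivity)]
    nlinarith
  have htel : ∑ k ∈ Ico m n, (1/((k:ℝ)-1) - 1/(((k+1:ℕ):ℝ)-1)) = 1/((m:ℝ)-1) - 1/((n:ℝ)-1) :=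
    sum_telescope_f (fun k => 1/((k:ℝ)-1)) m n hmn
  have hn0 : (0:ℝ) ≤ 1/((n:ℝ)-1) := by
    have : (2:ℝ) ≤ (n:ℝ) := by exact_mod_cast (by omega : 2 ≤ n)
    apply div_nonneg zero_le_one; linarith
  linarith

lemma loglog_close (z w : ℝ) (hz : 2 ≤ z) (h1 : z ≤ w) (h2 : w ≤ z + 1) :
    0 ≤ Real.log (Real.log w) - Real.log (Real.log z) ∧
    Real.log (Real.log w) - Real.log (Real.log z) ≤ (1/2) * (Real.log z)⁻¹ := by
  have hLz : 0 < Real.log z := Real.log_pos (by linarith)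
  have hLw' : Real.log z ≤ Real.log w := Real.log_le_log (by linarith) h1
  have hLw : 0 < Real.log w := lt_of_lt_of_le hLz hLw'
  have hstep : Real.log w - Real.log z ≤ 1/2 := by
    have h3 : Real.log w ≤ Real.log (z+1) := Real.log_le_log (by linarith) h2
    have h4 : Real.log (z+1) - Real.log z ≤ 1/z := log_succ_sub_log_le z (by linarith)
    have h5 : 1/z ≤ 1/2 := by
      apply div_le_div_of_nonneg_left (by norm_num) (by norm_num) hz
    linarith
  constructor
  · have := Real.log_le_log hLz hLw'
    linarith
  · have heq : Real.log (Real.log w) - Real.log (Real.log z)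
        = Real.log (Real.log w / Real.log z) := by
      rw [Real.log_div (ne_of_gt hLw) (ne_of_gt hLz)]
    rw [heq]
    have h6 := Real.log_le_sub_one_of_pos (x := Real.log w / Real.log z) (by positivity)
    have h7 : Real.log w / Real.log z - 1 = (Real.log w - Real.log z) * (Real.log z)⁻¹ := by
      field_simp
    have h8 : (Real.log w - Real.log z) * (Real.log z)⁻¹ ≤ (1/2) * (Real.log z)⁻¹ := by
      apply mul_le_mul_of_nonneg_right hstep (by positivity)
    linarith [h7 ▸ h6]
set_option maxHeartbeats 2000000 in
/-- Let `V(z) := ∏_{p<z} (1 - (p²-2)/((p-1)(p²-1)))`, the product over primes `p < z`.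
There is `A > 0` such that for all reals `2 ≤ z₁ < z₂`,
`|V(z₁)/V(z₂) - log z₂/log z₁| ≤ A · log z₂/(log z₁)²`. -/
theorem stmt14 :
    ∃ A : ℝ, 0 < A ∧ ∀ z₁ z₂ : ℝ, 2 ≤ z₁ → z₁ < z₂ →
      |(∏ p ∈ (Nat.ceil z₁).primesBelow,
          (1 - ((p : ℝ) ^ 2 - 2) / (((p : ℝ) - 1) * ((p : ℝ) ^ 2 - 1))))
        / (∏ p ∈ (Nat.ceil z₂).primesBelow,
          (1 - ((p : ℝ) ^ 2 - 2) / (((p : ℝ) - 1) * ((p : ℝ) ^ 2 - 1))))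
        - Real.log z₂ / Real.log z₁|
      ≤ A * Real.log z₂ / (Real.log z₁) ^ 2 := by
  refine ⟨Real.exp 100, Real.exp_pos _, ?_⟩
  intro z₁ z₂ hz1 hz12
  set m := Nat.ceil z₁ with hmdef
  set n := Nat.ceil z₂ with hndef
  have hz2 : (2:ℝ) ≤ z₂ := by linarith
  have hLz1 : 0 < Real.log z₁ := Real.log_pos (by linarith)
  have hLz2 : 0 < Real.log z₂ := Real.log_pos (by linarith)
  set ε : ℝ := (Real.log z₁)⁻¹ with hεdef
  have hε0 : 0 < ε := inv_pos.mpr hLz1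
  have hz1m : z₁ ≤ (m:ℝ) := Nat.le_ceil z₁
  have hmz1 : (m:ℝ) < z₁ + 1 := Nat.ceil_lt_add_one (by linarith)
  have hz2n : z₂ ≤ (n:ℝ) := Nat.le_ceil z₂
  have hnz2 : (n:ℝ) < z₂ + 1 := Nat.ceil_lt_add_one (by linarith)
  have hm2 : 2 ≤ m := by
    have h : (2:ℝ) ≤ (m:ℝ) := le_trans hz1 hz1m
    exact_mod_cast h
  have hmn : m ≤ n := Nat.ceil_mono (le_of_lt hz12)
  have hn2 : 2 ≤ n := le_trans hm2 hmn
  have hLm : 0 < Real.log (m:ℝ) := log_pos_nat m hm2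
  have hLn : 0 < Real.log (n:ℝ) := log_pos_nat n hn2
  -- factor positivity facts
  have hfact : ∀ p : ℕ, p.Prime →
      1/3 ≤ 1 - ((p:ℝ)^2 - 2)/(((p:ℝ)-1)*((p:ℝ)^2-1)) ∧
      0 < 1 - ((p:ℝ)^2 - 2)/(((p:ℝ)-1)*((p:ℝ)^2-1)) := by
    intro p hp
    have hx : (2:ℝ) ≤ (p:ℝ) := by exact_mod_cast hp.two_le
    obtain ⟨h0, h23, -, -⟩ := factor_facts (p:ℝ) hx
    constructor <;> linarith
  set V₁ := ∏ p ∈ m.primesBelow, (1 - ((p : ℝ) ^ 2 - 2) / (((p : ℝ) - 1) * ((p : ℝ) ^ 2 - 1)))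
    with hV1def
  set V₂ := ∏ p ∈ n.primesBelow, (1 - ((p : ℝ) ^ 2 - 2) / (((p : ℝ) - 1) * ((p : ℝ) ^ 2 - 1)))
    with hV2def
  have hV1pos : 0 < V₁ := Finset.prod_pos fun p hp =>
    (hfact p (Nat.prime_of_mem_primesBelow hp)).2
  have hV2pos : 0 < V₂ := Finset.prod_pos fun p hp =>
    (hfact p (Nat.prime_of_mem_primesBelow hp)).2
  have hsub : m.primesBelow ⊆ n.primesBelow := by
    intro p hp
    obtain ⟨h1, h2⟩ := Nat.mem_primesBelow.mp hp
    exact Nat.mem_primesBelow.mpr ⟨by omega, h2⟩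
  set Q := ∏ p ∈ n.primesBelow \ m.primesBelow,
      (1 - ((p : ℝ) ^ 2 - 2) / (((p : ℝ) - 1) * ((p : ℝ) ^ 2 - 1))) with hQdef
  have hQV : Q * V₁ = V₂ := Finset.prod_sdiff hsub
  have hQpos : 0 < Q := Finset.prod_pos fun p hp =>
    (hfact p (Nat.prime_of_mem_primesBelow (Finset.mem_sdiff.mp hp).1)).2
  have hrat : V₁ / V₂ = Q⁻¹ := by
    rw [← hQV]; field_simp
  have hlogVV : Real.log (V₁/V₂)
      = ∑ p ∈ n.primesBelow \ m.primesBelow,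
          (- Real.log (1 - ((p : ℝ) ^ 2 - 2) / (((p : ℝ) - 1) * ((p : ℝ) ^ 2 - 1)))) := by
    rw [hrat, Real.log_inv, hQdef, Real.log_prod (fun p hp =>
      ne_of_gt (hfact p (Nat.prime_of_mem_primesBelow (Finset.mem_sdiff.mp hp).1)).2)]
    rw [← Finset.sum_neg_distrib]
  have hsdiff : n.primesBelow \ m.primesBelow = {k ∈ Ico m n | k.Prime} := by
    ext p
    simp only [Finset.mem_sdiff, Nat.mem_primesBelow, Finset.mem_filter, Finset.mem_Ico]
    constructor
    · rintro ⟨⟨hpn, hp⟩, hnot⟩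
      refine ⟨⟨?_, hpn⟩, hp⟩
      by_contra h
      exact hnot ⟨by omega, hp⟩
    · rintro ⟨⟨h1, h2⟩, hp⟩
      exact ⟨⟨h2, hp⟩, fun hcon => by omega⟩
  -- error sum T
  set T := ∑ p ∈ n.primesBelow \ m.primesBelow,
      ((- Real.log (1 - ((p : ℝ) ^ 2 - 2) / (((p : ℝ) - 1) * ((p : ℝ) ^ 2 - 1)))) - 1/(p:ℝ))
    with hTdef
  have hT : |T| ≤ 31 * ε := by
    have h1 : |T| ≤ ∑ p ∈ n.primesBelow \ m.primesBelow, 31/(p:ℝ)^2 := by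
      rw [hTdef]
      refine (Finset.abs_sum_le_sum_abs _ _).trans (Finset.sum_le_sum ?_)
      intro p hp
      have hp' := Nat.prime_of_mem_primesBelow (Finset.mem_sdiff.mp hp).1
      have hx : (2:ℝ) ≤ (p:ℝ) := by exact_mod_cast hp'.two_le
      exact factor_log_bound (p:ℝ) hx
    have h2 : ∑ p ∈ n.primesBelow \ m.primesBelow, 31/(p:ℝ)^2
        ≤ ∑ k ∈ Ico m n, 31/(k:ℝ)^2 := by
      rw [hsdiff]
      apply Finset.sum_le_sum_of_subset_of_nonneg (Finset.filter_subset _ _)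
      intro k hk _
      have hk1 : 1 ≤ k := by
        have := (Finset.mem_Ico.mp hk).1; omega
      have : (0:ℝ) < (k:ℝ) := by exact_mod_cast hk1
      positivity
    have h3 : ∑ k ∈ Ico m n, 31/(k:ℝ)^2 ≤ 31/((m:ℝ)-1) := by
      have := sum_inv_sq_tail m n hm2 hmn
      calc ∑ k ∈ Ico m n, 31/(k:ℝ)^2 = 31 * ∑ k ∈ Ico m n, 1/(k:ℝ)^2 := by
            rw [Finset.mul_sum]; exact Finset.sum_congr rfl fun k _ => by ring
        _ ≤ 31 * (1/((m:ℝ)-1)) := by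
            apply mul_le_mul_of_nonneg_left this (by norm_num)
        _ = 31/((m:ℝ)-1) := by ring
    have h4 : 31/((m:ℝ)-1) ≤ 31 * ε := by
      have hlz : Real.log z₁ ≤ z₁ - 1 := by
        have := Real.log_le_sub_one_of_pos (x := z₁) (by linarith)
        linarith
      have hm1 : z₁ - 1 ≤ (m:ℝ) - 1 := by linarith
      rw [hεdef]
      rw [div_eq_mul_inv]
      apply mul_le_mul_of_nonneg_left _ (by norm_num : (0:ℝ) ≤ 31)
      apply inv_anti₀ hLz1
      linarith
    linarith
  -- identification with mertC * gg
  have hsum1p : ∑ p ∈ n.primesBelow \ m.primesBelow, 1/(p:ℝ)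
      = ∑ k ∈ Ico m n, mertC k * gg k := by
    rw [hsdiff, Finset.sum_filter]
    apply Finset.sum_congr rfl
    intro k hk
    have hk2 : 2 ≤ k := by
      have := (Finset.mem_Ico.mp hk).1; omega
    have hLk : Real.log k ≠ 0 := ne_of_gt (log_pos_nat k hk2)
    have hk0 : ((k:ℝ)) ≠ 0 := by
      have : (0:ℝ) < (k:ℝ) := by exact_mod_cast (by omega : 0 < k)
      exact ne_of_gt this
    unfold mertC gg
    split_ifs with h
    · field_simp
    · ring
  have hm2r := mertens2 m n hm2 hmn
  -- conversion of 31 / log m ≤ 31 ε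
  have hlogm_ge : Real.log z₁ ≤ Real.log (m:ℝ) := Real.log_le_log (by linarith) hz1m
  have hconv1 : 31 / Real.log (m:ℝ) ≤ 31 * ε := by
    rw [hεdef, div_eq_mul_inv]
    apply mul_le_mul_of_nonneg_left _ (by norm_num : (0:ℝ) ≤ 31)
    exact inv_anti₀ hLz1 hlogm_ge
  -- loglog conversions
  have hll1 := loglog_close z₁ (m:ℝ) hz1 hz1m (le_of_lt hmz1)
  have hll2 := loglog_close z₂ (n:ℝ) hz2 hz2n (le_of_lt hnz2)
  have hll2' : Real.log (Real.log (n:ℝ)) - Real.log (Real.log z₂) ≤ (1/2) * ε := by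
    obtain ⟨-, h⟩ := hll2
    have : (Real.log z₂)⁻¹ ≤ ε := by
      rw [hεdef]
      exact inv_anti₀ hLz1 (Real.log_le_log (by linarith) (le_of_lt hz12))
    nlinarith
  have hll1' : Real.log (Real.log (m:ℝ)) - Real.log (Real.log z₁) ≤ (1/2) * ε := hll1.2
  -- main estimate on log of ratio
  have hmain : |Real.log (V₁/V₂) - (Real.log (Real.log z₂) - Real.log (Real.log z₁))|
      ≤ 63 * ε := by
    have hVsplit : Real.log (V₁/V₂)
        = (∑ k ∈ Ico m n, mertC k * gg k) + T := by
      rw [hlogVV, hTdef, ← hsum1p, ← Finset.sum_add_distrib]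
      exact Finset.sum_congr rfl fun p _ => by ring
    obtain ⟨hA1, hA2⟩ := abs_le.mp hm2r
    obtain ⟨hB1, hB2⟩ := abs_le.mp hT
    obtain ⟨h1l, -⟩ := hll1
    obtain ⟨h2l, -⟩ := hll2
    rw [abs_le]
    constructor
    · rw [hVsplit]
      linarith [hll1', hll2', hconv1]
    · rw [hVsplit]
      linarith [hll1', hll2', hconv1]
  -- exponentiate
  set L := Real.log z₂ / Real.log z₁ with hLdef
  have hLpos : 0 < L := div_pos hLz2 hLz1
  have hL1 : 1 ≤ L := (one_le_div hLz1).mpr (Real.log_le_log (by linarith) (le_of_lt hz12))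
  have hlogL : Real.log L = Real.log (Real.log z₂) - Real.log (Real.log z₁) :=
    Real.log_div (ne_of_gt hLz2) (ne_of_gt hLz1)
  set δ := Real.log (V₁/V₂) - Real.log L with hδdef
  have hδ63 : |δ| ≤ 63 * ε := by rw [hδdef, hlogL]; exact hmain
  have hVexp : V₁/V₂ = L * Real.exp δ := by
    have h1 : V₁/V₂ = Real.exp (Real.log (V₁/V₂)) :=
      (Real.exp_log (div_pos hV1pos hV2pos)).symm
    have h2 : Real.log (V₁/V₂) = Real.log L + δ := by rw [hδdef]; ring
    rw [h1, h2, Real.exp_add, Real.exp_log hLpos]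
  have hlog2gt : (0.6931471803:ℝ) < Real.log 2 := Real.log_two_gt_d9
  have hLz1_ge : Real.log 2 ≤ Real.log z₁ := Real.log_le_log (by norm_num) hz1
  have hδ91 : |δ| ≤ 91 := by
    have h1 : 63 * ε ≤ 91 := by
      have h2 : 63 * ε = 63 / Real.log z₁ := by rw [hεdef, div_eq_mul_inv]
      rw [h2, div_le_iff₀ hLz1]
      nlinarith
    linarith
  have hexpdiff : |Real.exp δ - 1| ≤ |δ| * Real.exp 91 := by
    rcases le_or_gt 0 δ with hδ0 | hδ0
    · have h1 : Real.exp δ - 1 ≤ δ * Real.exp δ := by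
        have h2 := Real.add_one_le_exp (-δ)
        have h3 := mul_le_mul_of_nonneg_right h2 (Real.exp_pos δ).le
        rw [← Real.exp_add] at h3
        simp at h3
        nlinarith
      have h4 : Real.exp δ ≤ Real.exp 91 := Real.exp_le_exp.mpr (by
        have := le_abs_self δ; linarith)
      have h5 : 1 ≤ Real.exp δ := Real.one_le_exp hδ0
      rw [abs_of_nonneg (by linarith : (0:ℝ) ≤ Real.exp δ - 1), abs_of_nonneg hδ0]
      nlinarith
    · have h1 : 1 - Real.exp δ ≤ -δ := by
        have := Real.add_one_le_exp δ; linarith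
      have h2 : Real.exp δ < 1 := by
        rw [← Real.exp_zero]; exact Real.exp_lt_exp.mpr hδ0
      have h3 : (1:ℝ) ≤ Real.exp 91 := Real.one_le_exp (by norm_num)
      rw [abs_of_nonpos (by linarith : Real.exp δ - 1 ≤ 0), abs_of_neg hδ0]
      nlinarith
  -- final computation
  have hLε : Real.log z₂ / (Real.log z₁)^2 = L * ε := by
    rw [hLdef, hεdef, sq]
    field_simp
  have hgoal : |V₁/V₂ - L| ≤ Real.exp 100 * Real.log z₂ / (Real.log z₁)^2 := by
    have h1 : V₁/V₂ - L = L * (Real.exp δ - 1) := by rw [hVexp]; ring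
    have h2 : |V₁/V₂ - L| = L * |Real.exp δ - 1| := by
      rw [h1, abs_mul, abs_of_pos hLpos]
    have h3 : L * |Real.exp δ - 1| ≤ L * (|δ| * Real.exp 91) :=
      mul_le_mul_of_nonneg_left hexpdiff hLpos.le
    have h4 : L * (|δ| * Real.exp 91) ≤ L * ((63 * ε) * Real.exp 91) := by
      apply mul_le_mul_of_nonneg_left _ hLpos.le
      exact mul_le_mul_of_nonneg_right hδ63 (Real.exp_pos 91).le
    have h5 : L * ((63 * ε) * Real.exp 91) ≤ Real.exp 100 * (L * ε) := by
      have he9 : (64:ℝ) ≤ Real.exp 9 := by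
        have h6 : (4:ℝ) ≤ Real.exp 3 := by
          have := Real.add_one_le_exp (3:ℝ); linarith
        have h7 : Real.exp 9 = (Real.exp 3)^3 := by
          rw [← Real.exp_nat_mul]; norm_num
        rw [h7]
        calc (64:ℝ) = 4^3 := by norm_num
          _ ≤ (Real.exp 3)^3 := by
            apply pow_le_pow_left₀ (by norm_num) h6
      have he100 : Real.exp 91 * 63 ≤ Real.exp 100 := by
        have h8 : Real.exp 100 = Real.exp 91 * Real.exp 9 := by
          rw [← Real.exp_add]; norm_num
        rw [h8]
        apply mul_le_mul_of_nonneg_left (by linarith) (Real.exp_pos 91).le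
      have hLε0 : 0 ≤ L * ε := mul_nonneg hLpos.le hε0.le
      calc L * ((63 * ε) * Real.exp 91) = (Real.exp 91 * 63) * (L * ε) := by ring
        _ ≤ Real.exp 100 * (L * ε) := mul_le_mul_of_nonneg_right he100 hLε0
    calc |V₁/V₂ - L| = L * |Real.exp δ - 1| := h2
      _ ≤ L * (|δ| * Real.exp 91) := h3
      _ ≤ L * ((63 * ε) * Real.exp 91) := h4
      _ ≤ Real.exp 100 * (L * ε) := h5
      _ = Real.exp 100 * Real.log z₂ / (Real.log z₁)^2 := by
          rw [← hLε]; ring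
  exact hgoal
end

section
/- Let b ≥ 2 be an integer and n a positive integer with b^n ≡ b (mod n). If d ≥ 2 is a divisor of n with gcd(d, b) = 1, then d divides b^{n−1} − 1; consequently ord_d(b) divides n − 1 and gcd(d, ord_d(b)) = 1. -/
/-- Let `b ≥ 2` and `n ≥ 1` with `b^n ≡ b (mod n)`. If `d ≥ 2` divides `n` and
`gcd(d, b) = 1`, then `d ∣ b^{n-1} - 1`; consequently the multiplicative order of `b`
modulo `d` divides `n - 1`, and `gcd(d, ord_d(b)) = 1`. -/
theorem stmt15 (b n : ℕ) (hb : 2 ≤ b) (hn : 0 < n) (h : b ^ n ≡ b [MOD n])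
    (d : ℕ) (hd : 2 ≤ d) (hdn : d ∣ n) (hdb : Nat.gcd d b = 1) :
    d ∣ b ^ (n - 1) - 1 ∧
    orderOf ((b : ZMod d)) ∣ (n - 1) ∧
    Nat.gcd d (orderOf ((b : ZMod d))) = 1 := by
  have hd' : b ^ n ≡ b [MOD d] := h.of_dvd hdn
  have hble : b ≤ b ^ n := Nat.le_self_pow hn.ne' b
  have hdvd : d ∣ b ^ n - b := (Nat.modEq_iff_dvd' hble).mp hd'.symm
  have hfac : b ^ n - b = b * (b ^ (n - 1) - 1) := by
    rw [Nat.mul_sub, mul_one, ← pow_succ', Nat.sub_add_cancel hn]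
  have h1 : d ∣ b ^ (n - 1) - 1 := by
    refine (Nat.Coprime.dvd_of_dvd_mul_left hdb ?_)
    rwa [← hfac]
  have h1le : 1 ≤ b ^ (n - 1) := Nat.one_le_pow _ _ (by omega)
  have hmod : b ^ (n - 1) ≡ 1 [MOD d] := ((Nat.modEq_iff_dvd' h1le).mpr h1).symm
  have hz : ((b : ZMod d)) ^ (n - 1) = 1 := by
    have := (ZMod.natCast_eq_natCast_iff _ _ _).mpr hmod
    push_cast at this
    simpa using this
  have h2 : orderOf ((b : ZMod d)) ∣ (n - 1) := orderOf_dvd_of_pow_eq_one hz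
  refine ⟨h1, h2, ?_⟩
  have hcop : Nat.Coprime n (n - 1) := by
    have h1 : n - (n - 1) = 1 := by omega
    have hg := Nat.dvd_sub (Nat.gcd_dvd_left n (n - 1)) (Nat.gcd_dvd_right n (n - 1))
    rw [h1] at hg
    exact Nat.dvd_one.mp hg
  exact Nat.Coprime.coprime_dvd_left hdn (hcop.coprime_dvd_right h2)
end
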